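/- arXiv:2111.12347 — 8 statements merged into one kernel-verified Lean document; each statement's English description precedes it below -/
import Mathlib

section
/- Let n ≥ 2, let μ be a finite Borel measure on ℝⁿ and let σ : ℝⁿ → ℝⁿ be Borel measurable with |σ(x)| = 1 for μ-almost every x. Then the affine energy E(μ,σ) equals 0 if and only if there exists ξ̃ in the unit sphere S^{n−1} such that ∫_{ℝⁿ} |σ(x)·ξ̃| dμ(x) = 0. -/
open MeasureTheory ENNReal

noncomputable section

/-- ω_k: the volume of the unit ball in ℝ^k. -/
def unitBallVol (k : ℕ) : ℝ :=
  (volume (Metric.ball (0 : EuclideanSpace ℝ (Fin k)) 1)).toReal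

/-- The constant α_n = (2 ω_{n-1})⁻¹ (n ω_n)^{1 + 1/n}. -/
def alphaConst (n : ℕ) : ℝ :=
  (2 * unitBallVol (n - 1))⁻¹ * (n * unitBallVol n) ^ (1 + 1 / (n : ℝ))

/-- The (n-1)-dimensional Hausdorff (surface) measure on the unit sphere S^{n-1} ⊂ ℝⁿ. -/
def sphereMeasure (n : ℕ) : Measure (EuclideanSpace ℝ (Fin n)) :=
  (μH[(n : ℝ) - 1]).restrict (Metric.sphere (0 : EuclideanSpace ℝ (Fin n)) 1)

/-- Ψ_ξ(μ, σ) = ∫ |σ(x)·ξ| dμ(x). -/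
def PsiM {n : ℕ} (μ : Measure (EuclideanSpace ℝ (Fin n)))
    (σ : EuclideanSpace ℝ (Fin n) → EuclideanSpace ℝ (Fin n))
    (ξ : EuclideanSpace ℝ (Fin n)) : ℝ≥0∞ :=
  ∫⁻ x, ENNReal.ofReal |(inner ℝ (σ x) ξ : ℝ)| ∂μ

/-- The affine energy E(μ, σ) = α_n (∫_{S^{n-1}} Ψ_ξ(μ,σ)^{-n} dξ)^{-1/n}, computed in the
extended nonnegative reals (so that 0^{-n} = ∞ and ∞^{-1/n} = 0, matching the conventions). -/
def energyM {n : ℕ} (μ : Measure (EuclideanSpace ℝ (Fin n)))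
    (σ : EuclideanSpace ℝ (Fin n) → EuclideanSpace ℝ (Fin n)) : ℝ≥0∞ :=
  ENNReal.ofReal (alphaConst n) *
    (∫⁻ ξ, (PsiM μ σ ξ) ^ (-(n : ℝ)) ∂(sphereMeasure n)) ^ (-(1 / (n : ℝ)))


open Metric
open scoped NNReal RealInnerProductSpace

set_option maxHeartbeats 1000000

section AuxLemmas

lemma euc_norm_symm_le (m : ℕ) (y : Fin m → ℝ) :
    ‖(WithLp.equiv 2 (Fin m → ℝ)).symm y‖ ≤ Real.sqrt m * ‖y‖ := by
  rw [EuclideanSpace.norm_eq]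
  have h1 : ∑ i, ‖((WithLp.equiv 2 (Fin m → ℝ)).symm y) i‖^2 ≤ (m : ℝ) * ‖y‖^2 := by
    calc ∑ i, ‖((WithLp.equiv 2 (Fin m → ℝ)).symm y) i‖^2 ≤ ∑ _i : Fin m, ‖y‖^2 := by
          refine Finset.sum_le_sum fun i _ => ?_
          have : ‖((WithLp.equiv 2 (Fin m → ℝ)).symm y) i‖ ≤ ‖y‖ := by
            simpa using norm_le_pi_norm y i
          exact pow_le_pow_left₀ (norm_nonneg _) this 2
      _ = (m : ℝ) * ‖y‖^2 := by simp [Finset.sum_const, Finset.card_univ, mul_comm]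
  calc Real.sqrt (∑ i, ‖((WithLp.equiv 2 (Fin m → ℝ)).symm y) i‖^2)
      ≤ Real.sqrt ((m:ℝ) * ‖y‖^2) := Real.sqrt_le_sqrt h1
    _ = Real.sqrt m * ‖y‖ := by
        rw [Real.sqrt_mul (Nat.cast_nonneg m), Real.sqrt_sq (norm_nonneg _)]

lemma euc_hm_lb (m : ℕ) (hm : m ≠ 0) (ρ : ℝ) (hρ : 0 ≤ ρ) :
    ENNReal.ofReal ((2 * ρ / Real.sqrt m) ^ m)
      ≤ μH[(m:ℝ)] (closedBall (0 : EuclideanSpace ℝ (Fin m)) ρ) := by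
  have hsq : 0 < Real.sqrt m := Real.sqrt_pos.2 (by exact_mod_cast Nat.pos_of_ne_zero hm)
  set ρ' := ρ / Real.sqrt m with hρ'def
  have hρ' : 0 ≤ ρ' := div_nonneg hρ hsq.le
  have incl : closedBall (0 : Fin m → ℝ) ρ'
      ⊆ (WithLp.equiv 2 (Fin m → ℝ)) '' closedBall (0 : EuclideanSpace ℝ (Fin m)) ρ := by
    intro y hy
    refine ⟨(WithLp.equiv 2 (Fin m → ℝ)).symm y, ?_, by simp⟩
    rw [mem_closedBall_zero_iff] at hy ⊢
    calc ‖(WithLp.equiv 2 (Fin m → ℝ)).symm y‖ ≤ Real.sqrt m * ‖y‖ := euc_norm_symm_le m y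
      _ ≤ Real.sqrt m * ρ' := by nlinarith
      _ = ρ := by rw [hρ'def]; field_simp
  have hpi : (μH[(m:ℝ)] : Measure (Fin m → ℝ)) = volume := by
    have := hausdorffMeasure_pi_real (ι := Fin m)
    simpa using this
  calc ENNReal.ofReal ((2 * ρ / Real.sqrt m) ^ m)
      = volume (closedBall (0 : Fin m → ℝ) ρ') := by
        rw [Real.volume_pi_closedBall _ hρ']
        congr 2
        · rw [hρ'def]; ring
        · simp
    _ = μH[(m:ℝ)] (closedBall (0 : Fin m → ℝ) ρ') := by rw [hpi]
    _ ≤ μH[(m:ℝ)] ((WithLp.equiv 2 (Fin m → ℝ)) ''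
          closedBall (0 : EuclideanSpace ℝ (Fin m)) ρ) := measure_mono incl
    _ ≤ ((1 : ℝ≥0) : ℝ≥0∞) ^ (m:ℝ) * μH[(m:ℝ)] (closedBall (0 : EuclideanSpace ℝ (Fin m)) ρ) :=
        (PiLp.lipschitzWith_ofLp 2 _).hausdorffMeasure_image_le (by positivity) _
    _ = μH[(m:ℝ)] (closedBall (0 : EuclideanSpace ℝ (Fin m)) ρ) := by simp

lemma euc_hm_ub (m : ℕ) (R : ℝ) :
    μH[(m:ℝ)] (closedBall (0 : EuclideanSpace ℝ (Fin m)) R) < ⊤ := by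
  rcases lt_or_ge R 0 with hR | hR
  · rw [closedBall_eq_empty.2 hR]; simp
  have hlip : LipschitzWith (Real.toNNReal (Real.sqrt m))
      ((WithLp.equiv 2 (Fin m → ℝ)).symm) := by
    apply LipschitzWith.of_dist_le_mul
    intro a b
    rw [dist_eq_norm, dist_eq_norm]
    have h : (WithLp.equiv 2 (Fin m → ℝ)).symm a - (WithLp.equiv 2 (Fin m → ℝ)).symm b
        = (WithLp.equiv 2 (Fin m → ℝ)).symm (a - b) := rfl
    rw [h, Real.coe_toNNReal _ (Real.sqrt_nonneg _)]
    exact euc_norm_symm_le m (a - b)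
  have incl : closedBall (0 : EuclideanSpace ℝ (Fin m)) R
      ⊆ ((WithLp.equiv 2 (Fin m → ℝ)).symm) '' closedBall (0 : Fin m → ℝ) R := by
    intro x hx
    refine ⟨WithLp.equiv 2 (Fin m → ℝ) x, ?_, by simp⟩
    rw [mem_closedBall_zero_iff] at hx ⊢
    calc ‖WithLp.equiv 2 (Fin m → ℝ) x‖ ≤ ‖x‖ := by
          simpa [dist_eq_norm] using (PiLp.lipschitzWith_ofLp 2 (fun _ : Fin m => ℝ)).dist_le_mul x 0
      _ ≤ R := hx
  have hpi : (μH[(m:ℝ)] : Measure (Fin m → ℝ)) = volume := by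
    have := hausdorffMeasure_pi_real (ι := Fin m)
    simpa using this
  calc μH[(m:ℝ)] (closedBall (0 : EuclideanSpace ℝ (Fin m)) R)
      ≤ μH[(m:ℝ)] (((WithLp.equiv 2 (Fin m → ℝ)).symm) '' closedBall (0 : Fin m → ℝ) R) :=
        measure_mono incl
    _ ≤ ((Real.toNNReal (Real.sqrt m) : ℝ≥0) : ℝ≥0∞) ^ (m:ℝ) * μH[(m:ℝ)] (closedBall (0 : Fin m → ℝ) R) :=
        hlip.hausdorffMeasure_image_le (by positivity) _
    _ < ⊤ := by
        rw [hpi, Real.volume_pi_closedBall _ hR]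
        exact ENNReal.mul_lt_top (ENNReal.rpow_lt_top_of_nonneg (by positivity) ENNReal.coe_ne_top)
          ENNReal.ofReal_lt_top

lemma euc_coord_le_norm (n : ℕ) (x : EuclideanSpace ℝ (Fin n)) (i : Fin n) : ‖x i‖ ≤ ‖x‖ := by
  rw [EuclideanSpace.norm_eq]
  have h1 : ‖x i‖^2 ≤ ∑ j, ‖x j‖^2 :=
    Finset.single_le_sum (f := fun j => ‖x j‖^2) (fun j _ => by positivity) (Finset.mem_univ i)
  calc ‖x i‖ = Real.sqrt (‖x i‖^2) := (Real.sqrt_sq (norm_nonneg _)).symm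
    _ ≤ Real.sqrt (∑ j, ‖x j‖^2) := Real.sqrt_le_sqrt h1

lemma cap_lb {n : ℕ} (hn : 2 ≤ n) (ξ : EuclideanSpace ℝ (Fin n)) (hξ : ‖ξ‖ = 1)
    (r : ℝ) (hr0 : 0 < r) (hr1 : r ≤ 1) :
    ENNReal.ofReal ((r / Real.sqrt (n-1 : ℕ)) ^ (n-1 : ℕ))
      ≤ μH[(n:ℝ)-1] (sphere (0 : EuclideanSpace ℝ (Fin n)) 1 ∩ closedBall ξ r) := by
  classical
  have hξ0 : ξ ≠ 0 := by
    intro h; rw [h, norm_zero] at hξ; norm_num at hξ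
  set K : Submodule ℝ (EuclideanSpace ℝ (Fin n)) := (ℝ ∙ ξ)ᗮ with hK
  have hfr : Module.finrank ℝ K = n - 1 := by
    have h1 : Module.finrank ℝ (ℝ ∙ ξ) = 1 := finrank_span_singleton hξ0
    have h2 : Module.finrank ℝ (ℝ ∙ ξ) + Module.finrank ℝ K = Module.finrank ℝ (EuclideanSpace ℝ (Fin n)) :=
      Submodule.finrank_add_finrank_orthogonal _
    have h3 : Module.finrank ℝ (EuclideanSpace ℝ (Fin n)) = n := finrank_euclideanSpace_fin
    omega
  set F : K ≃ₗᵢ[ℝ] EuclideanSpace ℝ (Fin (n-1)) :=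
    ((stdOrthonormalBasis ℝ K).reindex (finCongr hfr)).repr with hF
  set g : EuclideanSpace ℝ (Fin n) → EuclideanSpace ℝ (Fin (n-1)) := fun x => F (K.orthogonalProjectionOnto x) with hg
  have hglip : LipschitzWith 1 g := by
    apply LipschitzWith.of_dist_le_mul
    intro x y
    rw [NNReal.coe_one, one_mul, dist_eq_norm, dist_eq_norm]
    have h1 : g x - g y = F (K.orthogonalProjectionOnto x - K.orthogonalProjectionOnto y) := by
      rw [map_sub]
    rw [h1, F.norm_map, ← map_sub]
    calc ‖K.orthogonalProjectionOnto (x - y)‖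
        ≤ ‖K.orthogonalProjectionOnto‖ * ‖x - y‖ := K.orthogonalProjectionOnto.le_opNorm _
      _ ≤ 1 * ‖x - y‖ := by
          gcongr; exact Submodule.orthogonalProjectionOnto_norm_le K
      _ = ‖x - y‖ := one_mul _
  have hξK' : ξ ∈ Kᗮ := Submodule.le_orthogonal_orthogonal _ (Submodule.mem_span_singleton_self ξ)
  have hKinner : ∀ w : K, ⟪(w : EuclideanSpace ℝ (Fin n)), ξ⟫ = 0 := by
    intro w
    rw [real_inner_comm]
    exact w.2 ξ (Submodule.mem_span_singleton_self ξ)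
  have incl : closedBall (0 : EuclideanSpace ℝ (Fin (n-1))) (r/2)
      ⊆ g '' (sphere (0 : EuclideanSpace ℝ (Fin n)) 1 ∩ closedBall ξ r) := by
    intro v hv
    rw [mem_closedBall_zero_iff] at hv
    have hv0 : 0 ≤ ‖v‖ := norm_nonneg v
    have hv1 : ‖v‖ ≤ 1/2 := hv.trans (by linarith)
    have h1v : 0 ≤ 1 - ‖v‖^2 := by nlinarith
    set t := Real.sqrt (1 - ‖v‖^2) with ht
    have ht0 : 0 ≤ t := Real.sqrt_nonneg _
    have ht2 : t^2 = 1 - ‖v‖^2 := Real.sq_sqrt h1v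
    have ht1 : t ≤ 1 := by nlinarith
    set w : K := F.symm v with hw
    set y : EuclideanSpace ℝ (Fin n) := (w : EuclideanSpace ℝ (Fin n)) + t • ξ with hy
    have hwn : ‖(w : EuclideanSpace ℝ (Fin n))‖ = ‖v‖ := by
      have : ‖(w : EuclideanSpace ℝ (Fin n))‖ = ‖w‖ := rfl
      rw [this, hw, F.symm.norm_map]
    have hinner : ⟪(w : EuclideanSpace ℝ (Fin n)), t • ξ⟫ = 0 := by
      rw [real_inner_smul_right, hKinner w, mul_zero]
    have hy2 : ‖y‖^2 = ‖v‖^2 + t^2 := by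
      rw [hy, norm_add_sq_real, hinner, norm_smul, hwn]
      simp [hξ, abs_of_nonneg ht0]
    have hysq : ‖y‖^2 = 1 := by rw [hy2, ht2]; ring
    have hynorm : ‖y‖ = 1 := by nlinarith [norm_nonneg y]
    have hdist : ‖y - ξ‖ ≤ r := by
      have hyx : y - ξ = (w : EuclideanSpace ℝ (Fin n)) + (t - 1) • ξ := by
        rw [hy, sub_smul, one_smul, add_sub_assoc]
      have hinner2 : ⟪(w : EuclideanSpace ℝ (Fin n)), (t-1) • ξ⟫ = 0 := by
        rw [real_inner_smul_right, hKinner w, mul_zero]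
      have h2 : ‖y - ξ‖^2 = ‖v‖^2 + (t-1)^2 := by
        rw [hyx, norm_add_sq_real, hinner2, norm_smul, hwn]
        simp [hξ, sq_abs]
        try ring
      have h3 : 1 - t ≤ ‖v‖^2 := by nlinarith
      have h4 : ‖y - ξ‖^2 ≤ r^2 := by nlinarith
      nlinarith [norm_nonneg (y - ξ)]
    refine ⟨y, ⟨?_, ?_⟩, ?_⟩
    · rwa [mem_sphere_zero_iff_norm]
    · rw [mem_closedBall, dist_eq_norm]; exact hdist
    · show F (K.orthogonalProjectionOnto y) = v
      have hpw : K.orthogonalProjectionOnto ((w : EuclideanSpace ℝ (Fin n))) = w :=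
        Submodule.orthogonalProjectionOnto_mem_subspace_eq_self w
      have hpξ : K.orthogonalProjectionOnto ξ = 0 :=
        Submodule.orthogonalProjectionOnto_apply_of_mem_orthogonal hξK'
      have : K.orthogonalProjectionOnto y = w := by
        rw [hy, map_add, _root_.map_smul, hpw, hpξ, smul_zero, add_zero]
      rw [this, hw]
      exact F.apply_symm_apply v
  have hd0 : (0:ℝ) ≤ (n:ℝ) - 1 := by
    have : (2:ℝ) ≤ n := by exact_mod_cast hn
    linarith
  have hcast : ((n-1 : ℕ) : ℝ) = (n:ℝ) - 1 := by
    rw [Nat.cast_sub (by omega)]; simp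
  calc ENNReal.ofReal ((r / Real.sqrt (n-1 : ℕ)) ^ (n-1 : ℕ))
      = ENNReal.ofReal ((2 * (r/2) / Real.sqrt (n-1 : ℕ)) ^ (n-1 : ℕ)) := by rw [show 2*(r/2) = r by ring]
    _ ≤ μH[((n-1:ℕ):ℝ)] (closedBall (0 : EuclideanSpace ℝ (Fin (n-1))) (r/2)) :=
        euc_hm_lb (n-1) (by omega) (r/2) (by linarith)
    _ = μH[(n:ℝ)-1] (closedBall (0 : EuclideanSpace ℝ (Fin (n-1))) (r/2)) := by rw [hcast]
    _ ≤ μH[(n:ℝ)-1] (g '' (sphere (0 : EuclideanSpace ℝ (Fin n)) 1 ∩ closedBall ξ r)) := measure_mono incl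
    _ ≤ ((1:ℝ≥0) : ℝ≥0∞) ^ ((n:ℝ)-1) * μH[(n:ℝ)-1] (sphere (0 : EuclideanSpace ℝ (Fin n)) 1 ∩ closedBall ξ r) :=
        hglip.hausdorffMeasure_image_le hd0 _
    _ = μH[(n:ℝ)-1] (sphere (0 : EuclideanSpace ℝ (Fin n)) 1 ∩ closedBall ξ r) := by simp

lemma slice_fin {n : ℕ} (hn : 2 ≤ n) (u : EuclideanSpace ℝ (Fin n)) (hu : ‖u‖ = 1)
    (c R : ℝ) :
    μH[(n:ℝ)-1] {x : EuclideanSpace ℝ (Fin n) | ⟪x, u⟫ = c ∧ ‖x‖ ≤ R} < ⊤ := by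
  classical
  have hu0 : u ≠ 0 := by
    intro h; rw [h, norm_zero] at hu; norm_num at hu
  set K : Submodule ℝ (EuclideanSpace ℝ (Fin n)) := (ℝ ∙ u)ᗮ with hK
  have hfr : Module.finrank ℝ K = n - 1 := by
    have h1 : Module.finrank ℝ (ℝ ∙ u) = 1 := finrank_span_singleton hu0
    have h2 : Module.finrank ℝ (ℝ ∙ u) + Module.finrank ℝ K
        = Module.finrank ℝ (EuclideanSpace ℝ (Fin n)) :=
      Submodule.finrank_add_finrank_orthogonal _
    have h3 : Module.finrank ℝ (EuclideanSpace ℝ (Fin n)) = n := finrank_euclideanSpace_fin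
    omega
  set F : K ≃ₗᵢ[ℝ] EuclideanSpace ℝ (Fin (n-1)) :=
    ((stdOrthonormalBasis ℝ K).reindex (finCongr hfr)).repr with hF
  set h : EuclideanSpace ℝ (Fin (n-1)) → EuclideanSpace ℝ (Fin n) :=
    fun v => c • u + ((F.symm v : K) : EuclideanSpace ℝ (Fin n)) with hh
  have hiso : Isometry h := by
    apply Isometry.of_dist_eq
    intro a b
    rw [dist_eq_norm, dist_eq_norm]
    have h1 : h a - h b = ((F.symm a - F.symm b : K) : EuclideanSpace ℝ (Fin n)) := by
      rw [hh]; push_cast; abel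
    rw [h1]
    have h2 : ‖((F.symm a - F.symm b : K) : EuclideanSpace ℝ (Fin n))‖ = ‖F.symm a - F.symm b‖ := rfl
    rw [h2, ← map_sub, F.symm.norm_map]
  have incl : {x : EuclideanSpace ℝ (Fin n) | ⟪x, u⟫ = c ∧ ‖x‖ ≤ R}
      ⊆ h '' closedBall (0 : EuclideanSpace ℝ (Fin (n-1))) (R + |c|) := by
    rintro x ⟨hxc, hxR⟩
    have hyK : x - c • u ∈ K := by
      rw [hK, Submodule.mem_orthogonal]
      intro z hz
      rw [Submodule.mem_span_singleton] at hz
      obtain ⟨a, rfl⟩ := hz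
      have h1 : ⟪u, x⟫ = c := by rw [real_inner_comm]; exact hxc
      have h2 : ⟪u, u⟫ = (1:ℝ) := by rw [real_inner_self_eq_norm_sq, hu]; norm_num
      rw [real_inner_smul_left, inner_sub_right, real_inner_smul_right, h1, h2]
      ring
    refine ⟨F ⟨x - c • u, hyK⟩, ?_, ?_⟩
    · rw [mem_closedBall_zero_iff, F.norm_map]
      have : ‖(⟨x - c • u, hyK⟩ : K)‖ = ‖x - c • u‖ := rfl
      rw [this]
      calc ‖x - c • u‖ ≤ ‖x‖ + ‖c • u‖ := norm_sub_le _ _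
        _ ≤ R + |c| := by rw [norm_smul, hu, mul_one]; exact add_le_add hxR le_rfl
    · rw [hh]
      simp only [LinearIsometryEquiv.symm_apply_apply]
      simp
  have hd0 : (0:ℝ) ≤ (n:ℝ) - 1 := by
    have : (2:ℝ) ≤ n := by exact_mod_cast hn
    linarith
  have hcast : ((n-1 : ℕ) : ℝ) = (n:ℝ) - 1 := by
    rw [Nat.cast_sub (by omega)]; simp
  calc μH[(n:ℝ)-1] {x : EuclideanSpace ℝ (Fin n) | ⟪x, u⟫ = c ∧ ‖x‖ ≤ R}
      ≤ μH[(n:ℝ)-1] (h '' closedBall (0 : EuclideanSpace ℝ (Fin (n-1))) (R + |c|)) :=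
        measure_mono incl
    _ = μH[(n:ℝ)-1] (closedBall (0 : EuclideanSpace ℝ (Fin (n-1))) (R + |c|)) :=
        hiso.hausdorffMeasure_image (Or.inl hd0) _
    _ = μH[((n-1:ℕ):ℝ)] (closedBall (0 : EuclideanSpace ℝ (Fin (n-1))) (R + |c|)) := by rw [hcast]
    _ < ⊤ := euc_hm_ub (n-1) _

lemma sphere_hm_fin {n : ℕ} (hn : 2 ≤ n) :
    μH[(n:ℝ)-1] (sphere (0 : EuclideanSpace ℝ (Fin n)) 1) < ⊤ := by
  classical
  have hn0 : 0 < n := by omega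
  haveI : Nonempty (Fin n) := ⟨⟨0, hn0⟩⟩
  set P : EuclideanSpace ℝ (Fin n) → EuclideanSpace ℝ (Fin n) := fun x => ‖x‖⁻¹ • x with hP
  set A : Set (EuclideanSpace ℝ (Fin n)) := {x | 1 ≤ ‖x‖} with hA
  have hPlip : LipschitzOnWith 2 P A := by
    rw [lipschitzOnWith_iff_dist_le_mul]
    intro x hx y hy
    have hx1 : (1:ℝ) ≤ ‖x‖ := hx
    have hy1 : (1:ℝ) ≤ ‖y‖ := hy
    have hx0 : (0:ℝ) < ‖x‖ := lt_of_lt_of_le one_pos hx1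
    have hy0 : (0:ℝ) < ‖y‖ := lt_of_lt_of_le one_pos hy1
    rw [dist_eq_norm, dist_eq_norm]
    have key : P x - P y = ‖x‖⁻¹ • (x - y) + (‖x‖⁻¹ - ‖y‖⁻¹) • y := by
      rw [hP]; module
    have b1 : ‖P x - P y‖ ≤ ‖x‖⁻¹ * ‖x - y‖ + |‖x‖⁻¹ - ‖y‖⁻¹| * ‖y‖ := by
      rw [key]
      refine (norm_add_le _ _).trans ?_
      rw [norm_smul, norm_smul]
      simp [Real.norm_eq_abs, abs_of_pos (inv_pos.2 hx0)]
    have b2 : |‖x‖⁻¹ - ‖y‖⁻¹| * ‖y‖ ≤ ‖x - y‖ := by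
      have e1 : ‖x‖⁻¹ - ‖y‖⁻¹ = (‖y‖ - ‖x‖) / (‖x‖ * ‖y‖) := by field_simp
      have e2 : |‖y‖ - ‖x‖| ≤ ‖x - y‖ :=
        calc |‖y‖ - ‖x‖| ≤ ‖y - x‖ := abs_norm_sub_norm_le y x
          _ = ‖x - y‖ := norm_sub_rev y x
      rw [e1, abs_div, abs_of_pos (mul_pos hx0 hy0), div_mul_eq_mul_div]
      rw [div_le_iff₀ (mul_pos hx0 hy0)]
      calc |‖y‖ - ‖x‖| * ‖y‖ ≤ ‖x - y‖ * ‖y‖ := by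
            exact mul_le_mul_of_nonneg_right e2 hy0.le
        _ ≤ ‖x - y‖ * (‖x‖ * ‖y‖) := by
            have h5 : ‖y‖ ≤ ‖x‖ * ‖y‖ := by nlinarith
            exact mul_le_mul_of_nonneg_left h5 (norm_nonneg _)
    have b3 : ‖x‖⁻¹ * ‖x - y‖ ≤ ‖x - y‖ := by
      have : ‖x‖⁻¹ ≤ 1 := by
        rw [inv_le_one_iff₀]; right; exact hx1
      nlinarith [norm_nonneg (x - y)]
    calc ‖P x - P y‖ ≤ ‖x‖⁻¹ * ‖x - y‖ + |‖x‖⁻¹ - ‖y‖⁻¹| * ‖y‖ := b1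
      _ ≤ ‖x - y‖ + ‖x - y‖ := add_le_add b3 b2
      _ = (2:ℝ≥0) * ‖x - y‖ := by push_cast; ring
  set e : Fin n → EuclideanSpace ℝ (Fin n) := fun i => EuclideanSpace.single i (1:ℝ) with he
  have hen : ∀ i, ‖e i‖ = 1 := by
    intro i; rw [he]; simp only; rw [EuclideanSpace.norm_single]; norm_num
  set Face : Fin n × Bool → Set (EuclideanSpace ℝ (Fin n)) :=
    fun p => {x | ⟪x, e p.1⟫ = (if p.2 then 1 else -1) ∧ ‖x‖ ≤ Real.sqrt n} with hFace
  set U : Set (EuclideanSpace ℝ (Fin n)) := ⋃ p : Fin n × Bool, Face p with hU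
  have hUfin : μH[(n:ℝ)-1] U < ⊤ := by
    refine lt_of_le_of_lt (measure_iUnion_le _) ?_
    rw [tsum_fintype]
    refine ENNReal.sum_lt_top.2 fun p _ => ?_
    exact slice_fin hn (e p.1) (hen p.1) _ _
  have hcover : sphere (0 : EuclideanSpace ℝ (Fin n)) 1 ⊆ P '' (A ∩ U) := by
    intro ξ hξ
    rw [mem_sphere_zero_iff_norm] at hξ
    obtain ⟨i, -, hi⟩ := Finset.exists_max_image Finset.univ (fun j => |ξ j|) Finset.univ_nonempty
    set c := |ξ i| with hc
    have hc0 : 0 < c := by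
      rcases eq_or_lt_of_le (abs_nonneg (ξ i)) with h | h
      · exfalso
        have hz : ∀ j, ‖ξ j‖ = 0 := by
          intro j
          have h2 := hi j (Finset.mem_univ j)
          rw [hc, ← h] at h2
          rw [Real.norm_eq_abs]
          linarith [abs_nonneg (ξ j)]
        have : ‖ξ‖ = 0 := by
          rw [EuclideanSpace.norm_eq]
          simp only [hz]
          simp
        rw [this] at hξ; norm_num at hξ
      · exact h
    have hc1 : c ≤ 1 := by
      rw [hc, ← Real.norm_eq_abs, ← hξ]
      exact euc_coord_le_norm n ξ i
    have hcn : c⁻¹ ≤ Real.sqrt n := by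
      have h1 : ‖ξ‖ ≤ Real.sqrt n * c := by
        rw [EuclideanSpace.norm_eq]
        have h2 : ∑ j, ‖ξ j‖^2 ≤ (n:ℝ) * c^2 := by
          calc ∑ j, ‖ξ j‖^2 ≤ ∑ _j : Fin n, c^2 := by
                refine Finset.sum_le_sum fun j _ => ?_
                have := hi j (Finset.mem_univ j)
                rw [Real.norm_eq_abs]
                nlinarith [abs_nonneg (ξ j)]
            _ = (n:ℝ) * c^2 := by simp [mul_comm]
        calc Real.sqrt (∑ j, ‖ξ j‖^2) ≤ Real.sqrt ((n:ℝ) * c^2) := Real.sqrt_le_sqrt h2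
          _ = Real.sqrt n * c := by
              rw [Real.sqrt_mul (Nat.cast_nonneg n), Real.sqrt_sq hc0.le]
      rw [hξ] at h1
      calc c⁻¹ = c⁻¹ * 1 := (mul_one _).symm
        _ ≤ c⁻¹ * (Real.sqrt n * c) := by
            exact mul_le_mul_of_nonneg_left h1 (inv_nonneg.2 hc0.le)
        _ = Real.sqrt n := by field_simp
    set x : EuclideanSpace ℝ (Fin n) := c⁻¹ • ξ with hx
    have hxn : ‖x‖ = c⁻¹ := by
      rw [hx, norm_smul, hξ, mul_one, Real.norm_eq_abs, abs_of_pos (inv_pos.2 hc0)]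
    have hxA : x ∈ A := by
      rw [hA]; show (1:ℝ) ≤ ‖x‖
      rw [hxn]
      rw [one_le_inv_iff₀]
      exact ⟨hc0, hc1⟩
    have hsign : ξ i = c ∨ ξ i = -c := by
      rcases abs_eq hc0.le |>.mp hc.symm with h | h
      · exact Or.inl h
      · exact Or.inr h
    have hxi : ⟪x, e i⟫ = x i := by
      rw [he]; simp only; rw [EuclideanSpace.inner_single_right]; simp
    have hxU : x ∈ U := by
      rw [hU]
      rcases hsign with h | h
      · refine Set.mem_iUnion.2 ⟨(i, true), ?_, ?_⟩
        · rw [hxi, hx]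
          show c⁻¹ * ξ i = _
          rw [h]; simp [mul_inv_cancel₀ hc0.ne', inv_mul_cancel₀ hc0.ne']
        · rw [hxn]; exact hcn
      · refine Set.mem_iUnion.2 ⟨(i, false), ?_, ?_⟩
        · rw [hxi, hx]
          show c⁻¹ * ξ i = _
          rw [h]; simp; rw [inv_mul_cancel₀ hc0.ne']
        · rw [hxn]; exact hcn
    refine ⟨x, ⟨hxA, hxU⟩, ?_⟩
    rw [hP]
    show ‖x‖⁻¹ • x = ξ
    rw [hxn, inv_inv, hx, smul_smul, mul_inv_cancel₀ hc0.ne', one_smul]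
  have hd0 : (0:ℝ) ≤ (n:ℝ) - 1 := by
    have : (2:ℝ) ≤ n := by exact_mod_cast hn
    linarith
  calc μH[(n:ℝ)-1] (sphere (0 : EuclideanSpace ℝ (Fin n)) 1)
      ≤ μH[(n:ℝ)-1] (P '' (A ∩ U)) := measure_mono hcover
    _ ≤ ((2:ℝ≥0) : ℝ≥0∞) ^ ((n:ℝ)-1) * μH[(n:ℝ)-1] (A ∩ U) :=
        (hPlip.mono Set.inter_subset_left).hausdorffMeasure_image_le hd0
    _ ≤ ((2:ℝ≥0) : ℝ≥0∞) ^ ((n:ℝ)-1) * μH[(n:ℝ)-1] U := by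
        gcongr
        exact Set.inter_subset_right
    _ < ⊤ := ENNReal.mul_lt_top
        (ENNReal.rpow_lt_top_of_nonneg hd0 ENNReal.coe_ne_top) hUfin

end AuxLemmas

/-- the affine energy E(μ,σ) vanishes iff Ψ_ξ̃(μ,σ) = 0 for some unit vector ξ̃. -/
theorem energyM_eq_zero_iff {n : ℕ} (hn : 2 ≤ n)
    (μ : Measure (EuclideanSpace ℝ (Fin n))) [IsFiniteMeasure μ]
    (σ : EuclideanSpace ℝ (Fin n) → EuclideanSpace ℝ (Fin n)) (hσm : Measurable σ)
    (hσ : ∀ᵐ x ∂μ, ‖σ x‖ = 1) :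
    energyM μ σ = 0 ↔
      ∃ ξ ∈ Metric.sphere (0 : EuclideanSpace ℝ (Fin n)) 1,
        ∫⁻ x, ENNReal.ofReal |(inner ℝ (σ x) ξ : ℝ)| ∂μ = 0 := by
  classical
  have hnR : (2:ℝ) ≤ (n:ℝ) := by exact_mod_cast hn
  have hnpos : (0:ℝ) < n := by linarith
  -- basic measurability
  have hPsiMeas : Measurable (PsiM μ σ) := by
    have hF : Measurable (fun p : EuclideanSpace ℝ (Fin n) × EuclideanSpace ℝ (Fin n) =>
        ENNReal.ofReal |(inner ℝ (σ p.2) p.1 : ℝ)|) := by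
      apply Measurable.ennreal_ofReal
      apply Measurable.abs
      have hcont : Continuous (fun q : EuclideanSpace ℝ (Fin n) × EuclideanSpace ℝ (Fin n) =>
          (inner ℝ q.1 q.2 : ℝ)) := continuous_inner
      exact hcont.measurable.comp ((hσm.comp measurable_snd).prodMk measurable_fst)
    exact hF.lintegral_prod_right'
  have hPsiPowMeas : Measurable fun ξ => (PsiM μ σ ξ) ^ (-(n:ℝ)) :=
    ENNReal.continuous_rpow_const.measurable.comp hPsiMeas
  -- Psi is "Lipschitz"
  have psi_lip : ∀ ξ₁ ξ₂ : EuclideanSpace ℝ (Fin n),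
      PsiM μ σ ξ₁ ≤ PsiM μ σ ξ₂ + ENNReal.ofReal ‖ξ₁ - ξ₂‖ * μ Set.univ := by
    intro ξ₁ ξ₂
    have step : ∀ᵐ x ∂μ, ENNReal.ofReal |(inner ℝ (σ x) ξ₁ : ℝ)|
        ≤ ENNReal.ofReal |(inner ℝ (σ x) ξ₂ : ℝ)| + ENNReal.ofReal ‖ξ₁ - ξ₂‖ := by
      filter_upwards [hσ] with x hx
      have h1 : (inner ℝ (σ x) ξ₁ : ℝ) = (inner ℝ (σ x) ξ₂ : ℝ) + (inner ℝ (σ x) (ξ₁ - ξ₂) : ℝ) := by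
        rw [← inner_add_right]
        congr 1
        abel
      have h2 : |(inner ℝ (σ x) (ξ₁ - ξ₂) : ℝ)| ≤ ‖σ x‖ * ‖ξ₁ - ξ₂‖ := abs_real_inner_le_norm _ _
      rw [hx, one_mul] at h2
      have h3 : |(inner ℝ (σ x) ξ₁ : ℝ)| ≤ |(inner ℝ (σ x) ξ₂ : ℝ)| + ‖ξ₁ - ξ₂‖ := by
        calc |(inner ℝ (σ x) ξ₁ : ℝ)| ≤ |(inner ℝ (σ x) ξ₂ : ℝ)| + |(inner ℝ (σ x) (ξ₁ - ξ₂) : ℝ)| := by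
              rw [h1]; exact abs_add_le _ _
          _ ≤ _ := add_le_add le_rfl h2
      calc ENNReal.ofReal |(inner ℝ (σ x) ξ₁ : ℝ)|
          ≤ ENNReal.ofReal (|(inner ℝ (σ x) ξ₂ : ℝ)| + ‖ξ₁ - ξ₂‖) := ENNReal.ofReal_le_ofReal h3
        _ = _ := ENNReal.ofReal_add (abs_nonneg _) (norm_nonneg _)
    calc PsiM μ σ ξ₁
        ≤ ∫⁻ x, (ENNReal.ofReal |(inner ℝ (σ x) ξ₂ : ℝ)| + ENNReal.ofReal ‖ξ₁ - ξ₂‖) ∂μ :=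
          lintegral_mono_ae step
      _ = PsiM μ σ ξ₂ + ENNReal.ofReal ‖ξ₁ - ξ₂‖ * μ Set.univ := by
          rw [lintegral_add_right _ measurable_const, lintegral_const]
          rfl
  have psi_zero : PsiM μ σ 0 = 0 := by
    simp [PsiM]
  have psi_fin : ∀ ξ, PsiM μ σ ξ < ⊤ := by
    intro ξ
    calc PsiM μ σ ξ ≤ PsiM μ σ 0 + ENNReal.ofReal ‖ξ - 0‖ * μ Set.univ := psi_lip ξ 0
      _ = ENNReal.ofReal ‖ξ‖ * μ Set.univ := by rw [psi_zero, zero_add, sub_zero]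
      _ < ⊤ := ENNReal.mul_lt_top ENNReal.ofReal_lt_top (measure_lt_top μ _)
  -- reduction of energy = 0 to the integral being ⊤
  have halpha : ENNReal.ofReal (alphaConst n) ≠ 0 := by
    have hb1 : 0 < unitBallVol (n-1) := by
      apply ENNReal.toReal_pos
      · exact (measure_ball_pos volume _ one_pos).ne'
      · exact (measure_ball_lt_top).ne
    have hb2 : 0 < unitBallVol n := by
      apply ENNReal.toReal_pos
      · exact (measure_ball_pos volume _ one_pos).ne'
      · exact (measure_ball_lt_top).ne
    have h : 0 < alphaConst n := by
      apply _root_.mul_pos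
      · positivity
      · apply Real.rpow_pos_of_pos
        positivity
    simpa [ENNReal.ofReal_eq_zero, not_le] using h
  have henergy : energyM μ σ = 0 ↔
      (∫⁻ ξ, (PsiM μ σ ξ) ^ (-(n : ℝ)) ∂(sphereMeasure n)) = ⊤ := by
    rw [energyM]
    constructor
    · intro h
      rcases mul_eq_zero.mp h with h | h
      · exact absurd h halpha
      · rcases ENNReal.rpow_eq_zero_iff.mp h with ⟨h0, hpos⟩ | ⟨htop, _⟩
        · exfalso
          have : (0:ℝ) < 1 / n := by positivity
          linarith
        · exact htop
    · intro h
      have hneg : -(1 / (n:ℝ)) < 0 := by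
        have : (0:ℝ) < 1 / n := by positivity
        linarith
      rw [h, ENNReal.top_rpow_of_neg hneg, mul_zero]
  rw [henergy]
  constructor
  · -- integral = ⊤ implies existence of a zero direction
    intro hItop
    by_contra hno
    push_neg at hno
    have hno' : ∀ ξ ∈ sphere (0 : EuclideanSpace ℝ (Fin n)) 1, PsiM μ σ ξ ≠ 0 := by
      intro ξ hξ
      exact hno ξ hξ
    -- continuity of toReal ∘ Psi
    set f : EuclideanSpace ℝ (Fin n) → ℝ := fun ξ => (PsiM μ σ ξ).toReal with hf
    have hmono : ∀ ξ₁ ξ₂ : EuclideanSpace ℝ (Fin n),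
        f ξ₁ ≤ f ξ₂ + ‖ξ₁ - ξ₂‖ * (μ Set.univ).toReal := by
      intro ξ₁ ξ₂
      have h1 := psi_lip ξ₁ ξ₂
      have h2 : (PsiM μ σ ξ₂ + ENNReal.ofReal ‖ξ₁ - ξ₂‖ * μ Set.univ).toReal
          = f ξ₂ + ‖ξ₁ - ξ₂‖ * (μ Set.univ).toReal := by
        rw [ENNReal.toReal_add (psi_fin ξ₂).ne
          (ENNReal.mul_lt_top ENNReal.ofReal_lt_top (measure_lt_top μ _)).ne,
          ENNReal.toReal_mul, ENNReal.toReal_ofReal (norm_nonneg _)]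
      rw [← h2]
      exact ENNReal.toReal_mono (by
        exact (ENNReal.add_lt_top.2 ⟨psi_fin ξ₂,
          ENNReal.mul_lt_top ENNReal.ofReal_lt_top (measure_lt_top μ _)⟩).ne) h1
    have hLip : LipschitzWith (μ Set.univ).toNNReal f := by
      apply LipschitzWith.of_dist_le_mul
      intro ξ₁ ξ₂
      rw [Real.dist_eq, dist_eq_norm]
      have hc : ((μ Set.univ).toNNReal : ℝ) = (μ Set.univ).toReal := rfl
      rw [hc, abs_sub_le_iff]
      constructor
      · have := hmono ξ₁ ξ₂; linarith [this]
      · have := hmono ξ₂ ξ₁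
        rw [norm_sub_rev] at this
        linarith [this]
    haveI : Nontrivial (EuclideanSpace ℝ (Fin n)) := by
      apply Module.nontrivial_of_finrank_pos (R := ℝ)
      rw [finrank_euclideanSpace_fin]
      omega
    have hsne : (sphere (0 : EuclideanSpace ℝ (Fin n)) 1).Nonempty :=
      NormedSpace.sphere_nonempty.mpr zero_le_one
    obtain ⟨ξ₀, hξ₀mem, hξ₀min⟩ :=
      (isCompact_sphere (0 : EuclideanSpace ℝ (Fin n)) 1).exists_isMinOn hsne
        hLip.continuous.continuousOn
    set c := f ξ₀ with hcdef
    have hc0 : 0 < c := ENNReal.toReal_pos (hno' ξ₀ hξ₀mem) (psi_fin ξ₀).ne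
    have hbound : ∀ ξ ∈ sphere (0 : EuclideanSpace ℝ (Fin n)) 1,
        (PsiM μ σ ξ) ^ (-(n:ℝ)) ≤ (ENNReal.ofReal c) ^ (-(n:ℝ)) := by
      intro ξ hξmem
      have h1 : ENNReal.ofReal c ≤ PsiM μ σ ξ :=
        ENNReal.ofReal_le_of_le_toReal (hξ₀min hξmem)
      rw [ENNReal.rpow_neg, ENNReal.rpow_neg]
      exact ENNReal.inv_le_inv.2 (ENNReal.rpow_le_rpow h1 (by positivity))
    have hfin : (∫⁻ ξ, (PsiM μ σ ξ) ^ (-(n : ℝ)) ∂(sphereMeasure n)) < ⊤ := by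
      have hcne : (ENNReal.ofReal c) ^ (-(n:ℝ)) ≠ ⊤ := by
        rw [ENNReal.rpow_neg]
        rw [Ne, ENNReal.inv_eq_top]
        rw [ENNReal.rpow_eq_zero_iff]
        push_neg
        constructor
        · intro h; exfalso; rw [ENNReal.ofReal_eq_zero] at h; linarith
        · intro h; exact absurd h ENNReal.ofReal_ne_top
      calc (∫⁻ ξ, (PsiM μ σ ξ) ^ (-(n : ℝ)) ∂(sphereMeasure n))
          = ∫⁻ ξ in sphere (0 : EuclideanSpace ℝ (Fin n)) 1,
              (PsiM μ σ ξ) ^ (-(n : ℝ)) ∂μH[(n:ℝ)-1] := rfl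
        _ ≤ ∫⁻ _ξ in sphere (0 : EuclideanSpace ℝ (Fin n)) 1,
              (ENNReal.ofReal c) ^ (-(n:ℝ)) ∂μH[(n:ℝ)-1] :=
            setLIntegral_mono' (isClosed_sphere.measurableSet) hbound
        _ = (ENNReal.ofReal c) ^ (-(n:ℝ)) * μH[(n:ℝ)-1] (sphere (0 : EuclideanSpace ℝ (Fin n)) 1) := by
            rw [setLIntegral_const]
        _ < ⊤ := ENNReal.mul_lt_top (lt_top_iff_ne_top.2 hcne) (sphere_hm_fin hn)
    exact absurd hItop hfin.ne
  · -- existence of a zero direction implies integral = ⊤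
    rintro ⟨xi0, hmem, hzero⟩
    have hxi0 : ‖xi0‖ = 1 := by rwa [mem_sphere_zero_iff_norm] at hmem
    have hzero' : PsiM μ σ xi0 = 0 := hzero
    have hmeas1 : Measurable fun x => ENNReal.ofReal |(inner ℝ (σ x) xi0 : ℝ)| := by
      apply Measurable.ennreal_ofReal
      apply Measurable.abs
      have hcont : Continuous fun y : EuclideanSpace ℝ (Fin n) => (inner ℝ y xi0 : ℝ) :=
        continuous_id.inner continuous_const
      exact hcont.measurable.comp hσm
    have hae : ∀ᵐ x ∂μ, (inner ℝ (σ x) xi0 : ℝ) = 0 := by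
      have := (lintegral_eq_zero_iff hmeas1).mp hzero'
      filter_upwards [this] with x hx
      simp only [Pi.zero_apply] at hx
      have : |(inner ℝ (σ x) xi0 : ℝ)| = 0 := by
        rw [ENNReal.ofReal_eq_zero] at hx
        have := abs_nonneg (inner ℝ (σ x) xi0 : ℝ)
        linarith
      exact abs_eq_zero.mp this
    -- upper bound for Psi near xi0
    have keybound : ∀ r : ℝ, 0 < r → ∀ ξ ∈ closedBall xi0 r,
        PsiM μ σ ξ ≤ ENNReal.ofReal r * μ Set.univ := by
      intro r hr ξ hξmem
      rw [mem_closedBall, dist_eq_norm] at hξmem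
      have step : ∀ᵐ x ∂μ, ENNReal.ofReal |(inner ℝ (σ x) ξ : ℝ)| ≤ ENNReal.ofReal r := by
        filter_upwards [hσ, hae] with x hx hx0
        have h1 : (inner ℝ (σ x) ξ : ℝ) = (inner ℝ (σ x) xi0 : ℝ) + (inner ℝ (σ x) (ξ - xi0) : ℝ) := by
          rw [← inner_add_right]; congr 1; abel
        have h2 : |(inner ℝ (σ x) (ξ - xi0) : ℝ)| ≤ ‖σ x‖ * ‖ξ - xi0‖ := abs_real_inner_le_norm _ _
        rw [hx, one_mul] at h2
        have h3 : |(inner ℝ (σ x) ξ : ℝ)| ≤ r := by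
          rw [h1, hx0, zero_add]
          exact h2.trans hξmem
        exact ENNReal.ofReal_le_ofReal h3
      calc PsiM μ σ ξ ≤ ∫⁻ _x, ENNReal.ofReal r ∂μ := lintegral_mono_ae step
        _ = ENNReal.ofReal r * μ Set.univ := lintegral_const _
    set I := ∫⁻ ξ, (PsiM μ σ ξ) ^ (-(n : ℝ)) ∂(sphereMeasure n) with hIdef
    have hcap : ∀ r : ℝ, 0 < r → r ≤ 1 →
        ENNReal.ofReal ((r / Real.sqrt (n-1 : ℕ)) ^ (n-1 : ℕ))
          ≤ sphereMeasure n (closedBall xi0 r) := by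
      intro r hr0 hr1
      have : sphereMeasure n (closedBall xi0 r)
          = μH[(n:ℝ)-1] (sphere (0 : EuclideanSpace ℝ (Fin n)) 1 ∩ closedBall xi0 r) := by
        rw [sphereMeasure, Measure.restrict_apply measurableSet_closedBall, Set.inter_comm]
      rw [this]
      exact cap_lb hn xi0 hxi0 r hr0 hr1
    have hlow : ∀ r : ℝ, 0 < r → r ≤ 1 →
        (ENNReal.ofReal r * μ Set.univ) ^ (-(n:ℝ))
            * ENNReal.ofReal ((r / Real.sqrt (n-1 : ℕ)) ^ (n-1 : ℕ)) ≤ I := by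
      intro r hr0 hr1
      have hb : ∀ ξ ∈ closedBall xi0 r,
          (ENNReal.ofReal r * μ Set.univ) ^ (-(n:ℝ)) ≤ (PsiM μ σ ξ) ^ (-(n:ℝ)) := by
        intro ξ hξmem
        rw [ENNReal.rpow_neg, ENNReal.rpow_neg]
        exact ENNReal.inv_le_inv.2
          (ENNReal.rpow_le_rpow (keybound r hr0 ξ hξmem) (by positivity))
      calc (ENNReal.ofReal r * μ Set.univ) ^ (-(n:ℝ))
              * ENNReal.ofReal ((r / Real.sqrt (n-1 : ℕ)) ^ (n-1 : ℕ))
          ≤ (ENNReal.ofReal r * μ Set.univ) ^ (-(n:ℝ)) * sphereMeasure n (closedBall xi0 r) :=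
            mul_le_mul_right (hcap r hr0 hr1) _
        _ = ∫⁻ _ξ in closedBall xi0 r, (ENNReal.ofReal r * μ Set.univ) ^ (-(n:ℝ))
              ∂(sphereMeasure n) := by rw [setLIntegral_const]
        _ ≤ ∫⁻ ξ in closedBall xi0 r, (PsiM μ σ ξ) ^ (-(n:ℝ)) ∂(sphereMeasure n) :=
            setLIntegral_mono hPsiPowMeas hb
        _ ≤ I := setLIntegral_le_lintegral _ _
    -- now split on whether μ = 0
    rcases eq_or_ne (μ Set.univ) 0 with hμ0 | hμ0
    · have hμz : μ = 0 := Measure.measure_univ_eq_zero.mp hμ0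
      have hPsi0 : ∀ ξ : EuclideanSpace ℝ (Fin n), PsiM μ σ ξ = 0 := by
        intro ξ; rw [PsiM, hμz, lintegral_zero_measure]
      have hint : I = ⊤ * sphereMeasure n Set.univ := by
        rw [hIdef]
        have : ∀ ξ, (PsiM μ σ ξ) ^ (-(n:ℝ)) = (⊤ : ℝ≥0∞) := by
          intro ξ
          rw [hPsi0 ξ]
          exact ENNReal.zero_rpow_of_neg (by linarith)
        simp only [this]
        rw [lintegral_const]
      rw [hint]
      have hpos : sphereMeasure n Set.univ ≠ 0 := by
        have h1 := hcap 1 one_pos le_rfl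
        have h2 : (0:ℝ≥0∞) < ENNReal.ofReal ((1 / Real.sqrt (n-1 : ℕ)) ^ (n-1 : ℕ)) := by
          rw [ENNReal.ofReal_pos]
          have hsq : 0 < Real.sqrt (n-1 : ℕ) := by
            rw [Real.sqrt_pos]
            have : 1 ≤ n - 1 := by omega
            exact_mod_cast Nat.pos_of_ne_zero (by omega)
          positivity
        have h3 : (0:ℝ≥0∞) < sphereMeasure n (closedBall xi0 1) := lt_of_lt_of_le h2 h1
        intro h
        have : sphereMeasure n (closedBall xi0 1) = 0 :=
          le_antisymm (h ▸ measure_mono (Set.subset_univ _)) (by positivity)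
        rw [this] at h3
        exact lt_irrefl _ h3
      exact ENNReal.top_mul hpos
    · -- μ ≠ 0 : get I ≥ c₂ / r for all small r
      set M := μ Set.univ with hM
      have hMtop : M ≠ ⊤ := (measure_lt_top μ _).ne
      set c₂ := M ^ (-(n:ℝ)) * ENNReal.ofReal ((Real.sqrt (n-1 : ℕ))⁻¹ ^ (n-1 : ℕ)) with hc₂
      have hsq : 0 < Real.sqrt (n-1 : ℕ) := by
        rw [Real.sqrt_pos]
        exact_mod_cast Nat.pos_of_ne_zero (by omega)
      have hc₂0 : c₂ ≠ 0 := by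
        rw [hc₂]
        apply mul_ne_zero
        · rw [Ne, ENNReal.rpow_eq_zero_iff]
          push_neg
          constructor
          · intro h; exact absurd h hμ0
          · intro h; exact absurd h hMtop
        · rw [Ne, ENNReal.ofReal_eq_zero, not_le]
          positivity
      have hlow2 : ∀ r : ℝ, 0 < r → r ≤ 1 → c₂ ≤ I * ENNReal.ofReal r := by
        intro r hr0 hr1
        have h1 := hlow r hr0 hr1
        have hrne : ENNReal.ofReal r ≠ 0 := by
          rw [Ne, ENNReal.ofReal_eq_zero, not_le]; exact hr0
        have halg : (ENNReal.ofReal r * M) ^ (-(n:ℝ))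
            * ENNReal.ofReal ((r / Real.sqrt (n-1 : ℕ)) ^ (n-1 : ℕ))
            = c₂ * (ENNReal.ofReal r)⁻¹ := by
          rw [ENNReal.mul_rpow_of_ne_top ENNReal.ofReal_ne_top hMtop]
          have e1 : (r / Real.sqrt (n-1 : ℕ)) ^ (n-1 : ℕ)
              = r ^ (n-1 : ℕ) * ((Real.sqrt (n-1 : ℕ))⁻¹) ^ (n-1 : ℕ) := by
            rw [div_eq_mul_inv, mul_pow]
          rw [e1, ENNReal.ofReal_mul (by positivity), ENNReal.ofReal_pow hr0.le]
          have e2 : (ENNReal.ofReal r) ^ (n-1 : ℕ)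
              = (ENNReal.ofReal r) ^ (((n-1 : ℕ) : ℕ) : ℝ) := (ENNReal.rpow_natCast _ _).symm
          rw [e2]
          have e3 : (ENNReal.ofReal r) ^ (-(n:ℝ)) * (ENNReal.ofReal r) ^ (((n-1 : ℕ) : ℕ) : ℝ)
              = (ENNReal.ofReal r)⁻¹ := by
            rw [← ENNReal.rpow_add _ _ hrne ENNReal.ofReal_ne_top]
            have : -(n:ℝ) + ((n-1 : ℕ) : ℝ) = -1 := by
              have : ((n-1 : ℕ) : ℝ) = (n:ℝ) - 1 := by
                rw [Nat.cast_sub (by omega)]; simp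
              rw [this]; ring
            rw [this, ENNReal.rpow_neg_one]
          calc (ENNReal.ofReal r) ^ (-(n:ℝ)) * M ^ (-(n:ℝ))
                * ((ENNReal.ofReal r) ^ (((n-1 : ℕ) : ℕ) : ℝ)
                  * ENNReal.ofReal ((Real.sqrt (n-1 : ℕ))⁻¹ ^ (n-1 : ℕ)))
              = M ^ (-(n:ℝ)) * ENNReal.ofReal ((Real.sqrt (n-1 : ℕ))⁻¹ ^ (n-1 : ℕ))
                * ((ENNReal.ofReal r) ^ (-(n:ℝ))
                  * (ENNReal.ofReal r) ^ (((n-1 : ℕ) : ℕ) : ℝ)) := by ring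
            _ = c₂ * (ENNReal.ofReal r)⁻¹ := by rw [e3, hc₂]
        rw [halg] at h1
        have h2 := (ENNReal.div_le_iff_le_mul (a := c₂) (b := ENNReal.ofReal r) (c := I)
          (Or.inl hrne) (Or.inl ENNReal.ofReal_ne_top))
        rw [div_eq_mul_inv] at h2
        exact h2.mp h1
      by_contra hI
      have htend : Filter.Tendsto (fun r : ℝ => I * ENNReal.ofReal r)
          (nhdsWithin 0 (Set.Ioi 0)) (nhds (I * ENNReal.ofReal 0)) := by
        apply ENNReal.Tendsto.const_mul
        · exact (ENNReal.continuous_ofReal.tendsto 0).mono_left nhdsWithin_le_nhds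
        · exact Or.inr hI
      have hev : ∀ᶠ r in nhdsWithin (0:ℝ) (Set.Ioi 0), c₂ ≤ I * ENNReal.ofReal r := by
        filter_upwards [Ioc_mem_nhdsGT_of_mem (Set.mem_Ico.mpr ⟨le_refl (0:ℝ), one_pos⟩)]
          with r hr
        exact hlow2 r hr.1 hr.2
      have hle : c₂ ≤ I * ENNReal.ofReal 0 := ge_of_tendsto htend hev
      rw [ENNReal.ofReal_zero, mul_zero] at hle
      exact hc₂0 (le_antisymm hle (by positivity))
end
end

section
/- Let n ≥ 2, let Ω ⊆ ℝⁿ be an open set, and let u : Ω → ℝ be continuously differentiable with ∫_Ω |∇u(x)| dx < ∞. Then the affine energy E_Ω(u) equals 0 if and only if there exists ξ̃ in the unit sphere S^{n−1} such that ∇u(x)·ξ̃ = 0 for every x ∈ Ω. -/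
open MeasureTheory ENNReal

noncomputable section

/-- Ψ_ξ(u) = ∫_Ω |∇u(x)·ξ| dx for a function u defined (C¹) on the open set Ω. -/
def PsiOn {n : ℕ} (Ω : Set (EuclideanSpace ℝ (Fin n))) (u : EuclideanSpace ℝ (Fin n) → ℝ)
    (ξ : EuclideanSpace ℝ (Fin n)) : ℝ≥0∞ :=
  ∫⁻ x in Ω, ENNReal.ofReal |fderivWithin ℝ u Ω x ξ|

/-- The affine energy E_Ω(u) = α_n (∫_{S^{n-1}} Ψ_ξ(u)^{-n} dξ)^{-1/n}, computed in the
extended nonnegative reals (so that 0^{-n} = ∞ and ∞^{-1/n} = 0, matching the conventions). -/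
def energyOn {n : ℕ} (Ω : Set (EuclideanSpace ℝ (Fin n)))
    (u : EuclideanSpace ℝ (Fin n) → ℝ) : ℝ≥0∞ :=
  ENNReal.ofReal (alphaConst n) *
    (∫⁻ ξ, (PsiOn Ω u ξ) ^ (-(n : ℝ)) ∂(sphereMeasure n)) ^ (-(1 / (n : ℝ)))

section EnergyAuxGeom

open Metric Set Module
open scoped Pointwise NNReal RealInnerProductSpace

namespace EnergyAux

lemma rpow_neg_anti {a b : ℝ≥0∞} {y : ℝ} (hy : 0 ≤ y) (hab : a ≤ b) :
    b ^ (-y) ≤ a ^ (-y) := by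
  rw [ENNReal.rpow_neg, ENNReal.rpow_neg]
  exact ENNReal.inv_le_inv.2 (ENNReal.rpow_le_rpow hab hy)

lemma sqrt_abs_sub_le {τ a b : ℝ} (hτ : 0 < τ) (ha : 0 ≤ a) (hb : 0 ≤ b)
    (ha' : τ ≤ Real.sqrt a) (hb' : τ ≤ Real.sqrt b) :
    |Real.sqrt a - Real.sqrt b| ≤ |a - b| / (2 * τ) := by
  have h1 : Real.sqrt a ^ 2 = a := Real.sq_sqrt ha
  have h2 : Real.sqrt b ^ 2 = b := Real.sq_sqrt hb
  have hsum : 2 * τ ≤ Real.sqrt a + Real.sqrt b := by linarith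
  rw [le_div_iff₀ (by positivity)]
  have key : |a - b| = |Real.sqrt a - Real.sqrt b| * (Real.sqrt a + Real.sqrt b) := by
    rw [← abs_of_nonneg (show (0:ℝ) ≤ Real.sqrt a + Real.sqrt b by positivity), ← abs_mul]
    congr 1
    linear_combination h2 - h1
  calc |Real.sqrt a - Real.sqrt b| * (2 * τ)
      ≤ |Real.sqrt a - Real.sqrt b| * (Real.sqrt a + Real.sqrt b) := by
        exact mul_le_mul_of_nonneg_left hsum (abs_nonneg _)
    _ = |a - b| := key.symm

variable {n : ℕ}

local notation "V" => EuclideanSpace ℝ (Fin n)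

lemma norm_coe_add_smul (e : V) (he : ‖e‖ = 1) (w : ((ℝ ∙ e)ᗮ : Submodule ℝ V)) (t : ℝ) :
    ‖(w : V) + t • e‖ ^ 2 = ‖w‖ ^ 2 + t ^ 2 := by
  have hw : ⟪(w : V), e⟫ = 0 := Submodule.mem_orthogonal_singleton_iff_inner_left.1 w.2
  rw [norm_add_sq_real, real_inner_smul_right, hw, norm_smul, he]
  have : ‖(w : V)‖ = ‖w‖ := (Submodule.coe_norm w).symm
  rw [this]
  simp [sq_abs]

lemma finrank_orth (hn : 2 ≤ n) (e : V) (hne : e ≠ 0) :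
    ((finrank ℝ ((ℝ ∙ e)ᗮ : Submodule ℝ V)) : ℝ) = (n : ℝ) - 1 := by
  have h1 : finrank ℝ (ℝ ∙ e : Submodule ℝ V) = 1 := finrank_span_singleton hne
  have h2 := (ℝ ∙ e : Submodule ℝ V).finrank_add_finrank_orthogonal
  rw [h1, finrank_euclideanSpace_fin] at h2
  have h3 : finrank ℝ ((ℝ ∙ e)ᗮ : Submodule ℝ V) = n - 1 := by omega
  rw [h3, Nat.cast_sub (by omega)]
  norm_num
set_option maxHeartbeats 2000000 in
lemma cap_lower_bound (hn : 2 ≤ n) (e : V) (he : ‖e‖ = 1) :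
    ∃ κ : ℝ≥0∞, 0 < κ ∧ ∀ r : ℝ, 0 < r → r ≤ 1 →
      ENNReal.ofReal ((r / Real.sqrt 2) ^ ((n : ℝ) - 1)) * κ ≤
        μH[(n : ℝ) - 1] (Metric.closedBall e r ∩ Metric.sphere (0 : V) 1) := by
  have hne : e ≠ 0 := fun h => by simp [h] at he
  set E : Submodule ℝ V := (ℝ ∙ e)ᗮ with hE
  have hfr : ((finrank ℝ E) : ℝ) = (n : ℝ) - 1 := finrank_orth hn e hne
  have h2n : (2 : ℝ) ≤ (n : ℝ) := by exact_mod_cast hn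
  have hd : (0 : ℝ) ≤ (n : ℝ) - 1 := by linarith
  set κ : ℝ≥0∞ := μH[(n : ℝ) - 1] (Metric.closedBall (0 : E) 1) with hκdef
  have hκ : 0 < κ := by
    rw [hκdef, ← hfr]
    exact (measure_ball_pos _ 0 one_pos).trans_le (measure_mono ball_subset_closedBall)
  refine ⟨κ, hκ, fun r hr hr1 => ?_⟩
  have hs2 : (0 : ℝ) < Real.sqrt 2 := Real.sqrt_pos.2 two_pos
  have h12 : (1 : ℝ) ≤ Real.sqrt 2 := by
    rw [show (1 : ℝ) = Real.sqrt 1 by simp]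
    exact Real.sqrt_le_sqrt (by norm_num)
  set ρ : ℝ := r / Real.sqrt 2 with hρdef
  have hρ : 0 < ρ := div_pos hr hs2
  have hρ1 : ρ ≤ 1 := by rw [hρdef, div_le_one hs2]; linarith
  have hsub : Metric.closedBall (0 : E) ρ ⊆
      (E.orthogonalProjectionOnto) '' (Metric.closedBall e r ∩ Metric.sphere (0 : V) 1) := by
    intro w hw
    have hwn : ‖w‖ ≤ ρ := by simpa [Metric.mem_closedBall, dist_zero_right] using hw
    have hs0 : (0 : ℝ) ≤ ‖w‖ := norm_nonneg _
    have hs1 : ‖w‖ ≤ 1 := hwn.trans hρ1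
    set q : ℝ := Real.sqrt (1 - ‖w‖ ^ 2) with hq
    have hq0 : 0 ≤ q := Real.sqrt_nonneg _
    have hqsq : q ^ 2 = 1 - ‖w‖ ^ 2 := Real.sq_sqrt (by nlinarith)
    have hq1 : q ≤ 1 := by nlinarith
    have h1q : 1 - q ≤ ‖w‖ := by nlinarith [sq_nonneg (q - (1 - ‖w‖)), sq_nonneg (q + (1 - ‖w‖))]
    refine ⟨(w : V) + q • e, ⟨?_, ?_⟩, ?_⟩
    · rw [Metric.mem_closedBall, dist_eq_norm]
      have heq : (w : V) + q • e - e = (w : V) + (q - 1) • e := by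
        rw [sub_smul, one_smul]; abel
      rw [heq]
      have hsq := norm_coe_add_smul e he w (q - 1)
      have hρr : 2 * ρ ^ 2 = r ^ 2 := by
        rw [hρdef, div_pow, Real.sq_sqrt (by norm_num : (0:ℝ) ≤ 2)]
        field_simp
      have hb : ‖(w : V) + (q - 1) • e‖ ^ 2 ≤ r ^ 2 := by
        rw [hsq]
        have hA : (q - 1) ^ 2 ≤ ‖w‖ ^ 2 := by nlinarith
        have hB : ‖w‖ ^ 2 ≤ ρ ^ 2 := by nlinarith
        nlinarith
      exact le_of_pow_le_pow_left₀ two_ne_zero hr.le hb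
    · rw [mem_sphere_zero_iff_norm]
      have hsq := norm_coe_add_smul e he w q
      have h1 : ‖(w : V) + q • e‖ ^ 2 = 1 := by rw [hsq, hqsq]; ring
      rw [← Real.sqrt_sq (norm_nonneg ((w : V) + q • e)), h1, Real.sqrt_one]
    · rw [map_add]
      have h1 : E.orthogonalProjectionOnto (w : V) = w := Submodule.orthogonalProjectionOnto_mem_subspace_eq_self w
      have h2 : E.orthogonalProjectionOnto (q • e) = 0 := by
        rw [(E.orthogonalProjectionOnto).map_smul]
        have he' : e ∈ Eᗮ :=
          (ℝ ∙ e).le_orthogonal_orthogonal (Submodule.mem_span_singleton_self e)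
        rw [Submodule.orthogonalProjectionOnto_apply_of_mem_orthogonal he', smul_zero]
      rw [h1, h2, add_zero]
  have hP : LipschitzWith 1 (E.orthogonalProjectionOnto) := by
    refine (E.orthogonalProjectionOnto).lipschitz.weaken ?_
    rw [← NNReal.coe_le_coe]
    simpa using Submodule.orthogonalProjectionOnto_norm_le E
  have hscale : μH[(n : ℝ) - 1] (Metric.closedBall (0 : E) ρ) = ENNReal.ofReal (ρ ^ ((n : ℝ) - 1)) * κ := by
    have hsb : Metric.closedBall (0 : E) ρ = ρ • Metric.closedBall (0 : E) 1 := by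
      rw [_root_.smul_closedBall _ _ zero_le_one, smul_zero, Real.norm_of_nonneg hρ.le, mul_one]
    rw [hsb, Measure.hausdorffMeasure_smul₀ hd (ne_of_gt hρ), ENNReal.smul_def, smul_eq_mul, hκdef]
    congr 1
    rw [ENNReal.coe_rpow_of_nonneg _ hd]
    rw [show ((‖ρ‖₊ : ℝ≥0) : ℝ≥0∞) = ENNReal.ofReal ρ from Real.enorm_eq_ofReal hρ.le]
    exact ENNReal.ofReal_rpow_of_pos hρ
  calc ENNReal.ofReal (ρ ^ ((n : ℝ) - 1)) * κ
      = μH[(n : ℝ) - 1] (Metric.closedBall (0 : E) ρ) := hscale.symm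
    _ ≤ μH[(n : ℝ) - 1] ((E.orthogonalProjectionOnto) ''
        (Metric.closedBall e r ∩ Metric.sphere (0 : V) 1)) := measure_mono hsub
    _ ≤ (1 : ℝ≥0∞) ^ ((n : ℝ) - 1) *
        μH[(n : ℝ) - 1] (Metric.closedBall e r ∩ Metric.sphere (0 : V) 1) := by
        simpa using hP.hausdorffMeasure_image_le hd _
    _ = μH[(n : ℝ) - 1] (Metric.closedBall e r ∩ Metric.sphere (0 : V) 1) := by
        rw [ENNReal.one_rpow, one_mul]
set_option maxHeartbeats 2000000 in
lemma cap_finite (hn : 2 ≤ n) (e : V) (he : ‖e‖ = 1) {t : ℝ} (ht : 0 < t) (ht1 : t < 1) :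
    μH[(n : ℝ) - 1] {ξ : V | ξ ∈ Metric.sphere (0 : V) 1 ∧ t ≤ ⟪e, ξ⟫} < ⊤ := by
  have hne : e ≠ 0 := fun h => by simp [h] at he
  set E : Submodule ℝ V := (ℝ ∙ e)ᗮ with hE
  have hfr : ((finrank ℝ E) : ℝ) = (n : ℝ) - 1 := finrank_orth hn e hne
  have h2n : (2 : ℝ) ≤ (n : ℝ) := by exact_mod_cast hn
  have hd : (0 : ℝ) ≤ (n : ℝ) - 1 := by linarith
  set c : ℝ := Real.sqrt (1 - t ^ 2) with hc
  have hc0 : 0 ≤ c := Real.sqrt_nonneg _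
  have hcsq : c ^ 2 = 1 - t ^ 2 := Real.sq_sqrt (by nlinarith)
  have hc1 : c ≤ 1 := by nlinarith
  set K : Set E := Metric.closedBall (0 : E) c with hK
  set g : E → V := fun w => (w : V) + Real.sqrt (1 - ‖w‖ ^ 2) • e with hg
  -- the square root is bounded below by t on K
  have hqlow : ∀ w : E, w ∈ K → t ≤ Real.sqrt (1 - ‖w‖ ^ 2) := by
    intro w hw
    have hwn : ‖w‖ ≤ c := by simpa [hK, Metric.mem_closedBall, dist_zero_right] using hw
    have h1 : 1 - c ^ 2 ≤ 1 - ‖w‖ ^ 2 := by nlinarith [norm_nonneg w]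
    calc t = Real.sqrt (t ^ 2) := (Real.sqrt_sq ht.le).symm
      _ ≤ Real.sqrt (1 - ‖w‖ ^ 2) := Real.sqrt_le_sqrt (by nlinarith)
  have hglip : LipschitzOnWith (Real.toNNReal (1 + 1 / t)) g K := by
    apply LipschitzOnWith.of_dist_le_mul
    intro w hw v hv
    have hwn : ‖w‖ ≤ c := by simpa [hK, Metric.mem_closedBall, dist_zero_right] using hw
    have hvn : ‖v‖ ≤ c := by simpa [hK, Metric.mem_closedBall, dist_zero_right] using hv
    set qw := Real.sqrt (1 - ‖w‖ ^ 2)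
    set qv := Real.sqrt (1 - ‖v‖ ^ 2)
    have hqw : t ≤ qw := hqlow w hw
    have hqv : t ≤ qv := hqlow v hv
    have hWnn : (0:ℝ) ≤ 1 - ‖w‖ ^ 2 := by nlinarith [norm_nonneg w]
    have hVnn : (0:ℝ) ≤ 1 - ‖v‖ ^ 2 := by nlinarith [norm_nonneg v]
    have hsq : |qw - qv| ≤ |(1 - ‖w‖ ^ 2) - (1 - ‖v‖ ^ 2)| / (2 * t) :=
      sqrt_abs_sub_le ht hWnn hVnn hqw hqv
    have hnorms : |(1 - ‖w‖ ^ 2) - (1 - ‖v‖ ^ 2)| ≤ 2 * dist w v := by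
      have h1 : |(1 - ‖w‖ ^ 2) - (1 - ‖v‖ ^ 2)| = |‖v‖ - ‖w‖| * (‖v‖ + ‖w‖) := by
        rw [← abs_of_nonneg (show (0:ℝ) ≤ ‖v‖ + ‖w‖ by positivity), ← abs_mul]
        congr 1; ring
      have h2 : |‖v‖ - ‖w‖| ≤ dist w v := by
        rw [dist_comm, dist_eq_norm]
        exact abs_norm_sub_norm_le v w
      have h3 : ‖v‖ + ‖w‖ ≤ 2 := by linarith [hc1]
      calc |(1 - ‖w‖ ^ 2) - (1 - ‖v‖ ^ 2)| = |‖v‖ - ‖w‖| * (‖v‖ + ‖w‖) := h1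
        _ ≤ dist w v * 2 := mul_le_mul h2 h3 (by positivity) dist_nonneg
        _ = 2 * dist w v := by ring
    have hq2 : |qw - qv| ≤ dist w v / t := by
      calc |qw - qv| ≤ 2 * dist w v / (2 * t) := by
            refine hsq.trans ?_
            gcongr
          _ = dist w v / t := by field_simp; try ring
    have hdist : dist (g w) (g v) ≤ dist w v + |qw - qv| := by
      have heq : g w - g v = ((w : V) - (v : V)) + (qw - qv) • e := by
        simp only [hg]
        rw [sub_smul]
        abel
      rw [dist_eq_norm, heq]
      calc ‖((w : V) - (v : V)) + (qw - qv) • e‖ ≤ ‖(w : V) - (v : V)‖ + ‖(qw - qv) • e‖ :=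
            norm_add_le _ _
        _ = dist w v + |qw - qv| := by
            rw [norm_smul, he, mul_one, Real.norm_eq_abs, dist_eq_norm]
            rfl
    calc dist (g w) (g v) ≤ dist w v + dist w v / t := by linarith
      _ = (1 + 1 / t) * dist w v := by field_simp; try ring
      _ = (Real.toNNReal (1 + 1 / t) : ℝ) * dist w v := by
          rw [Real.coe_toNNReal _ (by positivity)]
  have hsub : {ξ : V | ξ ∈ Metric.sphere (0 : V) 1 ∧ t ≤ ⟪e, ξ⟫} ⊆ g '' K := by
    rintro ξ ⟨hξs, hξt⟩
    have hξn : ‖ξ‖ = 1 := by simpa using hξs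
    set a : ℝ := ⟪e, ξ⟫ with ha
    have ha0 : 0 < a := ht.trans_le hξt
    have ha1 : a ≤ 1 := by
      calc a ≤ ‖e‖ * ‖ξ‖ := real_inner_le_norm e ξ
        _ = 1 := by rw [he, hξn, one_mul]
    have hwmem : ξ - a • e ∈ E := by
      rw [hE]
      apply Submodule.mem_orthogonal_singleton_iff_inner_right.2
      rw [inner_sub_right, real_inner_smul_right, real_inner_self_eq_norm_sq, he]
      simp [ha]
    set w : E := ⟨ξ - a • e, hwmem⟩ with hwdef
    have hwn : ‖w‖ ^ 2 = 1 - a ^ 2 := by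
      have h1 : ‖ξ - a • e‖ ^ 2 = 1 - a ^ 2 := by
        rw [norm_sub_sq_real, real_inner_smul_right, norm_smul, he, hξn, real_inner_comm]
        rw [← ha]
        simp [sq_abs]
        ring
      rw [Submodule.coe_norm]
      exact h1
    have hwK : w ∈ K := by
      have h2 : ‖w‖ ≤ c := by
        apply le_of_pow_le_pow_left₀ two_ne_zero hc0
        rw [hwn, hcsq]
        nlinarith
      simpa [hK, Metric.mem_closedBall, dist_zero_right] using h2
    refine ⟨w, hwK, ?_⟩
    have hsq : Real.sqrt (1 - ‖w‖ ^ 2) = a := by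
      rw [hwn, show 1 - (1 - a ^ 2) = a ^ 2 by ring, Real.sqrt_sq ha0.le]
    simp only [hg, hsq]
    show ξ - a • e + a • e = ξ
    abel
  calc μH[(n : ℝ) - 1] {ξ : V | ξ ∈ Metric.sphere (0 : V) 1 ∧ t ≤ ⟪e, ξ⟫}
      ≤ μH[(n : ℝ) - 1] (g '' K) := measure_mono hsub
    _ ≤ (Real.toNNReal (1 + 1 / t) : ℝ≥0∞) ^ ((n : ℝ) - 1) * μH[(n : ℝ) - 1] K :=
        hglip.hausdorffMeasure_image_le hd
    _ < ⊤ := by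
        apply ENNReal.mul_lt_top
        · exact ENNReal.rpow_lt_top_of_nonneg hd ENNReal.coe_ne_top
        · rw [hK, ← hfr]
          exact (isCompact_closedBall (0 : E) c).measure_lt_top
set_option maxHeartbeats 1000000 in
lemma sphere_hausdorff_lt_top (hn : 2 ≤ n) :
    μH[(n : ℝ) - 1] (Metric.sphere (0 : V) 1) < ⊤ := by
  have hn0 : (0 : ℝ) < (n : ℝ) := by positivity
  set t : ℝ := Real.sqrt ((n : ℝ)⁻¹) with htdef
  have htsq : t ^ 2 = (n : ℝ)⁻¹ := Real.sq_sqrt (by positivity)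
  have ht : 0 < t := Real.sqrt_pos.2 (by positivity)
  have ht1 : t < 1 := by
    have h1 : (n : ℝ)⁻¹ < 1 := by
      rw [inv_lt_one_iff₀]
      right
      exact_mod_cast by omega
    nlinarith
  set e : Fin n × Bool → V := fun p => (if p.2 then (1 : ℝ) else -1) • EuclideanSpace.single p.1 1
    with hedef
  have he : ∀ p, ‖e p‖ = 1 := by
    intro p
    rw [hedef]
    simp only []
    rw [norm_smul, EuclideanSpace.norm_single]
    cases p.2 <;> simp
  have hcover : Metric.sphere (0 : V) 1 ⊆
      ⋃ p : Fin n × Bool, {ξ : V | ξ ∈ Metric.sphere (0 : V) 1 ∧ t ≤ ⟪e p, ξ⟫} := by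
    intro ξ hξ
    have hξn : ‖ξ‖ = 1 := by simpa using hξ
    have hsum : ∑ i, ξ i ^ 2 = 1 := by
      have h1 := EuclideanSpace.norm_eq ξ
      rw [hξn] at h1
      have h2 := congrArg (· ^ 2) h1
      simp only [one_pow] at h2
      rw [Real.sq_sqrt (by positivity)] at h2
      rw [show (∑ i, ξ i ^ 2) = ∑ i, ‖ξ i‖ ^ 2 by
        apply Finset.sum_congr rfl; intro i _; rw [Real.norm_eq_abs, sq_abs]]
      exact h2.symm
    have hex : ∃ i, (n : ℝ)⁻¹ ≤ ξ i ^ 2 := by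
      by_contra hcon
      push_neg at hcon
      have h1 : ∑ i, ξ i ^ 2 < ∑ _i : Fin n, (n : ℝ)⁻¹ :=
        Finset.sum_lt_sum_of_nonempty ⟨⟨0, by omega⟩, Finset.mem_univ _⟩ (fun i _ => hcon i)
      rw [Finset.sum_const, Finset.card_univ, Fintype.card_fin, hsum, nsmul_eq_mul,
        mul_inv_cancel₀ (by positivity)] at h1
      exact lt_irrefl _ h1
    obtain ⟨i, hi⟩ := hex
    have habs : t ≤ |ξ i| := by
      rw [← Real.sqrt_sq_eq_abs, htdef]
      exact Real.sqrt_le_sqrt hi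
    have hinner : ∀ b : Bool, ⟪e (i, b), ξ⟫ = (if b then (1:ℝ) else -1) * ξ i := by
      intro b
      rw [hedef]
      simp only []
      rw [real_inner_smul_left, EuclideanSpace.inner_single_left]
      simp
    rcases le_or_gt 0 (ξ i) with hpos | hneg
    · refine Set.mem_iUnion.2 ⟨(i, true), hξ, ?_⟩
      rw [hinner true]
      simpa [abs_of_nonneg hpos] using habs
    · refine Set.mem_iUnion.2 ⟨(i, false), hξ, ?_⟩
      rw [hinner false]
      rw [show (if false = true then (1:ℝ) else -1) = -1 from rfl, neg_one_mul]
      calc t ≤ |ξ i| := habs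
        _ = -ξ i := abs_of_neg hneg
        _ ≤ -ξ i := le_rfl
  calc μH[(n : ℝ) - 1] (Metric.sphere (0 : V) 1)
      ≤ ∑ p : Fin n × Bool, μH[(n : ℝ) - 1] {ξ : V | ξ ∈ Metric.sphere (0 : V) 1 ∧ t ≤ ⟪e p, ξ⟫} :=
        (measure_mono hcover).trans (measure_iUnion_fintype_le _ _)
    _ < ⊤ := ENNReal.sum_lt_top.2 (fun p _ => cap_finite hn (e p) (he p) ht ht1)
end EnergyAux

end EnergyAuxGeom

section EnergyAuxPsi

open Metric Set Module
open scoped Pointwise NNReal RealInnerProductSpace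

namespace EnergyAux

variable {n : ℕ} {Ω : Set (EuclideanSpace ℝ (Fin n))} {u : EuclideanSpace ℝ (Fin n) → ℝ}

local notation "V" => EuclideanSpace ℝ (Fin n)

lemma psi_le_add (hΩ : IsOpen Ω) (hu : ContDiffOn ℝ 1 u Ω) (ξ η : V) :
    PsiOn Ω u ξ ≤ PsiOn Ω u η +
      (∫⁻ x in Ω, ENNReal.ofReal ‖fderivWithin ℝ u Ω x‖) * ENNReal.ofReal ‖ξ - η‖ := by
  have hDu : ContinuousOn (fun x => fderivWithin ℝ u Ω x) Ω :=
    hu.continuousOn_fderivWithin hΩ.uniqueDiffOn le_rfl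
  have hmeas : AEMeasurable (fun x => ENNReal.ofReal |fderivWithin ℝ u Ω x η|)
      (volume.restrict Ω) := by
    apply Continuous.comp_continuousOn (g := ENNReal.ofReal) ENNReal.continuous_ofReal
      ((hDu.clm_apply continuousOn_const).abs) |>.aemeasurable hΩ.measurableSet
  calc PsiOn Ω u ξ
      ≤ ∫⁻ x in Ω, (ENNReal.ofReal |fderivWithin ℝ u Ω x η| +
          ENNReal.ofReal ‖fderivWithin ℝ u Ω x‖ * ENNReal.ofReal ‖ξ - η‖) := by
        apply setLIntegral_mono' hΩ.measurableSet
        intro x _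
        have h1 : |fderivWithin ℝ u Ω x ξ| ≤ |fderivWithin ℝ u Ω x η| +
            ‖fderivWithin ℝ u Ω x‖ * ‖ξ - η‖ := by
          have heq : fderivWithin ℝ u Ω x ξ =
              fderivWithin ℝ u Ω x η + fderivWithin ℝ u Ω x (ξ - η) := by
            rw [map_sub]; ring
          rw [heq]
          refine (abs_add_le _ _).trans ?_
          gcongr
          calc |fderivWithin ℝ u Ω x (ξ - η)| = ‖fderivWithin ℝ u Ω x (ξ - η)‖ :=
              (Real.norm_eq_abs _).symm
            _ ≤ ‖fderivWithin ℝ u Ω x‖ * ‖ξ - η‖ := (fderivWithin ℝ u Ω x).le_opNorm _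
        calc ENNReal.ofReal |fderivWithin ℝ u Ω x ξ|
            ≤ ENNReal.ofReal (|fderivWithin ℝ u Ω x η| + ‖fderivWithin ℝ u Ω x‖ * ‖ξ - η‖) :=
              ENNReal.ofReal_le_ofReal h1
          _ = ENNReal.ofReal |fderivWithin ℝ u Ω x η| +
              ENNReal.ofReal (‖fderivWithin ℝ u Ω x‖ * ‖ξ - η‖) :=
              ENNReal.ofReal_add (abs_nonneg _) (by positivity)
          _ = ENNReal.ofReal |fderivWithin ℝ u Ω x η| +
              ENNReal.ofReal ‖fderivWithin ℝ u Ω x‖ * ENNReal.ofReal ‖ξ - η‖ := by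
              rw [ENNReal.ofReal_mul (norm_nonneg _)]
    _ = PsiOn Ω u η + ∫⁻ x in Ω, ENNReal.ofReal ‖fderivWithin ℝ u Ω x‖ * ENNReal.ofReal ‖ξ - η‖ :=
        lintegral_add_left' hmeas _
    _ = PsiOn Ω u η +
        (∫⁻ x in Ω, ENNReal.ofReal ‖fderivWithin ℝ u Ω x‖) * ENNReal.ofReal ‖ξ - η‖ := by
        rw [lintegral_mul_const' _ _ ENNReal.ofReal_ne_top]

lemma psi_zero (hΩ : IsOpen Ω) {η : V} (h : ∀ x ∈ Ω, fderivWithin ℝ u Ω x η = 0) :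
    PsiOn Ω u η = 0 := by
  rw [PsiOn, setLIntegral_congr_fun hΩ.measurableSet
    ((fun x hx => by simp [h x hx]) :
      EqOn (fun x => ENNReal.ofReal |fderivWithin ℝ u Ω x η|) (fun _ => 0) Ω), lintegral_zero]

lemma psi_pos (hΩ : IsOpen Ω) (hu : ContDiffOn ℝ 1 u Ω) (ξ : V)
    (h : ∃ x ∈ Ω, fderivWithin ℝ u Ω x ξ ≠ 0) : PsiOn Ω u ξ ≠ 0 := by
  obtain ⟨x₀, hx₀, hne⟩ := h
  have hDu : ContinuousOn (fun x => fderivWithin ℝ u Ω x) Ω :=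
    hu.continuousOn_fderivWithin hΩ.uniqueDiffOn le_rfl
  have hcont : ContinuousAt (fun x => |fderivWithin ℝ u Ω x ξ|) x₀ :=
    ((hDu.clm_apply continuousOn_const).abs).continuousAt (hΩ.mem_nhds hx₀)
  set ε : ℝ := |fderivWithin ℝ u Ω x₀ ξ| with hεdef
  have hε : 0 < ε := abs_pos.2 hne
  have hev : ∀ᶠ x in nhds x₀, ε / 2 < |fderivWithin ℝ u Ω x ξ| :=
    hcont.eventually (eventually_gt_nhds (half_lt_self hε))
  obtain ⟨r, hr, hball⟩ := Metric.eventually_nhds_iff_ball.1 (hev.and (hΩ.eventually_mem hx₀))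
  have hlow : ENNReal.ofReal (ε / 2) * volume (Metric.ball x₀ r) ≤ PsiOn Ω u ξ := by
    calc ENNReal.ofReal (ε / 2) * volume (Metric.ball x₀ r)
        = ∫⁻ _x in Metric.ball x₀ r, ENNReal.ofReal (ε / 2) := (setLIntegral_const _ _).symm
      _ ≤ ∫⁻ x in Metric.ball x₀ r, ENNReal.ofReal |fderivWithin ℝ u Ω x ξ| :=
          setLIntegral_mono' measurableSet_ball
            (fun x hx => ENNReal.ofReal_le_ofReal (le_of_lt (hball x hx).1))
      _ ≤ PsiOn Ω u ξ :=
          lintegral_mono' (Measure.restrict_mono (fun x hx => (hball x hx).2) le_rfl) le_rfl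
  intro h0
  rw [h0] at hlow
  have hpos : 0 < ENNReal.ofReal (ε / 2) * volume (Metric.ball x₀ r) :=
    ENNReal.mul_pos (ENNReal.ofReal_pos.2 (by linarith)).ne' (measure_ball_pos _ _ hr).ne'
  exact absurd (hpos.trans_le hlow) (lt_irrefl 0)

end EnergyAux

end EnergyAuxPsi

open EnergyAux in
set_option maxHeartbeats 2000000 in
/-- for a C¹ function u on an open set Ω with ∫_Ω |∇u| dx < ∞, the affine
energy E_Ω(u) vanishes iff ∇u·ξ̃ ≡ 0 on Ω for some unit vector ξ̃. -/
theorem energyOn_eq_zero_iff {n : ℕ} (hn : 2 ≤ n)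
    (Ω : Set (EuclideanSpace ℝ (Fin n))) (hΩ : IsOpen Ω)
    (u : EuclideanSpace ℝ (Fin n) → ℝ) (hu : ContDiffOn ℝ 1 u Ω)
    (hgrad : ∫⁻ x in Ω, ENNReal.ofReal ‖fderivWithin ℝ u Ω x‖ < ⊤) :
    energyOn Ω u = 0 ↔
      ∃ ξ ∈ Metric.sphere (0 : EuclideanSpace ℝ (Fin n)) 1,
        ∀ x ∈ Ω, fderivWithin ℝ u Ω x ξ = 0 := by
  classical
  set M : ℝ≥0∞ := ∫⁻ x in Ω, ENNReal.ofReal ‖fderivWithin ℝ u Ω x‖ with hMdef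
  have hMne : M ≠ ⊤ := hgrad.ne
  have hnR : (2 : ℝ) ≤ (n : ℝ) := by exact_mod_cast hn
  have hn0 : (0 : ℝ) < (n : ℝ) := by linarith
  have hω : ∀ k : ℕ, 0 < unitBallVol k := fun k =>
    ENNReal.toReal_pos (Metric.measure_ball_pos volume _ one_pos).ne' measure_ball_lt_top.ne
  have hα : 0 < alphaConst n := by
    unfold alphaConst
    exact mul_pos (inv_pos.2 (mul_pos two_pos (hω _)))
      (Real.rpow_pos_of_pos (mul_pos hn0 (hω n)) _)
  have hIiff : energyOn Ω u = 0 ↔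
      (∫⁻ ξ, (PsiOn Ω u ξ) ^ (-(n : ℝ)) ∂(sphereMeasure n)) = ⊤ := by
    unfold energyOn
    have hexp : -(1 / (n : ℝ)) < 0 := by
      have : (0 : ℝ) < 1 / n := by positivity
      linarith
    constructor
    · intro h
      rcases mul_eq_zero.1 h with h1 | h1
      · exact absurd h1 (by simp only [ENNReal.ofReal_eq_zero, not_le]; linarith)
      · rcases ENNReal.rpow_eq_zero_iff.1 h1 with ⟨_, h3⟩ | ⟨h2, _⟩
        · linarith
        · exact h2
    · intro h
      rw [h, ENNReal.top_rpow_of_neg hexp, mul_zero]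
  rw [hIiff]
  constructor
  · -- integral infinite implies degenerate direction
    intro hI
    by_contra hcon
    push_neg at hcon
    have hψtop : ∀ ξ : EuclideanSpace ℝ (Fin n), PsiOn Ω u ξ ≠ ⊤ := by
      intro ξ
      have h0 : PsiOn Ω u (0 : EuclideanSpace ℝ (Fin n)) = 0 := psi_zero hΩ (fun x _ => by simp)
      have hle := psi_le_add hΩ hu ξ 0
      rw [h0, zero_add, sub_zero] at hle
      exact (hle.trans_lt (ENNReal.mul_lt_top hgrad ENNReal.ofReal_lt_top)).ne
    have hψne : ∀ ξ ∈ Metric.sphere (0 : EuclideanSpace ℝ (Fin n)) 1, PsiOn Ω u ξ ≠ 0 := fun ξ hξ =>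
      psi_pos hΩ hu ξ (hcon ξ hξ)
    set F : EuclideanSpace ℝ (Fin n) → ℝ := fun ξ => (PsiOn Ω u ξ).toReal with hFdef
    have hkey : ∀ a b : EuclideanSpace ℝ (Fin n), F a - F b ≤ M.toReal * dist a b := by
      intro a b
      have h := psi_le_add hΩ hu a b
      have hfin2 : M * ENNReal.ofReal ‖a - b‖ ≠ ⊤ :=
        (ENNReal.mul_lt_top hgrad ENNReal.ofReal_lt_top).ne
      have h2 : F a ≤ F b + M.toReal * ‖a - b‖ := by
        calc F a ≤ ((PsiOn Ω u b) + M * ENNReal.ofReal ‖a - b‖).toReal :=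
            ENNReal.toReal_mono (ENNReal.add_ne_top.2 ⟨hψtop b, hfin2⟩) h
          _ = F b + M.toReal * ‖a - b‖ := by
            rw [ENNReal.toReal_add (hψtop b) hfin2, ENNReal.toReal_mul,
              ENNReal.toReal_ofReal (norm_nonneg _)]
      rw [dist_eq_norm]
      linarith
    have hlip : LipschitzWith M.toNNReal F := by
      apply LipschitzWith.of_dist_le_mul
      intro a b
      show dist (F a) (F b) ≤ M.toReal * dist a b
      rw [Real.dist_eq, abs_sub_le_iff]
      refine ⟨hkey a b, ?_⟩
      rw [dist_comm]
      exact hkey b a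
    have hsne : (Metric.sphere (0 : EuclideanSpace ℝ (Fin n)) 1).Nonempty := by
      refine ⟨EuclideanSpace.single (⟨0, by omega⟩ : Fin n) (1 : ℝ), ?_⟩
      rw [mem_sphere_zero_iff_norm, EuclideanSpace.norm_single]
      norm_num
    obtain ⟨ξ₀, hξ₀, hminOn⟩ := (isCompact_sphere (0 : EuclideanSpace ℝ (Fin n)) 1).exists_isMinOn
      hsne hlip.continuous.continuousOn
    have hmin : ∀ ξ ∈ Metric.sphere (0 : EuclideanSpace ℝ (Fin n)) 1, F ξ₀ ≤ F ξ :=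
      fun ξ hξ => (isMinOn_iff.1 hminOn) ξ hξ
    have hc0 : 0 < F ξ₀ := ENNReal.toReal_pos (hψne ξ₀ hξ₀) (hψtop ξ₀)
    have hbound : ∀ ξ ∈ Metric.sphere (0 : EuclideanSpace ℝ (Fin n)) 1,
        (PsiOn Ω u ξ) ^ (-(n : ℝ)) ≤ ENNReal.ofReal (F ξ₀ ^ (-(n : ℝ))) := by
      intro ξ hξ
      have h1 : ENNReal.ofReal (F ξ₀) ≤ PsiOn Ω u ξ := by
        rw [← ENNReal.ofReal_toReal (hψtop ξ)]
        exact ENNReal.ofReal_le_ofReal (hmin ξ hξ)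
      rw [← ENNReal.ofReal_rpow_of_pos hc0]
      exact rpow_neg_anti (by positivity) h1
    have hfin : (∫⁻ ξ, (PsiOn Ω u ξ) ^ (-(n : ℝ)) ∂(sphereMeasure n)) ≤
        ENNReal.ofReal (F ξ₀ ^ (-(n : ℝ))) * μH[(n : ℝ) - 1] (Metric.sphere (0 : EuclideanSpace ℝ (Fin n)) 1) := by
      calc (∫⁻ ξ, (PsiOn Ω u ξ) ^ (-(n : ℝ)) ∂(sphereMeasure n))
          ≤ ∫⁻ _ξ in Metric.sphere (0 : EuclideanSpace ℝ (Fin n)) 1, ENNReal.ofReal (F ξ₀ ^ (-(n : ℝ)))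
              ∂(μH[(n : ℝ) - 1]) :=
            setLIntegral_mono' Metric.isClosed_sphere.measurableSet hbound
        _ = ENNReal.ofReal (F ξ₀ ^ (-(n : ℝ))) * μH[(n : ℝ) - 1] (Metric.sphere (0 : EuclideanSpace ℝ (Fin n)) 1) :=
            setLIntegral_const _ _
    rw [hI] at hfin
    exact absurd hfin
      (not_le.2 (ENNReal.mul_lt_top ENNReal.ofReal_lt_top (sphere_hausdorff_lt_top hn)))
  · -- degenerate direction implies integral infinite
    rintro ⟨ξt, hξt, hzero⟩
    have hψz : PsiOn Ω u ξt = 0 := psi_zero hΩ hzero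
    have hψle : ∀ ξ : EuclideanSpace ℝ (Fin n), PsiOn Ω u ξ ≤ M * ENNReal.ofReal ‖ξ - ξt‖ := by
      intro ξ
      have h := psi_le_add hΩ hu ξ ξt
      rwa [hψz, zero_add] at h
    have hξtn : ‖ξt‖ = 1 := by simpa using hξt
    obtain ⟨κ, hκ, hcap⟩ := cap_lower_bound hn ξt hξtn
    obtain ⟨κ', hκ'0, hκ'le⟩ : ∃ κ' : ℝ, 0 < κ' ∧ ENNReal.ofReal κ' ≤ κ := by
      rcases eq_or_ne κ ⊤ with hk | hk
      · exact ⟨1, one_pos, by rw [hk]; exact le_top⟩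
      · exact ⟨κ.toReal, ENNReal.toReal_pos hκ.ne' hk, by rw [ENNReal.ofReal_toReal hk]⟩
    set M' : ℝ := M.toReal + 1 with hM'def
    have hMtR : (0 : ℝ) ≤ M.toReal := ENNReal.toReal_nonneg
    have hM' : 0 < M' := by rw [hM'def]; linarith
    have hMM' : M ≤ ENNReal.ofReal M' := by
      rw [← ENNReal.ofReal_toReal hMne]
      exact ENNReal.ofReal_le_ofReal (by rw [hM'def]; linarith)
    have hd : (0 : ℝ) ≤ (n : ℝ) - 1 := by linarith
    set c0 : ℝ := M' ^ (-(n : ℝ)) * (Real.sqrt 2) ^ (-((n : ℝ) - 1)) * κ' with hc0def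
    have hc0pos : 0 < c0 :=
      mul_pos (mul_pos (Real.rpow_pos_of_pos hM' _)
        (Real.rpow_pos_of_pos (Real.sqrt_pos.2 two_pos) _)) hκ'0
    have hlow : ∀ r : ℝ, 0 < r → r ≤ 1 →
        ENNReal.ofReal (c0 / r) ≤ ∫⁻ ξ, (PsiOn Ω u ξ) ^ (-(n : ℝ)) ∂(sphereMeasure n) := by
      intro r hr hr1
      have hub : ∀ ξ ∈ Metric.closedBall ξt r,
          ENNReal.ofReal ((M' * r) ^ (-(n : ℝ))) ≤ (PsiOn Ω u ξ) ^ (-(n : ℝ)) := by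
        intro ξ hξ
        have h1 : PsiOn Ω u ξ ≤ ENNReal.ofReal (M' * r) := by
          calc PsiOn Ω u ξ ≤ M * ENNReal.ofReal ‖ξ - ξt‖ := hψle ξ
            _ ≤ ENNReal.ofReal M' * ENNReal.ofReal r := by
                apply mul_le_mul' hMM'
                apply ENNReal.ofReal_le_ofReal
                rw [← dist_eq_norm]
                exact Metric.mem_closedBall.1 hξ
            _ = ENNReal.ofReal (M' * r) := (ENNReal.ofReal_mul hM'.le).symm
        rw [← ENNReal.ofReal_rpow_of_pos (by positivity)]
        exact rpow_neg_anti (by positivity) h1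
      have hkey2 : (M' * r) ^ (-(n : ℝ)) * ((r / Real.sqrt 2) ^ ((n : ℝ) - 1) * κ') = c0 / r := by
        have hr' : r ^ (-(n : ℝ)) * r ^ ((n : ℝ) - 1) = r⁻¹ := by
          rw [← Real.rpow_add hr, show -(n : ℝ) + ((n : ℝ) - 1) = -1 by ring, Real.rpow_neg_one]
        rw [Real.mul_rpow hM'.le hr.le, Real.div_rpow hr.le (Real.sqrt_nonneg _)]
        calc M' ^ (-(n : ℝ)) * r ^ (-(n : ℝ)) *
              (r ^ ((n : ℝ) - 1) / (Real.sqrt 2) ^ ((n : ℝ) - 1) * κ')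
            = (M' ^ (-(n : ℝ)) * ((Real.sqrt 2) ^ ((n : ℝ) - 1))⁻¹ * κ') *
              (r ^ (-(n : ℝ)) * r ^ ((n : ℝ) - 1)) := by ring
          _ = (M' ^ (-(n : ℝ)) * ((Real.sqrt 2) ^ ((n : ℝ) - 1))⁻¹ * κ') * r⁻¹ := by rw [hr']
          _ = c0 / r := by
              rw [hc0def, Real.rpow_neg (Real.sqrt_nonneg _)]
              ring
      calc ENNReal.ofReal (c0 / r)
          = ENNReal.ofReal ((M' * r) ^ (-(n : ℝ)) * ((r / Real.sqrt 2) ^ ((n : ℝ) - 1) * κ')) := by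
            rw [hkey2]
        _ = ENNReal.ofReal ((M' * r) ^ (-(n : ℝ))) *
            ENNReal.ofReal ((r / Real.sqrt 2) ^ ((n : ℝ) - 1) * κ') :=
            ENNReal.ofReal_mul (by positivity)
        _ = ENNReal.ofReal ((M' * r) ^ (-(n : ℝ))) *
            (ENNReal.ofReal ((r / Real.sqrt 2) ^ ((n : ℝ) - 1)) * ENNReal.ofReal κ') := by
            rw [ENNReal.ofReal_mul (by positivity)]
        _ ≤ ENNReal.ofReal ((M' * r) ^ (-(n : ℝ))) *
            (ENNReal.ofReal ((r / Real.sqrt 2) ^ ((n : ℝ) - 1)) * κ) := by gcongr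
        _ ≤ ENNReal.ofReal ((M' * r) ^ (-(n : ℝ))) *
            μH[(n : ℝ) - 1] (Metric.closedBall ξt r ∩ Metric.sphere (0 : EuclideanSpace ℝ (Fin n)) 1) := by
            gcongr
            exact hcap r hr hr1
        _ = ∫⁻ _ξ in Metric.closedBall ξt r, ENNReal.ofReal ((M' * r) ^ (-(n : ℝ)))
              ∂(μH[(n : ℝ) - 1].restrict (Metric.sphere (0 : EuclideanSpace ℝ (Fin n)) 1)) := by
            rw [setLIntegral_const, Measure.restrict_apply measurableSet_closedBall]
        _ ≤ ∫⁻ ξ in Metric.closedBall ξt r, (PsiOn Ω u ξ) ^ (-(n : ℝ))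
              ∂(μH[(n : ℝ) - 1].restrict (Metric.sphere (0 : EuclideanSpace ℝ (Fin n)) 1)) :=
            setLIntegral_mono' measurableSet_closedBall (fun ξ hξ => hub ξ hξ)
        _ ≤ ∫⁻ ξ, (PsiOn Ω u ξ) ^ (-(n : ℝ))
              ∂(μH[(n : ℝ) - 1].restrict (Metric.sphere (0 : EuclideanSpace ℝ (Fin n)) 1)) :=
            setLIntegral_le_lintegral _ _
        _ = ∫⁻ ξ, (PsiOn Ω u ξ) ^ (-(n : ℝ)) ∂(sphereMeasure n) := rfl
    by_contra hne2
    set B : ℝ := (∫⁻ ξ, (PsiOn Ω u ξ) ^ (-(n : ℝ)) ∂(sphereMeasure n)).toReal with hBdef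
    have hB0 : 0 ≤ B := ENNReal.toReal_nonneg
    set r : ℝ := min 1 (c0 / (B + 1)) with hrdef
    have hr0 : 0 < r := lt_min one_pos (by positivity)
    have hr1 : r ≤ 1 := min_le_left _ _
    have h1 := hlow r hr0 hr1
    have h2 : c0 / r ≤ B := (ENNReal.ofReal_le_iff_le_toReal hne2).1 h1
    have h3 : B + 1 ≤ c0 / r := by
      rw [le_div_iff₀ hr0]
      calc (B + 1) * r ≤ (B + 1) * (c0 / (B + 1)) :=
            mul_le_mul_of_nonneg_left (min_le_right _ _) (by linarith)
        _ = c0 := by field_simp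
    linarith
end
end

section
/- Let n ≥ 2, let μ₁, μ₂ be finite Borel measures on ℝⁿ and let σ₁, σ₂ : ℝⁿ → ℝⁿ be Borel measurable with |σ₁(x)| = 1 for μ₁-almost every x and |σ₂(x)| = 1 for μ₂-almost every x. Define the combined energy E_c = α_n (∫_{S^{n−1}} (Ψ_ξ(μ₁,σ₁) + Ψ_ξ(μ₂,σ₂))^{−n} dξ)^{−1/n} (with the same conventions as for the affine energy). Then E_c ≥ E(μ₁,σ₁) + E(μ₂,σ₂). -/
open MeasureTheory ENNReal

noncomputable section

lemma aux_rpow_neg_le {x y : ℝ≥0∞} {c : ℝ} (hc : 0 ≤ c) (h : x ≤ y) :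
    y ^ (-c) ≤ x ^ (-c) := by
  rw [ENNReal.rpow_neg, ENNReal.rpow_neg]
  exact ENNReal.inv_le_inv.2 (ENNReal.rpow_le_rpow h hc)

lemma aux_real_convex (n : ℕ) {l r s : ℝ} (hl : 0 < l) (hl1 : l < 1) (hr : 0 < r) (hs : 0 < s) :
    (r + s) ^ (-(n:ℤ)) ≤ l ^ (n+1) * r ^ (-(n:ℤ)) + (1-l) ^ (n+1) * s ^ (-(n:ℤ)) := by
  have h1l : (0:ℝ) < 1 - l := by linarith
  have h := (convexOn_zpow (-(n:ℤ))).2 (Set.mem_Ioi.2 (div_pos hr hl))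
    (Set.mem_Ioi.2 (div_pos hs h1l)) hl.le h1l.le (by ring)
  simp only [smul_eq_mul] at h
  have e1 : l * (r / l) = r := by field_simp
  have e2 : (1-l) * (s / (1-l)) = s := by field_simp
  rw [e1, e2] at h
  refine h.trans_eq ?_
  rw [div_zpow, div_zpow, zpow_neg, zpow_neg, zpow_natCast, zpow_natCast]
  simp only [zpow_neg, zpow_natCast]
  have h1l' : (1 - l) ≠ 0 := h1l.ne'
  field_simp
  ring

lemma aux_pointwise (n : ℕ) (hn : 1 ≤ n) {l : ℝ} (hl : 0 < l) (hl1 : l < 1) (u v : ℝ≥0∞) :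
    (u + v) ^ (-(n:ℝ)) ≤
      ENNReal.ofReal (l ^ (n+1)) * u ^ (-(n:ℝ)) +
        ENNReal.ofReal ((1-l) ^ (n+1)) * v ^ (-(n:ℝ)) := by
  have hnneg : -(n:ℝ) < 0 := by
    have : (0:ℝ) < n := by exact_mod_cast hn.trans_lt' zero_lt_one
    linarith
  have h1l : (0:ℝ) < 1 - l := by linarith
  rcases eq_or_ne u 0 with hu0 | hu0
  · have : ENNReal.ofReal (l ^ (n+1)) * u ^ (-(n:ℝ)) = ⊤ := by
      rw [hu0, ENNReal.zero_rpow_of_neg hnneg, ENNReal.mul_top]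
      simp [ENNReal.ofReal_eq_zero, not_le, pow_pos hl]
    rw [this]
    simp
  rcases eq_or_ne v 0 with hv0 | hv0
  · have : ENNReal.ofReal ((1-l) ^ (n+1)) * v ^ (-(n:ℝ)) = ⊤ := by
      rw [hv0, ENNReal.zero_rpow_of_neg hnneg, ENNReal.mul_top]
      simp [ENNReal.ofReal_eq_zero, not_le, pow_pos h1l]
    rw [this]
    simp
  rcases eq_or_ne u ⊤ with hut | hut
  · rw [hut, top_add, ENNReal.top_rpow_of_neg hnneg]
    exact zero_le'
  rcases eq_or_ne v ⊤ with hvt | hvt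
  · rw [hvt, add_top, ENNReal.top_rpow_of_neg hnneg]
    exact zero_le'
  -- both finite nonzero
  set r := u.toReal with hr_def
  set s := v.toReal with hs_def
  have hr : 0 < r := ENNReal.toReal_pos hu0 hut
  have hs : 0 < s := ENNReal.toReal_pos hv0 hvt
  have hu : u = ENNReal.ofReal r := (ENNReal.ofReal_toReal hut).symm
  have hv : v = ENNReal.ofReal s := (ENNReal.ofReal_toReal hvt).symm
  have hcast : (-(n:ℝ)) = ((-(n:ℤ) : ℤ) : ℝ) := by push_cast; ring
  have key : ∀ {x : ℝ}, 0 < x → (ENNReal.ofReal x) ^ (-(n:ℝ)) =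
      ENNReal.ofReal (x ^ (-(n:ℤ))) := by
    intro x hx
    rw [ENNReal.ofReal_rpow_of_pos hx, hcast, Real.rpow_intCast]
  rw [hu, hv, ← ENNReal.ofReal_add hr.le hs.le, key (by linarith), key hr, key hs,
    ← ENNReal.ofReal_mul (by positivity), ← ENNReal.ofReal_mul (by positivity),
    ← ENNReal.ofReal_add (by positivity) (by positivity)]
  exact ENNReal.ofReal_le_ofReal (aux_real_convex n hl hl1 hr hs)

lemma aux_key {X : Type*} [MeasurableSpace X] (ν : Measure X) (n : ℕ) (hn : 1 ≤ n)
    (f g : X → ℝ≥0∞) (hf : Measurable f) (hg : Measurable g) :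
    (∫⁻ x, f x ^ (-(n:ℝ)) ∂ν) ^ (-(1/(n:ℝ))) + (∫⁻ x, g x ^ (-(n:ℝ)) ∂ν) ^ (-(1/(n:ℝ)))
      ≤ (∫⁻ x, (f x + g x) ^ (-(n:ℝ)) ∂ν) ^ (-(1/(n:ℝ))) := by
  have hnpos : (0:ℝ) < n := by exact_mod_cast hn.trans_lt' zero_lt_one
  have hnneg : -(n:ℝ) < 0 := by linarith
  have hinvpos : (0:ℝ) < 1/(n:ℝ) := by positivity
  have hinvneg : -(1/(n:ℝ)) < 0 := by linarith
  set X₁ := ∫⁻ x, f x ^ (-(n:ℝ)) ∂ν with hX₁def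
  set X₂ := ∫⁻ x, g x ^ (-(n:ℝ)) ∂ν with hX₂def
  set Y := ∫⁻ x, (f x + g x) ^ (-(n:ℝ)) ∂ν with hYdef
  -- degenerate cases where an integral is zero: then the other side is ⊤-dominated
  have hzero : ∀ (f g : X → ℝ≥0∞), Measurable f →
      (∫⁻ x, f x ^ (-(n:ℝ)) ∂ν) = 0 → (∫⁻ x, (f x + g x) ^ (-(n:ℝ)) ∂ν) = 0 := by
    intro f g hf h0
    have hmeas : Measurable fun x => f x ^ (-(n:ℝ)) := hf.pow_const _
    have hae : ∀ᵐ x ∂ν, f x ^ (-(n:ℝ)) = 0 := (lintegral_eq_zero_iff hmeas).1 h0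
    have : ∀ᵐ x ∂ν, (f x + g x) ^ (-(n:ℝ)) = 0 := by
      filter_upwards [hae] with x hx
      rcases ENNReal.rpow_eq_zero_iff.1 hx with ⟨_, hlt⟩ | ⟨htop, _⟩
      · exact absurd hlt (by linarith)
      · rw [htop, top_add]
        exact ENNReal.top_rpow_of_neg hnneg
    rw [lintegral_congr_ae this, lintegral_zero]
  rcases eq_or_ne X₁ 0 with hX₁0 | hX₁0
  · have : Y = 0 := hzero f g hf hX₁0
    rw [this, ENNReal.zero_rpow_of_neg hinvneg]
    exact le_top
  rcases eq_or_ne X₂ 0 with hX₂0 | hX₂0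
  · have : Y = 0 := by
      have := hzero g f hg hX₂0
      rw [hYdef]
      rw [← this]
      refine lintegral_congr fun x => by rw [add_comm]
    rw [this, ENNReal.zero_rpow_of_neg hinvneg]
    exact le_top
  rcases eq_or_ne X₁ ⊤ with hX₁t | hX₁t
  · rw [hX₁t, ENNReal.top_rpow_of_neg hinvneg, zero_add]
    refine aux_rpow_neg_le hinvpos.le ?_
    refine lintegral_mono fun x => aux_rpow_neg_le hnpos.le le_add_self
  rcases eq_or_ne X₂ ⊤ with hX₂t | hX₂t
  · rw [hX₂t, ENNReal.top_rpow_of_neg hinvneg, add_zero]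
    refine aux_rpow_neg_le hinvpos.le ?_
    refine lintegral_mono fun x => aux_rpow_neg_le hnpos.le le_self_add
  -- main case
  set x₁ := X₁.toReal with hx₁def
  set x₂ := X₂.toReal with hx₂def
  have hx₁ : 0 < x₁ := ENNReal.toReal_pos hX₁0 hX₁t
  have hx₂ : 0 < x₂ := ENNReal.toReal_pos hX₂0 hX₂t
  set a := x₁ ^ (-(1/(n:ℝ))) with hadef
  set b := x₂ ^ (-(1/(n:ℝ))) with hbdef
  have ha : 0 < a := Real.rpow_pos_of_pos hx₁ _
  have hb : 0 < b := Real.rpow_pos_of_pos hx₂ _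
  have hab : 0 < a + b := by linarith
  -- the key relation: a ^ (-(n:ℤ)) = x₁
  have hexp : (-(1/(n:ℝ))) * (-(n:ℝ)) = 1 := by field_simp
  have hcast : (-(n:ℝ)) = ((-(n:ℤ) : ℤ) : ℝ) := by push_cast; ring
  have hrel : ∀ {x : ℝ}, 0 < x → (x ^ (-(1/(n:ℝ)))) ^ (-(n:ℤ)) = x := by
    intro x hx
    rw [← Real.rpow_intCast _ (-(n:ℤ)), ← hcast, ← Real.rpow_mul hx.le, hexp, Real.rpow_one]
  have hA : X₁ ^ (-(1/(n:ℝ))) = ENNReal.ofReal a := by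
    rw [show X₁ = ENNReal.ofReal x₁ from (ENNReal.ofReal_toReal hX₁t).symm,
      ENNReal.ofReal_rpow_of_pos hx₁]
  have hB : X₂ ^ (-(1/(n:ℝ))) = ENNReal.ofReal b := by
    rw [show X₂ = ENNReal.ofReal x₂ from (ENNReal.ofReal_toReal hX₂t).symm,
      ENNReal.ofReal_rpow_of_pos hx₂]
  set l := a / (a + b) with hldef
  have hl : 0 < l := div_pos ha hab
  have hl1 : l < 1 := (div_lt_one hab).2 (by linarith)
  -- Step 1: Y bounded by combination
  have step1 : Y ≤ ENNReal.ofReal (l ^ (n+1)) * X₁ + ENNReal.ofReal ((1-l) ^ (n+1)) * X₂ := by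
    calc Y ≤ ∫⁻ x, (ENNReal.ofReal (l ^ (n+1)) * f x ^ (-(n:ℝ)) +
          ENNReal.ofReal ((1-l) ^ (n+1)) * g x ^ (-(n:ℝ))) ∂ν :=
        lintegral_mono fun x => aux_pointwise n hn hl hl1 (f x) (g x)
      _ = ENNReal.ofReal (l ^ (n+1)) * X₁ + ENNReal.ofReal ((1-l) ^ (n+1)) * X₂ := by
        rw [lintegral_add_left ((hf.pow_const _).const_mul _),
          lintegral_const_mul' _ _ ENNReal.ofReal_ne_top,
          lintegral_const_mul' _ _ ENNReal.ofReal_ne_top]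
  -- Step 2: the combination equals ofReal ((a+b)^(-n))
  have step2 : ENNReal.ofReal (l ^ (n+1)) * X₁ + ENNReal.ofReal ((1-l) ^ (n+1)) * X₂
      = ENNReal.ofReal ((a + b) ^ (-(n:ℤ))) := by
    rw [show X₁ = ENNReal.ofReal x₁ from (ENNReal.ofReal_toReal hX₁t).symm,
      show X₂ = ENNReal.ofReal x₂ from (ENNReal.ofReal_toReal hX₂t).symm,
      ← ENNReal.ofReal_mul (pow_nonneg hl.le _), ← ENNReal.ofReal_mul (pow_nonneg (by linarith) _),
      ← ENNReal.ofReal_add (mul_nonneg (pow_nonneg hl.le _) hx₁.le)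
        (mul_nonneg (pow_nonneg (by linarith) _) hx₂.le)]
    congr 1
    have hx₁a : x₁ = a ^ (-(n:ℤ)) := (hrel hx₁).symm
    have hx₂b : x₂ = b ^ (-(n:ℤ)) := (hrel hx₂).symm
    rw [hx₁a, hx₂b, hldef]
    have h1l : 1 - a/(a+b) = b/(a+b) := by field_simp; ring
    rw [h1l, zpow_neg, zpow_neg, zpow_neg, zpow_natCast, zpow_natCast, zpow_natCast]
    rw [div_pow, div_pow]
    field_simp
    ring
  -- conclude
  rw [hA, hB, ← ENNReal.ofReal_add ha.le hb.le]
  have final : ENNReal.ofReal ((a + b) ^ (-(n:ℤ))) ^ (-(1/(n:ℝ))) = ENNReal.ofReal (a + b) := by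
    have hpos : (0:ℝ) < (a+b) ^ (-(n:ℤ)) := zpow_pos hab _
    rw [ENNReal.ofReal_rpow_of_pos hpos]
    congr 1
    rw [← Real.rpow_intCast (a+b) (-(n:ℤ)), ← hcast, ← Real.rpow_mul hab.le]
    rw [show (-(n:ℝ)) * (-(1/(n:ℝ))) = 1 by field_simp, Real.rpow_one]
  calc ENNReal.ofReal (a + b) = ENNReal.ofReal ((a + b) ^ (-(n:ℤ))) ^ (-(1/(n:ℝ))) := final.symm
    _ ≤ Y ^ (-(1/(n:ℝ))) := aux_rpow_neg_le hinvpos.le (step1.trans_eq step2)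

lemma psiM_measurable {n : ℕ} (μ : Measure (EuclideanSpace ℝ (Fin n))) [SFinite μ]
    (σ : EuclideanSpace ℝ (Fin n) → EuclideanSpace ℝ (Fin n)) (hσ : Measurable σ) :
    Measurable (PsiM μ σ) := by
  apply Measurable.lintegral_prod_right'
    (f := fun p : EuclideanSpace ℝ (Fin n) × EuclideanSpace ℝ (Fin n) =>
      ENNReal.ofReal |(inner ℝ (σ p.2) p.1 : ℝ)|)
  apply ENNReal.measurable_ofReal.comp
  apply Measurable.abs
  exact continuous_inner.measurable.comp ((hσ.comp measurable_snd).prodMk measurable_fst)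

/-- the combined affine energy dominates the sum of the affine energies
(a Minkowski-type inequality for negative exponents). -/
theorem energyM_combined_ge {n : ℕ} (hn : 2 ≤ n)
    (μ₁ μ₂ : Measure (EuclideanSpace ℝ (Fin n))) [IsFiniteMeasure μ₁] [IsFiniteMeasure μ₂]
    (σ₁ σ₂ : EuclideanSpace ℝ (Fin n) → EuclideanSpace ℝ (Fin n))
    (hσ₁m : Measurable σ₁) (hσ₂m : Measurable σ₂)
    (hσ₁ : ∀ᵐ x ∂μ₁, ‖σ₁ x‖ = 1) (hσ₂ : ∀ᵐ x ∂μ₂, ‖σ₂ x‖ = 1) :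
    ENNReal.ofReal (alphaConst n) *
        (∫⁻ ξ, (PsiM μ₁ σ₁ ξ + PsiM μ₂ σ₂ ξ) ^ (-(n : ℝ)) ∂(sphereMeasure n)) ^ (-(1 / (n : ℝ)))
      ≥ energyM μ₁ σ₁ + energyM μ₂ σ₂ := by
  have key := aux_key (sphereMeasure n) n (by omega) (PsiM μ₁ σ₁) (PsiM μ₂ σ₂)
    (psiM_measurable μ₁ σ₁ hσ₁m) (psiM_measurable μ₂ σ₂ hσ₂m)
  rw [ge_iff_le, energyM, energyM, ← mul_add]
  exact mul_le_mul_right key _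
end
end

section
/- Let n ≥ 2, let μ be a finite Borel measure on ℝⁿ, let σ : ℝⁿ → ℝⁿ be Borel measurable with |σ(x)| = 1 for μ-almost every x, and let A ⊆ ℝⁿ be a Borel set. Then E(μ,σ) ≥ E(μ⌞A, σ) + E(μ⌞Aᶜ, σ), where μ⌞A and μ⌞Aᶜ denote the restrictions of μ to A and to its complement. -/
open MeasureTheory ENNReal

noncomputable section

/-- Antitonicity of `x ^ z` in `x` for nonpositive real exponent `z`, in `ℝ≥0∞`. -/
lemma ennreal_rpow_le_rpow_of_nonpos {x y : ℝ≥0∞} {z : ℝ} (hz : z ≤ 0) (hxy : x ≤ y) :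
    y ^ z ≤ x ^ z := by
  rw [← neg_neg z, ENNReal.rpow_neg y, ENNReal.rpow_neg x]
  exact ENNReal.inv_le_inv' (ENNReal.rpow_le_rpow hxy (by linarith))

/-- Pointwise convexity inequality over the reals:
`(a+b)^{-n} ≤ p^{n+1} a^{-n} + q^{n+1} b^{-n}` for weights `p+q = 1`. -/
lemma real_convexity_key (n : ℕ) {a b p q : ℝ} (ha : 0 < a) (hb : 0 < b)
    (hp : 0 < p) (hq : 0 < q) (hpq : p + q = 1) :
    ((a + b) ^ n)⁻¹ ≤ p ^ (n + 1) / a ^ n + q ^ (n + 1) / b ^ n := by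
  have h := (convexOn_zpow (𝕜 := ℝ) (-(n : ℤ))).2
    (Set.mem_Ioi.2 (div_pos ha hp)) (Set.mem_Ioi.2 (div_pos hb hq)) hp.le hq.le hpq
  have e1 : p • (a / p) + q • (b / q) = a + b := by
    simp only [smul_eq_mul]
    field_simp
  rw [e1] at h
  simp only [smul_eq_mul, zpow_neg, zpow_natCast, div_pow] at h
  have e2 : p * (a ^ n / p ^ n)⁻¹ = p ^ (n + 1) / a ^ n := by
    rw [inv_div]
    field_simp
    ring
  have e3 : q * (b ^ n / q ^ n)⁻¹ = q ^ (n + 1) / b ^ n := by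
    rw [inv_div]
    field_simp
    ring
  rw [e2, e3] at h
  exact h

/-- Pointwise convexity inequality in `ℝ≥0∞` with `rpow`. -/
lemma ennreal_convexity_key (n : ℕ) (hn : 1 ≤ n) {p q : ℝ≥0∞} (a b : ℝ≥0∞)
    (hp0 : p ≠ 0) (hpt : p ≠ ⊤) (hq0 : q ≠ 0) (hqt : q ≠ ⊤) (hpq : p + q = 1) :
    (a + b) ^ (-(n : ℝ)) ≤
      p ^ ((n : ℝ) + 1) * a ^ (-(n : ℝ)) + q ^ ((n : ℝ) + 1) * b ^ (-(n : ℝ)) := by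
  have hneg : (-(n : ℝ)) < 0 := by
    have : (0 : ℝ) < n := by exact_mod_cast Nat.lt_of_lt_of_le Nat.zero_lt_one hn
    linarith
  rcases eq_or_ne a 0 with rfl | ha0
  · have : (0 : ℝ≥0∞) ^ (-(n : ℝ)) = ⊤ := ENNReal.zero_rpow_of_neg hneg
    rw [this, ENNReal.mul_top (by exact (ENNReal.rpow_pos (pos_iff_ne_zero.2 hp0) hpt).ne')]
    exact le_trans le_top (le_add_right le_rfl)
  rcases eq_or_ne b 0 with rfl | hb0
  · have : (0 : ℝ≥0∞) ^ (-(n : ℝ)) = ⊤ := ENNReal.zero_rpow_of_neg hneg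
    rw [this, ENNReal.mul_top (by exact (ENNReal.rpow_pos (pos_iff_ne_zero.2 hq0) hqt).ne')]
    exact le_trans le_top (le_add_left le_rfl)
  rcases eq_or_ne a ⊤ with rfl | hat
  · rw [top_add, ENNReal.top_rpow_of_neg hneg]
    exact zero_le
  rcases eq_or_ne b ⊤ with rfl | hbt
  · rw [add_top, ENNReal.top_rpow_of_neg hneg]
    exact zero_le
  -- now everything is finite and positive; reduce to the real inequality
  set a' := a.toReal with ha'
  set b' := b.toReal with hb'
  set p' := p.toReal with hp'
  set q' := q.toReal with hq'
  have ha'0 : 0 < a' := ENNReal.toReal_pos ha0 hat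
  have hb'0 : 0 < b' := ENNReal.toReal_pos hb0 hbt
  have hp'0 : 0 < p' := ENNReal.toReal_pos hp0 hpt
  have hq'0 : 0 < q' := ENNReal.toReal_pos hq0 hqt
  have hpq' : p' + q' = 1 := by
    rw [hp', hq', ← ENNReal.toReal_add hpt hqt, hpq]
    simp
  have key := real_convexity_key n ha'0 hb'0 hp'0 hq'0 hpq'
  have ea : a = ENNReal.ofReal a' := (ENNReal.ofReal_toReal hat).symm
  have eb : b = ENNReal.ofReal b' := (ENNReal.ofReal_toReal hbt).symm
  have ep : p = ENNReal.ofReal p' := (ENNReal.ofReal_toReal hpt).symm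
  have eq' : q = ENNReal.ofReal q' := (ENNReal.ofReal_toReal hqt).symm
  rw [ea, eb, ep, eq', ← ENNReal.ofReal_add ha'0.le hb'0.le]
  rw [ENNReal.ofReal_rpow_of_pos (by linarith), ENNReal.ofReal_rpow_of_pos ha'0,
    ENNReal.ofReal_rpow_of_pos hb'0, ENNReal.ofReal_rpow_of_pos hp'0,
    ENNReal.ofReal_rpow_of_pos hq'0, ← ENNReal.ofReal_mul (by positivity),
    ← ENNReal.ofReal_mul (by positivity), ← ENNReal.ofReal_add (by positivity) (by positivity)]
  apply ENNReal.ofReal_le_ofReal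
  have hab : (0:ℝ) < a' + b' := by linarith
  have r1 : (a' + b') ^ (-(n : ℝ)) = ((a' + b') ^ n)⁻¹ := by
    rw [← Real.rpow_natCast (a' + b') n, ← Real.rpow_neg hab.le]
  have r2 : a' ^ (-(n : ℝ)) = (a' ^ n)⁻¹ := by
    rw [← Real.rpow_natCast a' n, ← Real.rpow_neg ha'0.le]
  have r3 : b' ^ (-(n : ℝ)) = (b' ^ n)⁻¹ := by
    rw [← Real.rpow_natCast b' n, ← Real.rpow_neg hb'0.le]
  have r4 : p' ^ ((n : ℝ) + 1) = p' ^ (n + 1) := by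
    rw [← Real.rpow_natCast p' (n + 1)]
    norm_num
  have r5 : q' ^ ((n : ℝ) + 1) = q' ^ (n + 1) := by
    rw [← Real.rpow_natCast q' (n + 1)]
    norm_num
  rw [r1, r2, r3, r4, r5]
  calc ((a' + b') ^ n)⁻¹ ≤ p' ^ (n + 1) / a' ^ n + q' ^ (n + 1) / b' ^ n := key
    _ = p' ^ (n + 1) * (a' ^ n)⁻¹ + q' ^ (n + 1) * (b' ^ n)⁻¹ := by
        rw [div_eq_mul_inv, div_eq_mul_inv]

/-- superadditivity of the affine energy under restriction of the measure to a
Borel set and its complement. -/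
theorem energyM_restrict_superadd {n : ℕ} (hn : 2 ≤ n)
    (μ : Measure (EuclideanSpace ℝ (Fin n))) [IsFiniteMeasure μ]
    (σ : EuclideanSpace ℝ (Fin n) → EuclideanSpace ℝ (Fin n)) (hσm : Measurable σ)
    (hσ : ∀ᵐ x ∂μ, ‖σ x‖ = 1)
    (A : Set (EuclideanSpace ℝ (Fin n))) (hA : MeasurableSet A) :
    energyM μ σ ≥ energyM (μ.restrict A) σ + energyM (μ.restrict Aᶜ) σ := by
  classical
  have hn0 : (n : ℝ) ≠ 0 := Nat.cast_ne_zero.2 (by omega)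
  have hn1 : 1 ≤ n := by omega
  -- measurability of the kernel and of Ψ
  have hker : Measurable fun pr : EuclideanSpace ℝ (Fin n) × EuclideanSpace ℝ (Fin n) =>
      ENNReal.ofReal |(inner ℝ (σ pr.2) pr.1 : ℝ)| := by
    apply ENNReal.measurable_ofReal.comp
    apply _root_.continuous_abs.measurable.comp
    exact (Continuous.measurable continuous_inner).comp
      ((hσm.comp measurable_snd).prodMk measurable_fst)
  have hmeas : ∀ (ν : Measure (EuclideanSpace ℝ (Fin n))) [SFinite ν],
      Measurable (PsiM ν σ) := by
    intro ν _
    exact Measurable.lintegral_prod_right' hker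
  set f := PsiM (μ.restrict A) σ with hfdef
  set g := PsiM (μ.restrict Aᶜ) σ with hgdef
  have hfm : Measurable f := hmeas _
  have hgm : Measurable g := hmeas _
  have hadd : ∀ ξ, PsiM μ σ ξ = f ξ + g ξ := fun ξ =>
    (lintegral_add_compl (fun x => ENNReal.ofReal |(inner ℝ (σ x) ξ : ℝ)|) hA).symm
  simp only [energyM, ge_iff_le]
  set c := ENNReal.ofReal (alphaConst n) with hcdef
  set IA := ∫⁻ ξ, f ξ ^ (-(n : ℝ)) ∂(sphereMeasure n) with hIAdef
  set IB := ∫⁻ ξ, g ξ ^ (-(n : ℝ)) ∂(sphereMeasure n) with hIBdef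
  set I := ∫⁻ ξ, PsiM μ σ ξ ^ (-(n : ℝ)) ∂(sphereMeasure n) with hIdef
  have hnneg : (-(n : ℝ)) ≤ 0 := by
    simp [Nat.cast_nonneg]
  have he_nonpos : (-(1 / (n : ℝ))) ≤ 0 := by
    have : (0:ℝ) ≤ 1 / (n:ℝ) := by positivity
    linarith
  have hmonoA : I ≤ IA := lintegral_mono fun ξ =>
    ennreal_rpow_le_rpow_of_nonpos hnneg (by rw [hadd ξ]; exact le_self_add)
  have hmonoB : I ≤ IB := lintegral_mono fun ξ =>
    ennreal_rpow_le_rpow_of_nonpos hnneg (by rw [hadd ξ]; exact le_add_self)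
  rcases eq_or_ne c 0 with hc0 | hc0
  · simp [hc0]
  set P := IA ^ (-(1 / (n : ℝ))) with hPdef
  set Q := IB ^ (-(1 / (n : ℝ))) with hQdef
  have hPI : P ≤ I ^ (-(1 / (n : ℝ))) := ennreal_rpow_le_rpow_of_nonpos he_nonpos hmonoA
  have hQI : Q ≤ I ^ (-(1 / (n : ℝ))) := ennreal_rpow_le_rpow_of_nonpos he_nonpos hmonoB
  rcases eq_or_ne P 0 with hP0 | hP0
  · rw [hP0, mul_zero, zero_add]
    exact mul_le_mul_right hQI c
  rcases eq_or_ne Q 0 with hQ0 | hQ0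
  · rw [hQ0, mul_zero, add_zero]
    exact mul_le_mul_right hPI c
  rcases eq_or_ne P ⊤ with hPt | hPt
  · have hIt : I ^ (-(1 / (n : ℝ))) = ⊤ := top_le_iff.1 (hPt ▸ hPI)
    rw [hIt, ENNReal.mul_top hc0]
    exact le_top
  rcases eq_or_ne Q ⊤ with hQt | hQt
  · have hIt : I ^ (-(1 / (n : ℝ))) = ⊤ := top_le_iff.1 (hQt ▸ hQI)
    rw [hIt, ENNReal.mul_top hc0]
    exact le_top
  -- main case: 0 < P, Q < ∞
  set S := P + Q with hSdef
  have hS0 : S ≠ 0 := by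
    simp only [hSdef, ne_eq, add_eq_zero]
    tauto
  have hSt : S ≠ ⊤ := ENNReal.add_ne_top.2 ⟨hPt, hQt⟩
  set p := P * S⁻¹ with hpdef
  set q := Q * S⁻¹ with hqdef
  have hp0 : p ≠ 0 := mul_ne_zero hP0 (ENNReal.inv_ne_zero.2 hSt)
  have hpt : p ≠ ⊤ := ENNReal.mul_ne_top hPt (ENNReal.inv_ne_top.2 hS0)
  have hq0 : q ≠ 0 := mul_ne_zero hQ0 (ENNReal.inv_ne_zero.2 hSt)
  have hqt : q ≠ ⊤ := ENNReal.mul_ne_top hQt (ENNReal.inv_ne_top.2 hS0)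
  have hpq : p + q = 1 := by
    rw [hpdef, hqdef, ← add_mul, ← hSdef, ENNReal.mul_inv_cancel hS0 hSt]
  have hexp1 : (-(1 / (n : ℝ))) * (-(n : ℝ)) = 1 := by
    field_simp
  have hPA : P ^ (-(n : ℝ)) = IA := by
    rw [hPdef, ← ENNReal.rpow_mul, hexp1, ENNReal.rpow_one]
  have hQB : Q ^ (-(n : ℝ)) = IB := by
    rw [hQdef, ← ENNReal.rpow_mul, hexp1, ENNReal.rpow_one]
  -- the key integral bound
  have hfpow : Measurable fun ξ => f ξ ^ (-(n : ℝ)) := fun s hs =>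
    (ENNReal.continuous_rpow_const.measurable.comp hfm) hs
  have hgpow : Measurable fun ξ => g ξ ^ (-(n : ℝ)) := fun s hs =>
    (ENNReal.continuous_rpow_const.measurable.comp hgm) hs
  have hfpm : Measurable fun ξ => p ^ ((n : ℝ) + 1) * f ξ ^ (-(n : ℝ)) :=
    hfpow.const_mul _
  have hle : I ≤ p ^ ((n : ℝ) + 1) * IA + q ^ ((n : ℝ) + 1) * IB := by
    calc I ≤ ∫⁻ ξ, (p ^ ((n : ℝ) + 1) * f ξ ^ (-(n : ℝ)) +
            q ^ ((n : ℝ) + 1) * g ξ ^ (-(n : ℝ))) ∂(sphereMeasure n) := by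
          rw [hIdef]
          refine lintegral_mono fun ξ => ?_
          rw [hadd ξ]
          exact ennreal_convexity_key n hn1 (f ξ) (g ξ) hp0 hpt hq0 hqt hpq
      _ = p ^ ((n : ℝ) + 1) * IA + q ^ ((n : ℝ) + 1) * IB := by
          rw [lintegral_add_left hfpm,
            lintegral_const_mul _ hfpow,
            lintegral_const_mul _ hgpow]
  have eS : S⁻¹ ^ ((n : ℝ) + 1) = S ^ (-((n : ℝ) + 1)) := by
    rw [ENNReal.inv_rpow, ← ENNReal.rpow_neg]
  have ePP : P ^ ((n : ℝ) + 1) * P ^ (-(n : ℝ)) = P := by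
    rw [← ENNReal.rpow_add _ _ hP0 hPt]
    norm_num
  have eQQ : Q ^ ((n : ℝ) + 1) * Q ^ (-(n : ℝ)) = Q := by
    rw [← ENNReal.rpow_add _ _ hQ0 hQt]
    norm_num
  have e1 : p ^ ((n : ℝ) + 1) * IA = P * S ^ (-((n : ℝ) + 1)) := by
    rw [← hPA, hpdef, ENNReal.mul_rpow_of_ne_top hPt (ENNReal.inv_ne_top.2 hS0), eS,
      mul_right_comm, ePP]
  have e2 : q ^ ((n : ℝ) + 1) * IB = Q * S ^ (-((n : ℝ) + 1)) := by
    rw [← hQB, hqdef, ENNReal.mul_rpow_of_ne_top hQt (ENNReal.inv_ne_top.2 hS0), eS,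
      mul_right_comm, eQQ]
  have halg : p ^ ((n : ℝ) + 1) * IA + q ^ ((n : ℝ) + 1) * IB = S ^ (-(n : ℝ)) := by
    rw [e1, e2, ← add_mul, ← hSdef]
    calc S * S ^ (-((n : ℝ) + 1)) = S ^ (1 : ℝ) * S ^ (-((n : ℝ) + 1)) := by
          rw [ENNReal.rpow_one]
      _ = S ^ ((1 : ℝ) + -((n : ℝ) + 1)) := (ENNReal.rpow_add _ _ hS0 hSt).symm
      _ = S ^ (-(n : ℝ)) := by norm_num
  have hIS : I ≤ S ^ (-(n : ℝ)) := halg ▸ hle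
  have hfin : S ≤ I ^ (-(1 / (n : ℝ))) := by
    calc S = (S ^ (-(n : ℝ))) ^ (-(1 / (n : ℝ))) := by
          rw [← ENNReal.rpow_mul]
          rw [show (-(n : ℝ)) * (-(1 / (n : ℝ))) = 1 by field_simp, ENNReal.rpow_one]
      _ ≤ I ^ (-(1 / (n : ℝ))) := ennreal_rpow_le_rpow_of_nonpos he_nonpos hIS
  calc c * P + c * Q = c * S := by rw [← mul_add, ← hSdef]
    _ ≤ c * I ^ (-(1 / (n : ℝ))) := mul_le_mul_right hfin c

end
end

section
/- Let (X, ν) be a measure space, let p > 0 be a real number, and let g₁, g₂ : X → ℝ be measurable functions with g₁ > 0 and g₂ > 0 almost everywhere and ∫_X g₁^{−p} dν < ∞, ∫_X g₂^{−p} dν < ∞. Then (∫_X (g₁ + g₂)^{−p} dν)^{−1/p} ≥ (∫_X g₁^{−p} dν)^{−1/p} + (∫_X g₂^{−p} dν)^{−1/p} (Minkowski's inequality for the negative exponent −p). -/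
open MeasureTheory

private lemma integral_pos_of_ae_pos {X : Type*} [MeasurableSpace X] {ν : Measure X}
    (hν : ν ≠ 0) {f : X → ℝ} (hf : ∀ᵐ x ∂ν, 0 < f x) (hfi : Integrable f ν) :
    0 < ∫ x, f x ∂ν := by
  rw [integral_pos_iff_support_of_nonneg_ae (hf.mono fun x h => h.le) hfi]
  have h1 : ν (Function.support f)ᶜ = 0 := by
    refine measure_mono_null (fun x hx => ?_) (ae_iff.mp hf)
    simp only [Set.mem_compl_iff, Function.mem_support, not_not] at hx
    simp [hx]
  have h2 : 0 < ν Set.univ := Measure.measure_univ_pos.mpr hν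
  have h3 := measure_union_le (μ := ν) (Function.support f) (Function.support f)ᶜ
  rw [Set.union_compl_self, h1, add_zero] at h3
  exact lt_of_lt_of_le h2 h3

private lemma aux_pointwise_s9 (p : ℝ) (hp : 0 < p) {a b l : ℝ} (ha : 0 < a) (hb : 0 < b)
    (hl : 0 < l) (hl1 : l < 1) :
    (a + b) ^ (-p) ≤ l ^ (1 + p) * a ^ (-p) + (1 - l) ^ (1 + p) * b ^ (-p) := by
  have h1l : 0 < 1 - l := by linarith
  set u := a / l with hu_def
  set v := b / (1 - l) with hv_def
  have hu : 0 < u := div_pos ha hl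
  have hv : 0 < v := div_pos hb h1l
  have key : (l * u + (1 - l) * v) ^ (-p) ≤ l * u ^ (-p) + (1 - l) * v ^ (-p) := by
    have hgm : u ^ l * v ^ (1 - l) ≤ l * u + (1 - l) * v :=
      Real.geom_mean_le_arith_mean2_weighted hl.le h1l.le hu.le hv.le (by ring)
    have hpos : 0 < u ^ l * v ^ (1 - l) :=
      mul_pos (Real.rpow_pos_of_pos hu l) (Real.rpow_pos_of_pos hv _)
    have h2 : (l * u + (1 - l) * v) ^ (-p) ≤ (u ^ l * v ^ (1 - l)) ^ (-p) :=
      Real.rpow_le_rpow_of_nonpos hpos hgm (neg_nonpos.mpr hp.le)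
    have h3 : (u ^ l * v ^ (1 - l)) ^ (-p) = (u ^ (-p)) ^ l * (v ^ (-p)) ^ (1 - l) := by
      rw [Real.mul_rpow (Real.rpow_nonneg hu.le _) (Real.rpow_nonneg hv.le _),
        ← Real.rpow_mul hu.le, ← Real.rpow_mul hv.le, ← Real.rpow_mul hu.le,
        ← Real.rpow_mul hv.le, mul_comm l (-p), mul_comm (1 - l) (-p)]
    have h4 : (u ^ (-p)) ^ l * (v ^ (-p)) ^ (1 - l) ≤ l * u ^ (-p) + (1 - l) * v ^ (-p) :=
      Real.geom_mean_le_arith_mean2_weighted hl.le h1l.le (Real.rpow_nonneg hu.le _)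
        (Real.rpow_nonneg hv.le _) (by ring)
    calc (l * u + (1 - l) * v) ^ (-p) ≤ (u ^ l * v ^ (1 - l)) ^ (-p) := h2
      _ = (u ^ (-p)) ^ l * (v ^ (-p)) ^ (1 - l) := h3
      _ ≤ l * u ^ (-p) + (1 - l) * v ^ (-p) := h4
  have hlu : l * u = a := by rw [hu_def]; field_simp
  have hlv : (1 - l) * v = b := by rw [hv_def]; field_simp
  have hup : u ^ (-p) = l ^ p * a ^ (-p) := by
    rw [hu_def, Real.div_rpow ha.le hl.le, div_eq_mul_inv, Real.rpow_neg hl.le, inv_inv,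
      mul_comm]
  have hvp : v ^ (-p) = (1 - l) ^ p * b ^ (-p) := by
    rw [hv_def, Real.div_rpow hb.le h1l.le, div_eq_mul_inv, Real.rpow_neg h1l.le, inv_inv,
      mul_comm]
  rw [hlu, hlv, hup, hvp] at key
  calc (a + b) ^ (-p) ≤ l * (l ^ p * a ^ (-p)) + (1 - l) * ((1 - l) ^ p * b ^ (-p)) := key
    _ = l ^ (1 + p) * a ^ (-p) + (1 - l) ^ (1 + p) * b ^ (-p) := by
        rw [Real.rpow_add hl, Real.rpow_add h1l, Real.rpow_one, Real.rpow_one]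
        ring

/-- Minkowski's inequality for the negative exponent −p. -/
theorem minkowski_neg_exponent {X : Type*} [MeasurableSpace X] (ν : Measure X)
    (p : ℝ) (hp : 0 < p) (g₁ g₂ : X → ℝ)
    (hg₁m : Measurable g₁) (hg₂m : Measurable g₂)
    (hg₁pos : ∀ᵐ x ∂ν, 0 < g₁ x) (hg₂pos : ∀ᵐ x ∂ν, 0 < g₂ x)
    (hg₁int : Integrable (fun x => g₁ x ^ (-p)) ν)
    (hg₂int : Integrable (fun x => g₂ x ^ (-p)) ν) :
    (∫ x, (g₁ x + g₂ x) ^ (-p) ∂ν) ^ (-(1 / p)) ≥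
      (∫ x, g₁ x ^ (-p) ∂ν) ^ (-(1 / p)) + (∫ x, g₂ x ^ (-p) ∂ν) ^ (-(1 / p)) := by
  have hpne : -(1 / p) ≠ 0 := neg_ne_zero.mpr (one_div_ne_zero hp.ne')
  rcases eq_or_ne ν 0 with rfl | hν
  · simp only [integral_zero_measure, Real.zero_rpow hpne]
    norm_num
  set A := ∫ x, g₁ x ^ (-p) ∂ν with hA_def
  set B := ∫ x, g₂ x ^ (-p) ∂ν with hB_def
  have hA : 0 < A :=
    integral_pos_of_ae_pos hν (hg₁pos.mono fun x hx => Real.rpow_pos_of_pos hx _) hg₁int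
  have hB : 0 < B :=
    integral_pos_of_ae_pos hν (hg₂pos.mono fun x hx => Real.rpow_pos_of_pos hx _) hg₂int
  set a := A ^ (1 / p) with ha_def
  set b := B ^ (1 / p) with hb_def
  have hap : 0 < a := Real.rpow_pos_of_pos hA _
  have hbp : 0 < b := Real.rpow_pos_of_pos hB _
  set S := a + b with hS_def
  have hS : 0 < S := by positivity
  set l := b / S with hl_def
  have hl : 0 < l := div_pos hbp hS
  have hl1 : l < 1 := (div_lt_one hS).mpr (by dsimp [S]; linarith)
  have h1l : 1 - l = a / S := by
    rw [hl_def, eq_div_iff hS.ne', sub_mul, div_mul_cancel₀ _ hS.ne', one_mul]; linarith [hS_def]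
  have hsum_int : Integrable (fun x => (g₁ x + g₂ x) ^ (-p)) ν := by
    refine Integrable.mono' hg₁int ?_ ?_
    · have hm : Measurable fun x => Real.exp (Real.log (g₁ x + g₂ x) * (-p)) :=
        Real.measurable_exp.comp ((Real.measurable_log.comp (hg₁m.add hg₂m)).mul_const (-p))
      refine hm.aestronglyMeasurable.congr ?_
      filter_upwards [hg₁pos, hg₂pos] with x h1 h2
      rw [Real.rpow_def_of_pos (by linarith)]
    · filter_upwards [hg₁pos, hg₂pos] with x h1 h2
      have hpos : 0 < g₁ x + g₂ x := by linarith
      rw [Real.norm_eq_abs, abs_of_pos (Real.rpow_pos_of_pos hpos _)]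
      exact Real.rpow_le_rpow_of_nonpos h1 (by linarith) (neg_nonpos.mpr hp.le)
  have hbound : ∀ᵐ x ∂ν, (g₁ x + g₂ x) ^ (-p) ≤
      l ^ (1 + p) * g₁ x ^ (-p) + (1 - l) ^ (1 + p) * g₂ x ^ (-p) := by
    filter_upwards [hg₁pos, hg₂pos] with x h1 h2 using aux_pointwise_s9 p hp h1 h2 hl hl1
  have hC : (∫ x, (g₁ x + g₂ x) ^ (-p) ∂ν) ≤ l ^ (1 + p) * A + (1 - l) ^ (1 + p) * B := by
    calc (∫ x, (g₁ x + g₂ x) ^ (-p) ∂ν)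
        ≤ ∫ x, l ^ (1 + p) * g₁ x ^ (-p) + (1 - l) ^ (1 + p) * g₂ x ^ (-p) ∂ν :=
          integral_mono_ae hsum_int ((hg₁int.const_mul _).add (hg₂int.const_mul _)) hbound
      _ = l ^ (1 + p) * A + (1 - l) ^ (1 + p) * B := by
          rw [integral_add (hg₁int.const_mul _) (hg₂int.const_mul _), integral_const_mul,
            integral_const_mul]
  have hval : l ^ (1 + p) * A + (1 - l) ^ (1 + p) * B = A * B * S ^ (-p) := by
    rw [h1l, hl_def, Real.div_rpow hbp.le hS.le, Real.div_rpow hap.le hS.le]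
    have hb1 : b ^ (1 + p) = b * B := by
      rw [hb_def, ← Real.rpow_mul hB.le,
        show (1 / p) * (1 + p) = 1 / p + 1 by field_simp,
        Real.rpow_add hB, Real.rpow_one]
    have ha1 : a ^ (1 + p) = a * A := by
      rw [ha_def, ← Real.rpow_mul hA.le,
        show (1 / p) * (1 + p) = 1 / p + 1 by field_simp,
        Real.rpow_add hA, Real.rpow_one]
    have hS1 : S ^ (1 + p) = S * S ^ p := by rw [Real.rpow_add hS, Real.rpow_one]
    have hSp : (0:ℝ) < S ^ p := Real.rpow_pos_of_pos hS _
    rw [hb1, ha1, hS1, Real.rpow_neg hS.le]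
    field_simp
    ring
  have hCpos : 0 < ∫ x, (g₁ x + g₂ x) ^ (-p) ∂ν := by
    refine integral_pos_of_ae_pos hν ?_ hsum_int
    filter_upwards [hg₁pos, hg₂pos] with x h1 h2
    exact Real.rpow_pos_of_pos (by linarith) _
  have key : (A * B * S ^ (-p)) ^ (-(1 / p)) ≤ (∫ x, (g₁ x + g₂ x) ^ (-p) ∂ν) ^ (-(1 / p)) :=
    Real.rpow_le_rpow_of_nonpos hCpos (hval ▸ hC)
      (neg_nonpos.mpr (by positivity))
  have hfinal : (A * B * S ^ (-p)) ^ (-(1 / p)) = A ^ (-(1 / p)) + B ^ (-(1 / p)) := by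
    rw [Real.mul_rpow (mul_nonneg hA.le hB.le) (Real.rpow_nonneg hS.le _),
      Real.mul_rpow hA.le hB.le, ← Real.rpow_mul hS.le,
      show (-p) * -(1 / p) = 1 by field_simp, Real.rpow_one,
      Real.rpow_neg hA.le, Real.rpow_neg hB.le, ← ha_def, ← hb_def, hS_def]
    field_simp
    ring
  rw [ge_iff_le, ← hfinal]
  exact key
end

section
/- Let n ≥ 2 and let V ⊆ ℝⁿ be a linear subspace with 1 ≤ dim V ≤ n − 1, and let P : ℝⁿ → ℝⁿ denote the orthogonal projection onto V. Then ∫_{S^{n−1}} |Pξ|^{−n} dξ = ∞, where the integral is the Lebesgue integral (in the extended nonnegative reals, with 0^{−n} = ∞) with respect to the (n−1)-dimensional Hausdorff (surface) measure on the unit sphere S^{n−1}. -/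
open MeasureTheory ENNReal

noncomputable section

set_option maxHeartbeats 1600000 in
/-- if V is a proper nontrivial subspace of ℝⁿ and P the orthogonal
projection onto V, then ∫_{S^{n-1}} |Pξ|^{-n} dξ = ∞. -/
theorem integral_proj_norm_neg_pow_eq_top {n : ℕ} (hn : 2 ≤ n)
    (V : Submodule ℝ (EuclideanSpace ℝ (Fin n)))
    (hV1 : 1 ≤ Module.finrank ℝ V) (hV2 : Module.finrank ℝ V ≤ n - 1) :
    ∫⁻ ξ, (ENNReal.ofReal ‖(Submodule.orthogonalProjectionOnto V ξ : EuclideanSpace ℝ (Fin n))‖) ^ (-(n : ℝ))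
        ∂(sphereMeasure n) = ⊤ := by
  classical
  set E := EuclideanSpace ℝ (Fin n) with hE
  set k := Module.finrank ℝ V with hkdef
  set m := Module.finrank ℝ Vᗮ with hmdef
  have hkm : k + m = n := by
    have h := Submodule.finrank_add_finrank_orthogonal (K := V)
    rwa [finrank_euclideanSpace_fin] at h
  have hm1 : 1 ≤ m := by omega
  -- orthonormal family adapted to V
  let v : OrthonormalBasis (Fin k) ℝ V := stdOrthonormalBasis ℝ V
  let w : OrthonormalBasis (Fin m) ℝ Vᗮ := stdOrthonormalBasis ℝ Vᗮ
  let f : Fin k ⊕ Fin m → E := Sum.elim (fun i => (v i : E)) (fun j => (w j : E))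
  have hfV : ∀ i, f (Sum.inl i) ∈ V := fun i => (v i).2
  have hfVc : ∀ j, f (Sum.inr j) ∈ Vᗮ := fun j => (w j).2
  have hf : Orthonormal ℝ f := by
    rw [orthonormal_iff_ite]
    have hv := orthonormal_iff_ite.mp v.orthonormal
    have hw := orthonormal_iff_ite.mp w.orthonormal
    rintro (i | i) (j | j)
    · simpa [f, Submodule.coe_inner] using hv i j
    · simpa [f] using Submodule.inner_right_of_mem_orthogonal (hfV i) (hfVc j)
    · simpa [f] using Submodule.inner_left_of_mem_orthogonal (hfV j) (hfVc i)
    · simpa [f, Submodule.coe_inner] using hw i j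
  have hfnorm : ∀ a, ‖f a‖ = 1 := hf.1
  -- the distinguished direction and the index type for the chart
  let A₀ : Fin k ⊕ Fin m := Sum.inr ⟨m - 1, by omega⟩
  let ι := {a : Fin k ⊕ Fin m // a ≠ A₀}
  have hcard : Fintype.card ι = n - 1 := by
    have : Fintype.card ι = Fintype.card (Fin k ⊕ Fin m) - 1 := by
      simp [ι, Fintype.card_subtype_compl]
    simp [this, hkm]
  -- the 1-Lipschitz chart
  let φ : E → (ι → ℝ) := fun ξ i => inner ℝ (f i.1) ξ
  have hφ : LipschitzWith 1 φ := by
    rw [lipschitzWith_iff_dist_le_mul]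
    intro x y
    simp only [NNReal.coe_one, one_mul]
    refine (dist_pi_le_iff dist_nonneg).2 fun i => ?_
    rw [Real.dist_eq, ← inner_sub_right]
    calc |(inner ℝ (f i.1) (x - y) : ℝ)| ≤ ‖f i.1‖ * ‖x - y‖ := abs_real_inner_le_norm _ _
      _ = dist x y := by rw [hfnorm, one_mul, dist_eq_norm]
  -- key measure lower bound for the tube
  have key : ∀ ε : ℝ, 0 < ε → ε ≤ 1 →
      ENNReal.ofReal (ε / n) ^ (n - 1) ≤
        sphereMeasure n {ξ : E | ‖(Submodule.orthogonalProjectionOnto V ξ : E)‖ ≤ ε} := by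
    intro ε hε hε1
    set δ : ℝ := ε / (2 * n) with hδdef
    have hn0 : (0:ℝ) < n := by positivity
    have hδ : 0 < δ := by positivity
    set T : Set E := {ξ : E | ‖(Submodule.orthogonalProjectionOnto V ξ : E)‖ ≤ ε} with hT
    set S : Set E := Metric.sphere (0 : E) 1 with hS
    set A : Set E := T ∩ S with hA
    set B : Set (ι → ℝ) := Set.pi Set.univ (fun _ : ι => Set.Icc (-δ) δ) with hB
    -- B ⊆ φ '' A
    have hsub : B ⊆ φ '' A := by
      intro y hy
      have hyb : ∀ i, |y i| ≤ δ := fun i => abs_le.2 (hy i (Set.mem_univ i))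
      set s : ℝ := ∑ i : ι, (y i) ^ 2 with hsdef
      have hs0 : 0 ≤ s := Finset.sum_nonneg fun i _ => sq_nonneg _
      have hsle : s ≤ ε ^ 2 / 4 := by
        calc s ≤ ∑ _i : ι, δ ^ 2 := Finset.sum_le_sum fun i _ => by
              calc (y i) ^ 2 = |y i| ^ 2 := (sq_abs _).symm
                _ ≤ δ ^ 2 := pow_le_pow_left₀ (abs_nonneg _) (hyb i) 2
          _ = (n - 1 : ℕ) * δ ^ 2 := by
              rw [Finset.sum_const, Finset.card_univ, hcard, nsmul_eq_mul]
          _ ≤ n * δ ^ 2 := by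
              have : ((n - 1 : ℕ) : ℝ) ≤ (n : ℝ) := by
                exact_mod_cast Nat.sub_le n 1
              nlinarith [sq_nonneg δ]
          _ ≤ ε ^ 2 / 4 := by
              rw [hδdef]
              have h1n : (1:ℝ) ≤ n := by exact_mod_cast Nat.one_le_of_lt hn
              have h4 : (n:ℝ) * (ε / (2 * n)) ^ 2 = ε ^ 2 / (4 * n) := by
                field_simp
                ring
              rw [h4]
              have h44 : (4:ℝ) ≤ 4 * (n:ℝ) := by nlinarith
              exact div_le_div_of_nonneg_left (sq_nonneg ε) (by norm_num : (0:ℝ) < 4) h44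
      have hs1 : s ≤ 1 := by nlinarith
      set t : ℝ := Real.sqrt (1 - s) with htdef
      have ht0 : 0 ≤ t := Real.sqrt_nonneg _
      have ht2 : t ^ 2 = 1 - s := Real.sq_sqrt (by linarith)
      -- coefficients
      set c : Fin k ⊕ Fin m → ℝ := fun a => if h : a = A₀ then t else y ⟨a, h⟩ with hc
      set ξ : E := ∑ a, c a • f a with hξ
      have hsum_split : ∀ g : (Fin k ⊕ Fin m) → ℝ,
          ∑ a, g a = g A₀ + ∑ i : ι, g i.1 := by
        intro g
        have hst := Finset.sum_subtype (p := fun a => a ≠ A₀) (F := by infer_instance)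
          (s := Finset.univ.erase A₀) (fun a => by simp) g
        rw [← Finset.sum_erase_add _ _ (Finset.mem_univ A₀), hst, add_comm]
      have hcsq : ∑ a, (c a) ^ 2 = 1 := by
        rw [hsum_split (fun a => (c a) ^ 2)]
        have h1 : c A₀ = t := by simp [hc]
        have h2 : ∀ i : ι, c i.1 = y i := fun i => by
          simp only [hc]; rw [dif_neg i.2]
        simp only [h1]
        rw [Finset.sum_congr rfl (fun i _ => by rw [h2 i])]
        rw [ht2, ← hsdef]; ring
      have hξnorm : ‖ξ‖ = 1 := by
        have : (inner ℝ ξ ξ : ℝ) = ∑ a, (c a) ^ 2 := by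
          rw [hξ, hf.inner_sum]
          simp [sq, starRingEnd_apply, star_trivial]
        have hns : ‖ξ‖ ^ 2 = 1 := by
          rw [← real_inner_self_eq_norm_sq, this, hcsq]
        nlinarith [norm_nonneg ξ, hns]
      -- projection bound
      have hproj : ‖(Submodule.orthogonalProjectionOnto V ξ : E)‖ ≤ ε := by
        have hPsum : (Submodule.orthogonalProjectionOnto V ξ : E)
            = ∑ i : Fin k, c (Sum.inl i) • f (Sum.inl i) := by
          have hrfl : (Submodule.orthogonalProjectionOnto V ξ : E)
              = (V.subtypeL.comp (Submodule.orthogonalProjectionOnto V)) ξ := rfl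
          rw [hrfl, hξ, map_sum, Fintype.sum_sum_type]
          have hz : ∀ j : Fin m, (V.subtypeL.comp (Submodule.orthogonalProjectionOnto V))
              (c (Sum.inr j) • f (Sum.inr j)) = 0 := by
            intro j
            rw [(V.subtypeL.comp (Submodule.orthogonalProjectionOnto V)).map_smul]
            have hzz : Submodule.orthogonalProjectionOnto V (f (Sum.inr j)) = 0 :=
              Submodule.orthogonalProjectionOnto_apply_of_mem_orthogonal (hfVc j)
            simp [ContinuousLinearMap.comp_apply, hzz]
          have ho : ∀ i : Fin k, (V.subtypeL.comp (Submodule.orthogonalProjectionOnto V))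
              (c (Sum.inl i) • f (Sum.inl i)) = c (Sum.inl i) • f (Sum.inl i) := by
            intro i
            rw [(V.subtypeL.comp (Submodule.orthogonalProjectionOnto V)).map_smul]
            have hoo : ((Submodule.orthogonalProjectionOnto V (f (Sum.inl i)) : V) : E) = f (Sum.inl i) :=
              Submodule.starProjection_eq_self_iff.2 (hfV i)
            simp [ContinuousLinearMap.comp_apply, hoo]
          simp only [hz, ho]
          simp
        have horth : Orthonormal ℝ (f ∘ Sum.inl) :=
          hf.comp Sum.inl Sum.inl_injective
        have hPsum' : (Submodule.orthogonalProjectionOnto V ξ : E)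
            = ∑ i : Fin k, (c ∘ Sum.inl) i • (f ∘ Sum.inl) i := by
          rw [hPsum]; simp [Function.comp]
        have hnorm2 : ‖(Submodule.orthogonalProjectionOnto V ξ : E)‖ ^ 2
            = ∑ i : Fin k, (c (Sum.inl i)) ^ 2 := by
          rw [hPsum', ← real_inner_self_eq_norm_sq,
            horth.inner_sum (c ∘ Sum.inl) (c ∘ Sum.inl) Finset.univ]
          simp [sq, starRingEnd_apply, star_trivial, Function.comp]
        have hle : ∑ i : Fin k, (c (Sum.inl i)) ^ 2 ≤ s := by
          have h2 : ∀ i : Fin k, c (Sum.inl i)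
              = y ⟨Sum.inl i, by simp [A₀]⟩ := by
            intro i; simp only [hc]; rw [dif_neg (by simp [A₀])]
          rw [Finset.sum_congr rfl (fun i _ => by rw [h2 i])]
          rw [hsdef]
          calc ∑ i : Fin k, (y ⟨Sum.inl i, by simp [A₀]⟩) ^ 2
              = ∑ a ∈ Finset.univ.image
                  (fun i : Fin k => (⟨Sum.inl i, by simp [A₀]⟩ : ι)), (y a) ^ 2 := by
                rw [Finset.sum_image]
                intro a _ b _ h
                have := congrArg Subtype.val h
                simpa using this
            _ ≤ ∑ a : ι, (y a) ^ 2 :=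
                Finset.sum_le_sum_of_subset_of_nonneg (Finset.subset_univ _)
                  (fun a _ _ => sq_nonneg _)
        have : ‖(Submodule.orthogonalProjectionOnto V ξ : E)‖ ^ 2 ≤ ε ^ 2 := by
          rw [hnorm2]; nlinarith
        nlinarith [norm_nonneg ((Submodule.orthogonalProjectionOnto V ξ : E)), sq_nonneg ε, hε]
      refine ⟨ξ, ⟨hproj, ?_⟩, ?_⟩
      · rw [hS, mem_sphere_zero_iff_norm]; exact hξnorm
      · funext i
        show (inner ℝ (f i.1) ξ : ℝ) = y i
        rw [hξ]
        exact (hf.inner_right_fintype c i.1).trans (by simp only [hc]; rw [dif_neg i.2])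
    -- measure computation
    have hTmeas : MeasurableSet T := by
      have : Continuous fun ξ : E => ‖(Submodule.orthogonalProjectionOnto V ξ : E)‖ :=
        (continuous_subtype_val.comp (Submodule.orthogonalProjectionOnto V).continuous).norm
      exact (isClosed_le this continuous_const).measurableSet
    have hμA : sphereMeasure n T = μH[(n : ℝ) - 1] A := by
      show ((μH[(n : ℝ) - 1]).restrict (Metric.sphere (0 : E) 1)) T = μH[(n : ℝ) - 1] A
      rw [Measure.restrict_apply hTmeas, hA]
    have hdim : ((n : ℝ) - 1) = ((Fintype.card ι : ℕ) : ℝ) := by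
      rw [hcard]
      have : (1:ℕ) ≤ n := by omega
      push_cast [Nat.cast_sub this]
      ring
    have hvolB : volume B = ENNReal.ofReal (ε / n) ^ (n - 1) := by
      rw [hB, volume_pi_pi]
      have : ∀ _i : ι, volume (Set.Icc (-δ) δ) = ENNReal.ofReal (ε / n) := by
        intro i
        rw [Real.volume_Icc]
        congr 1
        rw [hδdef]; ring
      rw [Finset.prod_congr rfl (fun i _ => this i)]
      rw [Finset.prod_const, Finset.card_univ, hcard]
    calc ENNReal.ofReal (ε / n) ^ (n - 1) = volume B := hvolB.symm
      _ = μH[(n : ℝ) - 1] B := by rw [hdim]; rw [hausdorffMeasure_pi_real]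
      _ ≤ μH[(n : ℝ) - 1] (φ '' A) := measure_mono hsub
      _ ≤ μH[(n : ℝ) - 1] A := by
          have hge : (0:ℝ) ≤ (n : ℝ) - 1 := by
            have : (1:ℝ) ≤ (n:ℝ) := by exact_mod_cast (by omega : 1 ≤ n)
            linarith
          have := hφ.hausdorffMeasure_image_le hge A
          simpa using this
      _ = sphereMeasure n T := hμA.symm
  -- from the tube bound to divergence of the integral
  set C : ℝ≥0∞ := ENNReal.ofReal ((n : ℝ)⁻¹) ^ (n - 1) with hCdef
  have hn0 : (0:ℝ) < n := by positivity
  have hC0 : C ≠ 0 := by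
    apply pow_ne_zero
    simp only [ne_eq, ENNReal.ofReal_eq_zero, not_le]
    positivity
  have main : ∀ j : ℕ, C * (j : ℝ≥0∞) ≤
      ∫⁻ ξ, (ENNReal.ofReal ‖(Submodule.orthogonalProjectionOnto V ξ : E)‖) ^ (-(n : ℝ))
        ∂(sphereMeasure n) := by
    intro j
    set ε : ℝ := ((j : ℝ) + 1)⁻¹ with hεdef
    have hε : 0 < ε := by positivity
    have hε1 : ε ≤ 1 := by
      rw [hεdef]
      rw [inv_le_one_iff₀]
      right
      have : (0:ℝ) ≤ (j:ℝ) := Nat.cast_nonneg j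
      linarith
    set T : Set E := {ξ : E | ‖(Submodule.orthogonalProjectionOnto V ξ : E)‖ ≤ ε} with hT
    have hTmeas : MeasurableSet T := by
      have : Continuous fun ξ : E => ‖(Submodule.orthogonalProjectionOnto V ξ : E)‖ :=
        (continuous_subtype_val.comp (Submodule.orthogonalProjectionOnto V).continuous).norm
      exact (isClosed_le this continuous_const).measurableSet
    have hkey := key ε hε hε1
    have hpt : ∀ ξ : E, T.indicator (fun _ => (ENNReal.ofReal ε) ^ (-(n : ℝ))) ξ ≤
        (ENNReal.ofReal ‖(Submodule.orthogonalProjectionOnto V ξ : E)‖) ^ (-(n : ℝ)) := by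
      intro ξ
      by_cases hξ : ξ ∈ T
      · rw [Set.indicator_of_mem hξ]
        rw [ENNReal.rpow_neg, ENNReal.rpow_neg]
        apply ENNReal.inv_le_inv'
        exact ENNReal.rpow_le_rpow (ENNReal.ofReal_le_ofReal hξ) (by positivity)
      · rw [Set.indicator_of_notMem hξ]
        exact zero_le
    have hstep1 : (ENNReal.ofReal ε) ^ (-(n : ℝ)) * sphereMeasure n T ≤
        ∫⁻ ξ, (ENNReal.ofReal ‖(Submodule.orthogonalProjectionOnto V ξ : E)‖) ^ (-(n : ℝ))
          ∂(sphereMeasure n) := by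
      rw [← lintegral_indicator_const hTmeas]
      exact lintegral_mono hpt
    have hstep2 : (ENNReal.ofReal ε) ^ (-(n : ℝ)) * (ENNReal.ofReal (ε / n)) ^ (n - 1) ≤
        (ENNReal.ofReal ε) ^ (-(n : ℝ)) * sphereMeasure n T :=
      mul_le_mul_right hkey _
    have hcomp : (ENNReal.ofReal ε) ^ (-(n : ℝ)) * (ENNReal.ofReal (ε / n)) ^ (n - 1)
        = C * (ENNReal.ofReal ε)⁻¹ := by
      have h1 : ENNReal.ofReal (ε / n) = ENNReal.ofReal ε * ENNReal.ofReal ((n : ℝ)⁻¹) := by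
        rw [← ENNReal.ofReal_mul hε.le, div_eq_mul_inv]
      rw [h1, mul_pow]
      have h2 : (ENNReal.ofReal ε) ^ (-(n : ℝ)) * (ENNReal.ofReal ε) ^ (n - 1)
          = (ENNReal.ofReal ε)⁻¹ := by
        rw [← ENNReal.rpow_natCast (ENNReal.ofReal ε) (n - 1)]
        rw [← ENNReal.rpow_add _ _ (by simp [hε] : ENNReal.ofReal ε ≠ 0)
          ENNReal.ofReal_ne_top]
        have hexp : -(n : ℝ) + ((n - 1 : ℕ) : ℝ) = -1 := by
          have h1n : (1:ℕ) ≤ n := by omega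
          push_cast [Nat.cast_sub h1n]
          ring
        rw [hexp, ENNReal.rpow_neg_one]
      calc (ENNReal.ofReal ε) ^ (-(n : ℝ)) *
            ((ENNReal.ofReal ε) ^ (n - 1) * (ENNReal.ofReal ((n : ℝ)⁻¹)) ^ (n - 1))
          = ((ENNReal.ofReal ε) ^ (-(n : ℝ)) * (ENNReal.ofReal ε) ^ (n - 1)) * C := by
            rw [hCdef]; ring
        _ = C * (ENNReal.ofReal ε)⁻¹ := by rw [h2]; ring
    have hinv : C * (j : ℝ≥0∞) ≤ C * (ENNReal.ofReal ε)⁻¹ := by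
      apply mul_le_mul_right
      rw [hεdef, ENNReal.ofReal_inv_of_pos (by positivity), inv_inv]
      calc (j : ℝ≥0∞) = ENNReal.ofReal (j : ℝ) := by rw [ENNReal.ofReal_natCast]
        _ ≤ ENNReal.ofReal ((j : ℝ) + 1) := ENNReal.ofReal_le_ofReal (by linarith)
    calc C * (j : ℝ≥0∞) ≤ C * (ENNReal.ofReal ε)⁻¹ := hinv
      _ = (ENNReal.ofReal ε) ^ (-(n : ℝ)) * (ENNReal.ofReal (ε / n)) ^ (n - 1) := hcomp.symm
      _ ≤ (ENNReal.ofReal ε) ^ (-(n : ℝ)) * sphereMeasure n T := hstep2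
      _ ≤ _ := hstep1
  refine top_unique ?_
  calc (⊤ : ℝ≥0∞) = C * ⊤ := (ENNReal.mul_top hC0).symm
    _ = C * ⨆ j : ℕ, (j : ℝ≥0∞) := by rw [ENNReal.iSup_natCast]
    _ = ⨆ j : ℕ, C * (j : ℝ≥0∞) := by rw [ENNReal.mul_iSup]
    _ ≤ _ := iSup_le main

end
end

section
/- Let Ω ⊆ ℝⁿ be a measurable set with 0 < |Ω| < ∞ (Lebesgue measure) and let r ≥ 1. For every u ∈ L^r(Ω) there exists a unique real number m such that ∫_Ω |u(x) − m|^{r−1} (u(x) − m) dx = 0. -/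
open MeasureTheory

noncomputable def phiF (r t : ℝ) : ℝ := |t| ^ (r - 1) * t

lemma phiF_neg (r t : ℝ) : phiF r (-t) = - phiF r t := by
  simp [phiF, mul_neg]

lemma phiF_zero (r : ℝ) : phiF r 0 = 0 := by simp [phiF]

lemma phiF_of_nonneg {r t : ℝ} (hr : 1 ≤ r) (ht : 0 ≤ t) : phiF r t = t ^ r := by
  rcases ht.eq_or_lt with h | h
  · rw [← h]
    simp [phiF, Real.zero_rpow (by linarith : r ≠ 0)]
  · rw [phiF, abs_of_pos h]
    calc t ^ (r-1) * t = t ^ (r-1) * t ^ (1:ℝ) := by rw [Real.rpow_one]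
      _ = t ^ (r - 1 + 1) := (Real.rpow_add h _ _).symm
      _ = t ^ r := by norm_num

lemma phiF_strictMono {r : ℝ} (hr : 1 ≤ r) : StrictMono (phiF r) := by
  have key : ∀ a b : ℝ, 0 ≤ a → a < b → phiF r a < phiF r b := by
    intro a b ha hab
    rw [phiF_of_nonneg hr ha, phiF_of_nonneg hr (ha.trans hab.le)]
    exact Real.rpow_lt_rpow ha hab (by linarith)
  intro a b hab
  rcases le_or_gt 0 a with ha | ha
  · exact key a b ha hab
  · rcases le_or_gt b 0 with hb | hb
    · have : phiF r (-b) < phiF r (-a) := key _ _ (by linarith) (by linarith)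
      rw [phiF_neg, phiF_neg] at this
      linarith
    · have h1 : phiF r a < 0 :=
        mul_neg_of_pos_of_neg (Real.rpow_pos_of_pos (abs_pos.mpr ha.ne) _) ha
      have h2 : 0 < phiF r b :=
        mul_pos (Real.rpow_pos_of_pos (abs_pos.mpr hb.ne') _) hb
      linarith

lemma phiF_abs {r : ℝ} (hr : 1 ≤ r) (t : ℝ) : |phiF r t| = |t| ^ r := by
  have : |phiF r t| = phiF r |t| := by
    rw [phiF, phiF, abs_mul, abs_abs, abs_of_nonneg (Real.rpow_nonneg (abs_nonneg t) _)]
  rw [this, phiF_of_nonneg hr (abs_nonneg t)]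

lemma phiF_continuous {r : ℝ} (hr : 1 ≤ r) : Continuous (phiF r) := by
  apply Continuous.mul _ continuous_id
  refine continuous_iff_continuousAt.mpr fun t => ?_
  exact (Real.continuousAt_rpow_const _ _ (Or.inr (by linarith))).comp
    continuous_abs.continuousAt

lemma rpow_superadd {x y p : ℝ} (hx : 0 ≤ x) (hy : 0 ≤ y) (hp : 1 ≤ p) :
    x ^ p + y ^ p ≤ (x + y) ^ p := by
  have h := NNReal.add_rpow_le_rpow_add x.toNNReal y.toNNReal hp
  have h2 : ((x.toNNReal ^ p + y.toNNReal ^ p : NNReal) : ℝ)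
      ≤ (((x.toNNReal + y.toNNReal) ^ p : NNReal) : ℝ) := by exact_mod_cast h
  rw [NNReal.coe_add, NNReal.coe_rpow, NNReal.coe_rpow, NNReal.coe_rpow, NNReal.coe_add,
    Real.coe_toNNReal x hx, Real.coe_toNNReal y hy] at h2
  exact h2

lemma phiF_key {r : ℝ} (hr : 1 ≤ r) (a m : ℝ) (hm : 0 ≤ m) :
    phiF r (a - m) ≤ phiF r (max a 0) - phiF r (m / 2) := by
  have mono := (phiF_strictMono hr).monotone
  have hm2 : (0:ℝ) ≤ m / 2 := by linarith
  have hmax : (0:ℝ) ≤ phiF r (max a 0) := by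
    have := mono (le_max_right a 0); rwa [phiF_zero] at this
  rcases le_or_gt a (m / 2) with ha | ha
  · have h1 : phiF r (a - m) ≤ phiF r (-(m/2)) := mono (by linarith)
    rw [phiF_neg] at h1
    linarith
  · have hmax_eq : max a 0 = a := max_eq_left (by linarith)
    rcases le_or_gt (a - m) 0 with hb | hb
    · have h1 : phiF r (a - m) ≤ 0 := by
        have := mono hb; rwa [phiF_zero] at this
      have h2 : phiF r (m/2) ≤ phiF r a := mono (by linarith)
      rw [hmax_eq]; linarith
    · rw [hmax_eq, phiF_of_nonneg hr hb.le, phiF_of_nonneg hr hm2,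
        phiF_of_nonneg hr (by linarith : (0:ℝ) ≤ a)]
      have h1 : (m/2) ^ r ≤ m ^ r := Real.rpow_le_rpow hm2 (by linarith) (by linarith)
      have h2 : (a - m) ^ r + m ^ r ≤ (a - m + m) ^ r := rpow_superadd hb.le hm hr
      have h3 : a - m + m = a := by ring
      rw [h3] at h2
      linarith

lemma integrable_phiF {α : Type*} [MeasurableSpace α] {μ : Measure α}
    {r : ℝ} (hr : 1 ≤ r) {u : α → ℝ} (hu : MemLp u (ENNReal.ofReal r) μ) (c : ℝ)
    [IsFiniteMeasure μ] :
    Integrable (fun x => phiF r (u x - c)) μ := by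
  have hrpos : (0:ℝ) < r := by linarith
  have hp0 : (ENNReal.ofReal r) ≠ 0 := by
    simp only [ne_eq, ENNReal.ofReal_eq_zero, not_le]; linarith
  have huc : MemLp (fun x => u x - c) (ENNReal.ofReal r) μ := hu.sub (memLp_const c)
  have hint := huc.integrable_norm_rpow hp0 ENNReal.ofReal_ne_top
  rw [ENNReal.toReal_ofReal hrpos.le] at hint
  refine hint.mono' ((phiF_continuous hr).comp_aestronglyMeasurable huc.aestronglyMeasurable) ?_
  filter_upwards with x
  rw [Real.norm_eq_abs, phiF_abs hr, Real.norm_eq_abs]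

lemma integrable_phiF_max {α : Type*} [MeasurableSpace α] {μ : Measure α}
    {r : ℝ} (hr : 1 ≤ r) {u : α → ℝ} (hu : MemLp u (ENNReal.ofReal r) μ) :
    Integrable (fun x => phiF r (max (u x) 0)) μ := by
  have hrpos : (0:ℝ) < r := by linarith
  have hp0 : (ENNReal.ofReal r) ≠ 0 := by
    simp only [ne_eq, ENNReal.ofReal_eq_zero, not_le]; linarith
  have hint := hu.integrable_norm_rpow hp0 ENNReal.ofReal_ne_top
  rw [ENNReal.toReal_ofReal hrpos.le] at hint
  have hmeas : AEStronglyMeasurable (fun x => phiF r (max (u x) 0)) μ := by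
    apply (phiF_continuous hr).comp_aestronglyMeasurable
    exact hu.aestronglyMeasurable.sup aestronglyMeasurable_const
  refine hint.mono' hmeas ?_
  filter_upwards with x
  rw [Real.norm_eq_abs, phiF_abs hr, Real.norm_eq_abs]
  apply Real.rpow_le_rpow (abs_nonneg _) _ hrpos.le
  rw [abs_of_nonneg (le_max_right (u x) 0)]
  exact max_le (le_abs_self _) (abs_nonneg _)

lemma exists_integral_phiF_nonpos {α : Type*} [MeasurableSpace α] {μ : Measure α}
    [IsFiniteMeasure μ] (hμ : μ Set.univ ≠ 0)
    {r : ℝ} (hr : 1 ≤ r) {u : α → ℝ} (hu : MemLp u (ENNReal.ofReal r) μ) :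
    ∃ m : ℝ, ∫ x, phiF r (u x - m) ∂μ ≤ 0 := by
  set V := (μ Set.univ).toReal with hV
  have hVpos : 0 < V := ENNReal.toReal_pos hμ (measure_ne_top μ _)
  set I := ∫ x, phiF r (max (u x) 0) ∂μ with hI
  set s := max 1 (I / V) with hs
  have hs1 : (1:ℝ) ≤ s := le_max_left _ _
  refine ⟨2 * s, ?_⟩
  have key : ∀ x, phiF r (u x - 2*s) ≤ phiF r (max (u x) 0) - phiF r s := by
    intro x
    have h := phiF_key hr (u x) (2*s) (by linarith)
    rwa [show 2*s/2 = s by ring] at h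
  have hint1 : Integrable (fun x => phiF r (u x - 2*s)) μ := integrable_phiF hr hu _
  have hintmax := integrable_phiF_max hr hu
  have hint2 : Integrable (fun x => phiF r (max (u x) 0) - phiF r s) μ :=
    hintmax.sub (integrable_const _)
  have hle : ∫ x, phiF r (u x - 2*s) ∂μ
      ≤ ∫ x, (phiF r (max (u x) 0) - phiF r s) ∂μ := integral_mono hint1 hint2 key
  rw [integral_sub hintmax (integrable_const _), integral_const, smul_eq_mul] at hle
  have hsr : I / V ≤ phiF r s := by
    rw [phiF_of_nonneg hr (by linarith)]
    calc I / V ≤ s := le_max_right _ _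
      _ = s ^ (1:ℝ) := (Real.rpow_one s).symm
      _ ≤ s ^ r := Real.rpow_le_rpow_of_exponent_le hs1 hr
  have hIle : I ≤ V * phiF r s := by
    rw [div_le_iff₀ hVpos] at hsr; linarith
  calc ∫ x, phiF r (u x - 2*s) ∂μ ≤ I - V * phiF r s := hle
    _ ≤ 0 := by linarith

/-- for u ∈ L^r(Ω) on a set of finite positive measure there is a unique real
number m with ∫_Ω |u − m|^{r−1}(u − m) dx = 0 (the powers are real powers, with 0^0 = 1, so
that for r = 1 the condition reads ∫_Ω (u − m) dx = 0). -/
theorem exists_unique_generalized_median {n : ℕ}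
    (Ω : Set (EuclideanSpace ℝ (Fin n))) (hΩm : MeasurableSet Ω)
    (hΩpos : 0 < volume Ω) (hΩfin : volume Ω < ⊤)
    (r : ℝ) (hr : 1 ≤ r) (u : EuclideanSpace ℝ (Fin n) → ℝ)
    (hu : MemLp u (ENNReal.ofReal r) (volume.restrict Ω)) :
    ∃! m : ℝ, ∫ x in Ω, |u x - m| ^ (r - 1) * (u x - m) = 0 := by
  have hrpos : (0:ℝ) < r := by linarith
  set μ := volume.restrict Ω with hμdef
  haveI : IsFiniteMeasure μ := ⟨by rwa [Measure.restrict_apply_univ]⟩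
  have hμuniv : μ Set.univ ≠ 0 := by
    rw [Measure.restrict_apply_univ]; exact hΩpos.ne'
  set F : ℝ → ℝ := fun m => ∫ x, phiF r (u x - m) ∂μ with hFdef
  have hgoal : ∀ m : ℝ, (∫ x in Ω, |u x - m| ^ (r - 1) * (u x - m)) = F m := fun m => rfl
  -- continuity of F
  have hFcont : Continuous F := by
    rw [continuous_iff_continuousAt]
    intro m0
    apply continuousAt_of_dominated (bound := fun x => (‖u x‖ + (|m0| + 1)) ^ r)
    · filter_upwards with m
      exact (phiF_continuous hr).comp_aestronglyMeasurable
        ((hu.sub (memLp_const m)).aestronglyMeasurable)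
    · filter_upwards [Metric.ball_mem_nhds m0 one_pos] with m hm
      filter_upwards with x
      rw [Real.norm_eq_abs, phiF_abs hr]
      apply Real.rpow_le_rpow (abs_nonneg _) _ hrpos.le
      have h1 : |m - m0| < 1 := by simpa [Real.dist_eq] using hm
      have h2 : |m| ≤ |m0| + 1 := by
        have := abs_sub_abs_le_abs_sub m m0
        linarith
      calc |u x - m| ≤ |u x| + |m| := abs_sub (u x) m
        _ ≤ ‖u x‖ + (|m0| + 1) := by rw [Real.norm_eq_abs]; linarith
    · have hp0 : (ENNReal.ofReal r) ≠ 0 := by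
        simp only [ne_eq, ENNReal.ofReal_eq_zero, not_le]; linarith
      have h1 : MemLp (fun x => ‖u x‖ + (|m0| + 1)) (ENNReal.ofReal r) μ :=
        hu.norm.add (memLp_const _)
      have h2 := h1.integrable_norm_rpow hp0 ENNReal.ofReal_ne_top
      rw [ENNReal.toReal_ofReal hrpos.le] at h2
      refine h2.congr ?_
      filter_upwards with x
      rw [Real.norm_eq_abs, abs_of_nonneg (by positivity)]
    · filter_upwards with x
      exact ((phiF_continuous hr).comp (continuous_const.sub continuous_id)).continuousAt
  -- strict antitonicity of F
  have hanti : ∀ m m' : ℝ, m < m' → F m' < F m := by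
    intro m m' hmm
    have hpos : ∀ x, 0 < phiF r (u x - m) - phiF r (u x - m') := fun x =>
      sub_pos.mpr (phiF_strictMono hr (by linarith : u x - m' < u x - m))
    have hint : Integrable (fun x => phiF r (u x - m) - phiF r (u x - m')) μ :=
      (integrable_phiF hr hu m).sub (integrable_phiF hr hu m')
    have h0 : 0 < ∫ x, (phiF r (u x - m) - phiF r (u x - m')) ∂μ := by
      rw [integral_pos_iff_support_of_nonneg_ae
        (Filter.Eventually.of_forall fun x => (hpos x).le) hint]
      have hsupp : Function.support (fun x => phiF r (u x - m) - phiF r (u x - m'))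
          = Set.univ := Set.eq_univ_iff_forall.mpr fun x => (hpos x).ne'
      rw [hsupp]
      exact hμuniv.bot_lt
    rw [integral_sub (integrable_phiF hr hu m) (integrable_phiF hr hu m')] at h0
    simpa [hFdef] using sub_pos.mp (by linarith : 0 < F m - F m')
  have hanti_le : ∀ m m' : ℝ, m ≤ m' → F m' ≤ F m := fun m m' h =>
    h.lt_or_eq.elim (fun h => (hanti _ _ h).le) (fun h => by rw [h])
  -- existence of sign changes
  obtain ⟨m1, hm1⟩ := exists_integral_phiF_nonpos hμuniv hr hu
  obtain ⟨m2, hm2⟩ := exists_integral_phiF_nonpos hμuniv hr hu.neg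
  simp only [Pi.neg_apply] at hm2
  have hm2' : 0 ≤ F (-m2) := by
    have hptw : ∀ x, phiF r (u x - (-m2)) = - phiF r (-u x - m2) := fun x => by
      rw [show -u x - m2 = -(u x - (-m2)) by ring, phiF_neg, neg_neg]
    have : F (-m2) = - ∫ x, phiF r (-u x - m2) ∂μ := by
      rw [hFdef]
      simp only [hptw]
      exact integral_neg _
    rw [this]
    linarith
  set a := min (-m2) m1 with ha
  set b := max (-m2) m1 with hb
  have hab : a ≤ b := min_le_left _ _ |>.trans (le_max_left _ _)
  have hFa : 0 ≤ F a := le_trans hm2' (hanti_le a (-m2) (min_le_left _ _))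
  have hFb : F b ≤ 0 := le_trans (hanti_le m1 b (le_max_right _ _)) hm1
  obtain ⟨m, _, hFm⟩ := intermediate_value_Icc' hab hFcont.continuousOn ⟨hFb, hFa⟩
  refine ⟨m, ?_, ?_⟩
  · show F m = 0
    exact hFm
  · intro y hy
    have hy : F y = 0 := hy
    rcases lt_trichotomy y m with h | h | h
    · have := hanti y m h
      rw [hy, hFm] at this
      exact absurd this (lt_irrefl 0)
    · exact h
    · have := hanti m y h
      rw [hy, hFm] at this
      exact absurd this (lt_irrefl 0)
end

section
/- Let Ω ⊆ ℝⁿ be a measurable set with 0 < |Ω| < ∞ (Lebesgue measure), let r ≥ 1, and let m_r : L^r(Ω) → ℝ be the unique function satisfying ∫_Ω |u(x) − m_r(u)|^{r−1} (u(x) − m_r(u)) dx = 0 for every u ∈ L^r(Ω). Then: (i) m_r is continuous with respect to the L^r norm; (ii) m_r is 1-homogeneous, i.e. m_r(t u) = t m_r(u) for every t ∈ ℝ and u ∈ L^r(Ω); and (iii) there exists a constant C > 0 such that |m_r(u)| ≤ C ‖u‖_{L^r(Ω)} for all u ∈ L^r(Ω). -/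
open MeasureTheory Real

section GMPAux

lemma gmp_g_eq {r t : ℝ} (hr : 1 ≤ r) (ht : 0 ≤ t) : |t| ^ (r - 1) * t = t ^ r := by
  rw [abs_of_nonneg ht]
  rcases eq_or_lt_of_le ht with h | h
  · subst h  -- maybe wrong direction
    simp [Real.zero_rpow (by linarith : r ≠ 0)]
  · rw [← Real.rpow_add_one h.ne' (r - 1), sub_add_cancel]

lemma gmp_g_neg (r t : ℝ) : |(-t)| ^ (r - 1) * (-t) = -(|t| ^ (r - 1) * t) := by
  rw [abs_neg]; ring

lemma gmp_abs_g {r : ℝ} (hr : 1 ≤ r) (t : ℝ) : abs (|t| ^ (r - 1) * t) = |t| ^ r := by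
  have h := gmp_g_eq hr (abs_nonneg t)
  rw [abs_abs] at h
  rw [abs_mul, abs_of_nonneg (Real.rpow_nonneg (abs_nonneg t) _), h]

lemma gmp_g_neg_eq {r a : ℝ} (hr : 1 ≤ r) (ha : a ≤ 0) : |a| ^ (r - 1) * a = -((-a) ^ r) := by
  have h := gmp_g_eq hr (t := -a) (by linarith)
  rw [abs_neg] at h
  linarith [h]

lemma gmp_g_mul {r : ℝ} (s t : ℝ) : |s * t| ^ (r - 1) * (s * t)
    = (|s| ^ (r - 1) * s) * (|t| ^ (r - 1) * t) := by
  rw [abs_mul, Real.mul_rpow (abs_nonneg s) (abs_nonneg t)]; ring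

lemma gmp_strictMono {r : ℝ} (hr : 1 ≤ r) : StrictMono (fun t : ℝ => |t| ^ (r - 1) * t) := by
  have hr0 : (0:ℝ) < r := by linarith
  intro a b hab
  simp only
  rcases le_or_gt 0 a with ha | ha
  · rw [gmp_g_eq hr ha, gmp_g_eq hr (ha.trans hab.le)]
    exact Real.rpow_lt_rpow ha hab hr0
  · rcases le_or_gt 0 b with hb | hb
    · have h1 : |a| ^ (r - 1) * a < 0 := by
        have : |a| ^ (r-1) * a = -(|(-a)| ^ (r-1) * (-a)) := by rw [gmp_g_neg]; ring_nf
        rw [this, gmp_g_eq hr (by linarith : (0:ℝ) ≤ -a)]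
        have := Real.rpow_pos_of_pos (by linarith : (0:ℝ) < -a) r
        linarith
      have h2 : 0 ≤ |b| ^ (r - 1) * b := by
        rw [gmp_g_eq hr hb]; exact Real.rpow_nonneg hb r
      linarith
    · have ea : |a| ^ (r-1) * a = -((-a) ^ r) := gmp_g_neg_eq hr ha.le
      have eb : |b| ^ (r-1) * b = -((-b) ^ r) := gmp_g_neg_eq hr hb.le
      rw [ea, eb, neg_lt_neg_iff]
      exact Real.rpow_lt_rpow (by linarith) (by linarith) hr0

lemma gmp_bernoulli {r x y : ℝ} (hr : 1 ≤ r) (hy : 0 ≤ y) (hxy : y ≤ x) :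
    x ^ r - y ^ r ≤ r * x ^ (r - 1) * (x - y) := by
  rcases eq_or_lt_of_le (hy.trans hxy) with hx | hx
  · have hx0 : x = 0 := hx.symm
    have hy0 : y = 0 := le_antisymm (hx0 ▸ hxy) hy
    simp [hx0, hy0]
  · have hs : (-1:ℝ) ≤ y / x - 1 := by
      have : 0 ≤ y / x := div_nonneg hy hx.le
      linarith
    have h1 := one_add_mul_self_le_rpow_one_add hs hr
    have h2 : (1 + (y / x - 1)) = y / x := by ring
    rw [h2, Real.div_rpow hy hx.le] at h1
    have hxr : (0:ℝ) < x ^ r := Real.rpow_pos_of_pos hx r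
    have h3 : (1 + r * (y / x - 1)) * x ^ r ≤ y ^ r := by
      calc (1 + r * (y / x - 1)) * x ^ r ≤ (y ^ r / x ^ r) * x ^ r :=
            mul_le_mul_of_nonneg_right h1 hxr.le
        _ = y ^ r := div_mul_cancel₀ _ hxr.ne'
    have hx1 : x ^ r = x ^ (r - 1) * x := by
      rw [← Real.rpow_add_one hx.ne' (r - 1), sub_add_cancel]
    have h4 : (y / x) * x ^ r = y * x ^ (r - 1) := by
      rw [hx1]; field_simp
    nlinarith [h3, hx1, h4]

lemma gmp_onesided {r a b : ℝ} (hr : 1 ≤ r) (hba : b ≤ a) :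
    |a| ^ (r - 1) * a - |b| ^ (r - 1) * b ≤ 2 * r * (a - b) * (|b| + (a - b)) ^ (r - 1) := by
  have hab0 : 0 ≤ a - b := by linarith
  have hbase : (0:ℝ) ≤ |b| + (a - b) := by linarith [abs_nonneg b]
  have hr0 : (0:ℝ) < r := by linarith
  have hPnn : (0:ℝ) ≤ (|b| + (a - b)) ^ (r - 1) := Real.rpow_nonneg hbase _
  rcases le_or_gt 0 b with hb | hb
  · rw [gmp_g_eq hr hb, gmp_g_eq hr (hb.trans hba)]
    have h := gmp_bernoulli hr hb hba
    have habs : a = |b| + (a - b) := by rw [abs_of_nonneg hb]; ring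
    calc a ^ r - b ^ r ≤ r * a ^ (r - 1) * (a - b) := h
      _ = r * (a - b) * (|b| + (a - b)) ^ (r - 1) := by rw [← habs]; ring
      _ ≤ 2 * r * (a - b) * (|b| + (a - b)) ^ (r - 1) := by
          nlinarith [mul_nonneg (mul_nonneg hr0.le hab0) hPnn]
  · rcases le_or_gt a 0 with ha | ha
    · rw [gmp_g_neg_eq hr ha, gmp_g_neg_eq hr hb.le]
      have h := gmp_bernoulli hr (by linarith : (0:ℝ) ≤ -a) (by linarith : -a ≤ -b)
      have hbb : -b ≤ |b| + (a - b) := by rw [abs_of_neg hb]; linarith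
      have h2 : (-b) ^ (r - 1) ≤ (|b| + (a - b)) ^ (r - 1) :=
        Real.rpow_le_rpow (by linarith) hbb (by linarith)
      calc -(-a) ^ r - -((-b) ^ r) = (-b) ^ r - (-a) ^ r := by ring
        _ ≤ r * (-b) ^ (r - 1) * (-b - -a) := h
        _ = r * (a - b) * (-b) ^ (r - 1) := by ring
        _ ≤ 2 * r * (a - b) * (|b| + (a - b)) ^ (r - 1) := by
            nlinarith [mul_le_mul_of_nonneg_left h2 (mul_nonneg hr0.le hab0),
              mul_nonneg (mul_nonneg hr0.le hab0) hPnn]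
    · rw [gmp_g_eq hr ha.le, gmp_g_neg_eq hr hb.le]
      have hd : (0:ℝ) < a - b := by linarith
      have h1 : a ^ r ≤ (a - b) ^ r := Real.rpow_le_rpow ha.le (by linarith) hr0.le
      have h2 : (-b) ^ r ≤ (a - b) ^ r := Real.rpow_le_rpow (by linarith) (by linarith) hr0.le
      have h3 : (a - b) ^ r = (a - b) ^ (r - 1) * (a - b) := by
        rw [← Real.rpow_add_one hd.ne' (r - 1), sub_add_cancel]
      have h4 : (a - b) ^ (r - 1) ≤ (|b| + (a - b)) ^ (r - 1) :=
        Real.rpow_le_rpow hab0 (by linarith [abs_nonneg b]) (by linarith)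
      calc a ^ r - -((-b) ^ r) = a ^ r + (-b) ^ r := by ring
        _ ≤ 2 * ((a - b) ^ (r - 1) * (a - b)) := by rw [← h3]; linarith
        _ ≤ 2 * r * (a - b) * (|b| + (a - b)) ^ (r - 1) := by
            nlinarith [mul_le_mul_of_nonneg_left h4 (by linarith : (0:ℝ) ≤ 2 * (a - b)),
              mul_nonneg hab0 hPnn, mul_nonneg (mul_nonneg hr0.le hab0) hPnn]

lemma gmp_twosided {r : ℝ} (hr : 1 ≤ r) (a b : ℝ) :
    abs (|a| ^ (r - 1) * a - |b| ^ (r - 1) * b)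
      ≤ 2 ^ r * r * |a - b| * (|b| + |a - b|) ^ (r - 1) := by
  have hr0 : (0:ℝ) < r := by linarith
  have h2r : (2:ℝ) ≤ 2 ^ r := by
    calc (2:ℝ) = 2 ^ (1:ℝ) := (Real.rpow_one 2).symm
      _ ≤ 2 ^ r := Real.rpow_le_rpow_of_exponent_le (by norm_num) hr
  rcases le_total b a with hba | hab
  · have hab0 : (0:ℝ) ≤ a - b := by linarith
    have hPnn : (0:ℝ) ≤ (|b| + (a - b)) ^ (r - 1) :=
      Real.rpow_nonneg (by linarith [abs_nonneg b]) _
    have hnn : 0 ≤ |a| ^ (r - 1) * a - |b| ^ (r - 1) * b :=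
      sub_nonneg.2 ((gmp_strictMono hr).monotone hba)
    rw [abs_of_nonneg hnn, abs_of_nonneg hab0]
    calc |a| ^ (r-1) * a - |b| ^ (r-1) * b ≤ 2 * r * (a - b) * (|b| + (a - b)) ^ (r - 1) :=
          gmp_onesided hr hba
      _ ≤ 2 ^ r * r * (a - b) * (|b| + (a - b)) ^ (r - 1) := by
          nlinarith [mul_le_mul_of_nonneg_right
            (mul_le_mul_of_nonneg_right h2r hr0.le) (mul_nonneg hab0 hPnn)]
  · have hba0 : (0:ℝ) ≤ b - a := by linarith
    have hnp : |a| ^ (r - 1) * a - |b| ^ (r - 1) * b ≤ 0 :=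
      sub_nonpos.2 ((gmp_strictMono hr).monotone hab)
    rw [abs_of_nonpos hnp, abs_sub_comm a b, abs_of_nonneg hba0]
    have key := gmp_onesided hr hab
    have hQnn : (0:ℝ) ≤ (|b| + (b - a)) ^ (r - 1) :=
      Real.rpow_nonneg (by linarith [abs_nonneg b]) _
    have hbase2 : |a| + (b - a) ≤ 2 * (|b| + (b - a)) := by
      have h5 : |a| ≤ |b| + (b - a) := by
        calc |a| = |b + (a - b)| := by ring_nf
          _ ≤ |b| + |a - b| := abs_add_le _ _
          _ = |b| + (b - a) := by rw [abs_sub_comm, abs_of_nonneg hba0]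
      linarith [abs_nonneg b]
    have hpow : (|a| + (b - a)) ^ (r - 1) ≤ 2 ^ (r - 1) * (|b| + (b - a)) ^ (r - 1) := by
      calc (|a| + (b - a)) ^ (r - 1) ≤ (2 * (|b| + (b - a))) ^ (r - 1) :=
            Real.rpow_le_rpow (by linarith [abs_nonneg a]) hbase2 (by linarith)
        _ = 2 ^ (r - 1) * (|b| + (b - a)) ^ (r - 1) :=
            Real.mul_rpow (by norm_num) (by linarith [abs_nonneg b])
    have h2sum : (2:ℝ) ^ r = 2 * 2 ^ (r - 1) := by
      have h := Real.rpow_add (show (0:ℝ) < 2 by norm_num) 1 (r - 1)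
      rw [show (1:ℝ) + (r - 1) = r by ring, Real.rpow_one] at h
      exact h
    calc -(|a| ^ (r-1) * a - |b| ^ (r-1) * b)
        = |b| ^ (r-1) * b - |a| ^ (r-1) * a := by ring
      _ ≤ 2 * r * (b - a) * (|a| + (b - a)) ^ (r - 1) := key
      _ ≤ 2 * r * (b - a) * (2 ^ (r - 1) * (|b| + (b - a)) ^ (r - 1)) := by
          nlinarith [mul_le_mul_of_nonneg_left hpow
            (mul_nonneg (mul_nonneg (by norm_num : (0:ℝ) ≤ 2) hr0.le) hba0)]
      _ = ((2:ℝ) * 2 ^ (r - 1)) * r * (b - a) * (|b| + (b - a)) ^ (r - 1) := by ring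
      _ = 2 ^ r * r * (b - a) * (|b| + (b - a)) ^ (r - 1) := by rw [← h2sum]

lemma gmp_young {r ε d B : ℝ} (hr : 1 ≤ r) (hε : 0 < ε) (hε1 : ε ≤ 1) (hd : 0 ≤ d) (hB : 0 ≤ B) :
    d * (B + d) ^ (r - 1) ≤ ε * 2 ^ (r - 1) * B ^ r + (1 + 1/ε) ^ (r - 1) * d ^ r := by
  have hr0 : (0:ℝ) < r := by linarith
  have hBr : (0:ℝ) ≤ B ^ r := Real.rpow_nonneg hB r
  have hdr : (0:ℝ) ≤ d ^ r := Real.rpow_nonneg hd r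
  have h2p : (0:ℝ) ≤ (2:ℝ) ^ (r - 1) := Real.rpow_nonneg (by norm_num) _
  have hεp : (0:ℝ) ≤ (1 + 1/ε) ^ (r - 1) := Real.rpow_nonneg (by positivity) _
  rcases le_or_gt d (ε * B) with h | h
  · rcases eq_or_lt_of_le hB with hB0 | hB0
    · have hd0 : d = 0 := le_antisymm (by nlinarith) hd
      simp [hd0]
      positivity
    · have hBd : B + d ≤ 2 * B := by nlinarith
      have hpow : (B + d) ^ (r - 1) ≤ (2 * B) ^ (r - 1) :=
        Real.rpow_le_rpow (by linarith) hBd (by linarith)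
      have hmul : ((2:ℝ) * B) ^ (r - 1) = 2 ^ (r - 1) * B ^ (r - 1) :=
        Real.mul_rpow (by norm_num) hB
      have hBr1 : B ^ (r - 1) * B = B ^ r := by
        rw [← Real.rpow_add_one hB0.ne' (r - 1), sub_add_cancel]
      have : d * (B + d) ^ (r - 1) ≤ ε * B * (2 ^ (r - 1) * B ^ (r - 1)) := by
        rw [← hmul]
        apply mul_le_mul h hpow (Real.rpow_nonneg (by linarith) _) (by positivity)
      calc d * (B + d) ^ (r - 1) ≤ ε * B * (2 ^ (r - 1) * B ^ (r - 1)) := this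
        _ = ε * 2 ^ (r - 1) * (B ^ (r - 1) * B) := by ring
        _ = ε * 2 ^ (r - 1) * B ^ r := by rw [hBr1]
        _ ≤ ε * 2 ^ (r - 1) * B ^ r + (1 + 1/ε) ^ (r - 1) * d ^ r := by nlinarith
  · have hd0 : 0 < d := lt_of_le_of_lt (by positivity) h
    have hBd : B + d ≤ (1 + 1/ε) * d := by
      have : B < d / ε := by rw [lt_div_iff₀ hε]; nlinarith
      have h1 : d / ε = (1/ε) * d := by ring
      nlinarith
    have hpow : (B + d) ^ (r - 1) ≤ ((1 + 1/ε) * d) ^ (r - 1) :=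
      Real.rpow_le_rpow (by linarith) hBd (by linarith)
    have hmul : ((1 + 1/ε) * d) ^ (r - 1) = (1 + 1/ε) ^ (r - 1) * d ^ (r - 1) :=
      Real.mul_rpow (by positivity) hd
    have hdr1 : d ^ (r - 1) * d = d ^ r := by
      rw [← Real.rpow_add_one hd0.ne' (r - 1), sub_add_cancel]
    have key : d * (B + d) ^ (r - 1) ≤ (1 + 1/ε) ^ (r - 1) * d ^ r := by
      calc d * (B + d) ^ (r - 1) ≤ d * ((1 + 1/ε) ^ (r - 1) * d ^ (r - 1)) := by
            rw [← hmul]; exact mul_le_mul_of_nonneg_left hpow hd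
        _ = (1 + 1/ε) ^ (r - 1) * (d ^ (r - 1) * d) := by ring
        _ = (1 + 1/ε) ^ (r - 1) * d ^ r := by rw [hdr1]
    nlinarith [mul_nonneg (mul_nonneg hε.le h2p) hBr]

lemma gmp_key {r ε : ℝ} (hr : 1 ≤ r) (hε : 0 < ε) (hε1 : ε ≤ 1) (a b : ℝ) :
    abs (|a| ^ (r - 1) * a - |b| ^ (r - 1) * b)
      ≤ (2 ^ r * r * (ε * 2 ^ (r - 1))) * |b| ^ r
        + (2 ^ r * r * (1 + 1/ε) ^ (r - 1)) * |a - b| ^ r := by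
  have hr0 : (0:ℝ) < r := by linarith
  have hK : (0:ℝ) ≤ 2 ^ r * r := mul_nonneg (Real.rpow_nonneg (by norm_num) r) hr0.le
  have h1 := gmp_twosided hr a b
  have h2 := gmp_young hr hε hε1 (abs_nonneg (a - b)) (abs_nonneg b)
  calc abs (|a| ^ (r - 1) * a - |b| ^ (r - 1) * b)
      ≤ 2 ^ r * r * |a - b| * (|b| + |a - b|) ^ (r - 1) := h1
    _ = (2 ^ r * r) * (|a - b| * (|b| + |a - b|) ^ (r - 1)) := by ring
    _ ≤ (2 ^ r * r) * (ε * 2 ^ (r - 1) * |b| ^ r + (1 + 1/ε) ^ (r - 1) * |a - b| ^ r) :=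
        mul_le_mul_of_nonneg_left h2 hK
    _ = (2 ^ r * r * (ε * 2 ^ (r - 1))) * |b| ^ r
        + (2 ^ r * r * (1 + 1/ε) ^ (r - 1)) * |a - b| ^ r := by ring

variable {α : Type*} [MeasurableSpace α] {μ : Measure α} {r : ℝ}

lemma gmp_int_rpow (hr : 1 ≤ r) {f : α → ℝ} (hf : MemLp f (ENNReal.ofReal r) μ) :
    Integrable (fun x => |f x| ^ r) μ := by
  have hp0 : ENNReal.ofReal r ≠ 0 := by
    simp only [ne_eq, ENNReal.ofReal_eq_zero, not_le]; linarith
  have h := hf.integrable_norm_rpow hp0 ENNReal.ofReal_ne_top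
  rwa [ENNReal.toReal_ofReal (by linarith)] at h

lemma gmp_integrable (hr : 1 ≤ r) {f : α → ℝ} (hf : MemLp f (ENNReal.ofReal r) μ) :
    Integrable (fun x => |f x| ^ (r - 1) * f x) μ := by
  refine (gmp_int_rpow hr hf).mono' ?_ ?_
  · have hfm : AEMeasurable f μ := hf.aestronglyMeasurable.aemeasurable
    have habs : AEMeasurable (fun x => |f x|) μ := continuous_abs.measurable.comp_aemeasurable hfm
    exact ((habs.pow aemeasurable_const).mul hfm).aestronglyMeasurable
  · filter_upwards with x
    rw [Real.norm_eq_abs, gmp_abs_g hr]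

lemma gmp_F_lt (hr : 1 ≤ r) (hμpos : μ Set.univ ≠ 0) {f : α → ℝ}
    (hf : MemLp f (ENNReal.ofReal r) μ) [IsFiniteMeasure μ] {c1 c2 : ℝ} (h12 : c1 < c2) :
    ∫ x, |f x - c2| ^ (r - 1) * (f x - c2) ∂μ < ∫ x, |f x - c1| ^ (r - 1) * (f x - c1) ∂μ := by
  have int1 : Integrable (fun x => |f x - c1| ^ (r - 1) * (f x - c1)) μ :=
    gmp_integrable hr (hf.sub (memLp_const c1))
  have int2 : Integrable (fun x => |f x - c2| ^ (r - 1) * (f x - c2)) μ :=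
    gmp_integrable hr (hf.sub (memLp_const c2))
  have hptw : ∀ x, 0 < |f x - c1| ^ (r - 1) * (f x - c1) - |f x - c2| ^ (r - 1) * (f x - c2) := by
    intro x
    have := gmp_strictMono hr (show f x - c2 < f x - c1 by linarith)
    simpa using sub_pos.2 this
  have hpos : 0 < ∫ x, (|f x - c1| ^ (r - 1) * (f x - c1)
      - |f x - c2| ^ (r - 1) * (f x - c2)) ∂μ := by
    rw [integral_pos_iff_support_of_nonneg (fun x => (hptw x).le) (int1.sub int2)]
    have : Function.support (fun x => |f x - c1| ^ (r - 1) * (f x - c1)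
        - |f x - c2| ^ (r - 1) * (f x - c2)) = Set.univ :=
      Set.eq_univ_iff_forall.2 fun x => Function.mem_support.2 (hptw x).ne'
    rw [this]
    exact hμpos.bot_lt
  rw [integral_sub int1 int2] at hpos
  linarith

lemma gmp_norm_pow (hr : 1 ≤ r) [Fact (1 ≤ ENNReal.ofReal r)]
    (w : Lp ℝ (ENNReal.ofReal r) μ) :
    ∫ x, |w x| ^ r ∂μ = ‖w‖ ^ r := by
  have hr0 : (0:ℝ) < r := by linarith
  have hp0 : ENNReal.ofReal r ≠ 0 := by
    simp only [ne_eq, ENNReal.ofReal_eq_zero, not_le]; linarith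
  have h := (Lp.memLp w).eLpNorm_eq_integral_rpow_norm hp0 ENNReal.ofReal_ne_top
  rw [ENNReal.toReal_ofReal (by linarith : (0:ℝ) ≤ r)] at h
  have hInn : (0:ℝ) ≤ ∫ x, ‖w x‖ ^ r ∂μ :=
    integral_nonneg fun x => Real.rpow_nonneg (norm_nonneg _) r
  have hnorm : ‖w‖ = (∫ x, ‖w x‖ ^ r ∂μ) ^ r⁻¹ := by
    rw [Lp.norm_def, h, ENNReal.toReal_ofReal (Real.rpow_nonneg hInn _)]
  rw [hnorm, ← Real.rpow_mul hInn, inv_mul_cancel₀ hr0.ne', Real.rpow_one]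
  simp_rw [Real.norm_eq_abs]

lemma gmp_Fdiff (hr : 1 ≤ r) [IsFiniteMeasure μ] {f h : α → ℝ}
    (hf : MemLp f (ENNReal.ofReal r) μ) (hh : MemLp h (ENNReal.ofReal r) μ)
    {ε : ℝ} (hε : 0 < ε) (hε1 : ε ≤ 1) (c : ℝ) :
    |(∫ x, |h x - c| ^ (r - 1) * (h x - c) ∂μ) - ∫ x, |f x - c| ^ (r - 1) * (f x - c) ∂μ|
      ≤ (2 ^ r * r * (ε * 2 ^ (r - 1))) * ∫ x, |f x - c| ^ r ∂μ
        + (2 ^ r * r * (1 + 1/ε) ^ (r - 1)) * ∫ x, |h x - f x| ^ r ∂μ := by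
  have intf : Integrable (fun x => |f x - c| ^ (r - 1) * (f x - c)) μ :=
    gmp_integrable hr (hf.sub (memLp_const c))
  have inth : Integrable (fun x => |h x - c| ^ (r - 1) * (h x - c)) μ :=
    gmp_integrable hr (hh.sub (memLp_const c))
  have intfr : Integrable (fun x => |f x - c| ^ r) μ := gmp_int_rpow hr (hf.sub (memLp_const c))
  have inthf : Integrable (fun x => |h x - f x| ^ r) μ := gmp_int_rpow hr (hh.sub hf)
  rw [← integral_sub inth intf]
  calc |∫ x, (|h x - c| ^ (r - 1) * (h x - c) - |f x - c| ^ (r - 1) * (f x - c)) ∂μ|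
      ≤ ∫ x, |(|h x - c| ^ (r - 1) * (h x - c) - |f x - c| ^ (r - 1) * (f x - c))| ∂μ := by
        simpa [Real.norm_eq_abs] using
          norm_integral_le_integral_norm (μ := μ)
            (f := fun x => |h x - c| ^ (r - 1) * (h x - c) - |f x - c| ^ (r - 1) * (f x - c))
    _ ≤ ∫ x, ((2 ^ r * r * (ε * 2 ^ (r - 1))) * |f x - c| ^ r
          + (2 ^ r * r * (1 + 1/ε) ^ (r - 1)) * |h x - f x| ^ r) ∂μ := by
        refine integral_mono (inth.sub intf).abs
          ((intfr.const_mul _).add (inthf.const_mul _)) fun x => ?_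
        have hkey := gmp_key hr hε hε1 (h x - c) (f x - c)
        rw [show h x - c - (f x - c) = h x - f x by ring] at hkey
        exact hkey
    _ = (2 ^ r * r * (ε * 2 ^ (r - 1))) * ∫ x, |f x - c| ^ r ∂μ
        + (2 ^ r * r * (1 + 1/ε) ^ (r - 1)) * ∫ x, |h x - f x| ^ r ∂μ := by
        rw [integral_add (intfr.const_mul _) (inthf.const_mul _),
          integral_const_mul, integral_const_mul]

lemma gmp_cont_at (hr : 1 ≤ r) [IsFiniteMeasure μ] [Fact (1 ≤ ENNReal.ofReal r)]
    (u : Lp ℝ (ENNReal.ofReal r) μ) (c ρ : ℝ) (hρ : 0 < ρ) :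
    ∃ δ > 0, ∀ v : Lp ℝ (ENNReal.ofReal r) μ, ‖v - u‖ < δ →
      |(∫ x, |v x - c| ^ (r - 1) * (v x - c) ∂μ)
        - ∫ x, |u x - c| ^ (r - 1) * (u x - c) ∂μ| < ρ := by
  have hr0 : (0:ℝ) < r := by linarith
  have h2r : (0:ℝ) < 2 ^ r := Real.rpow_pos_of_pos (by norm_num) r
  have h2r1 : (0:ℝ) < 2 ^ (r - 1) := Real.rpow_pos_of_pos (by norm_num) _
  set I0 := ∫ x, |u x - c| ^ r ∂μ with hI0def
  have hI0 : 0 ≤ I0 := integral_nonneg fun x => Real.rpow_nonneg (abs_nonneg _) r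
  set K1 : ℝ := 2 ^ r * r * 2 ^ (r - 1) with hK1def
  have hK1 : 0 < K1 := mul_pos (mul_pos h2r hr0) h2r1
  set ε := min 1 (ρ / (2 * K1 * (I0 + 1))) with hεdef
  have hε : 0 < ε := lt_min one_pos (by positivity)
  have hε1 : ε ≤ 1 := min_le_left _ _
  set C2 := 2 ^ r * r * (1 + 1/ε) ^ (r - 1) with hC2def
  have hC2 : 0 ≤ C2 := by
    refine mul_nonneg (mul_nonneg h2r.le hr0.le) (Real.rpow_nonneg ?_ _)
    have : 0 < 1/ε := by positivity
    linarith
  have hC2p : (0:ℝ) < C2 + 1 := by linarith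
  refine ⟨(ρ / (2 * (C2 + 1))) ^ r⁻¹, Real.rpow_pos_of_pos (by positivity) _, fun v hv => ?_⟩
  have hterm1 : 2 ^ r * r * (ε * 2 ^ (r - 1)) * I0 < ρ / 2 := by
    have hε2 : ε ≤ ρ / (2 * K1 * (I0 + 1)) := min_le_right _ _
    have h3 : K1 * ε * I0 ≤ K1 * (ρ / (2 * K1 * (I0 + 1))) * I0 :=
      mul_le_mul_of_nonneg_right (mul_le_mul_of_nonneg_left hε2 hK1.le) hI0
    have heq : K1 * (ρ / (2 * K1 * (I0 + 1))) * I0 = ρ * I0 / (2 * (I0 + 1)) := by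
      field_simp
    have h4 : ρ * I0 / (2 * (I0 + 1)) < ρ / 2 := by
      rw [div_lt_div_iff₀ (by positivity) (by norm_num)]
      nlinarith
    calc 2 ^ r * r * (ε * 2 ^ (r - 1)) * I0 = K1 * ε * I0 := by rw [hK1def]; ring
      _ ≤ ρ * I0 / (2 * (I0 + 1)) := heq ▸ h3
      _ < ρ / 2 := h4
  have hvpow : ∫ x, |v x - u x| ^ r ∂μ < ρ / (2 * (C2 + 1)) := by
    have h5 : ∫ x, |v x - u x| ^ r ∂μ = ‖v - u‖ ^ r := by
      rw [← gmp_norm_pow hr (v - u)]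
      refine integral_congr_ae ?_
      filter_upwards [Lp.coeFn_sub v u] with x hx
      rw [hx, Pi.sub_apply]
    rw [h5]
    calc ‖v - u‖ ^ r < ((ρ / (2 * (C2 + 1))) ^ r⁻¹) ^ r :=
          Real.rpow_lt_rpow (norm_nonneg _) hv hr0
      _ = ρ / (2 * (C2 + 1)) := by
          rw [← Real.rpow_mul (by positivity), inv_mul_cancel₀ hr0.ne', Real.rpow_one]
  have hdiff := gmp_Fdiff hr (Lp.memLp u) (Lp.memLp v) hε hε1 c
  have h6 : C2 * (∫ x, |v x - u x| ^ r ∂μ) ≤ C2 * (ρ / (2 * (C2 + 1))) :=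
    mul_le_mul_of_nonneg_left hvpow.le hC2
  have h7 : C2 * (ρ / (2 * (C2 + 1))) ≤ ρ / 2 := by
    rw [mul_div_assoc', div_le_div_iff₀ (by positivity) (by norm_num)]
    nlinarith
  refine lt_of_le_of_lt hdiff ?_
  have : (2 ^ r * r * (1 + 1/ε) ^ (r - 1)) = C2 := hC2def.symm
  rw [this]
  linarith

end GMPAux

/-- the generalized median map m_r on L^r(Ω) (defined by the vanishing of
∫_Ω |u − m_r(u)|^{r−1}(u − m_r(u)) dx, with real powers and 0^0 = 1) is continuous,
1-homogeneous, and bounded on bounded sets (|m_r(u)| ≤ C‖u‖_{L^r}). The `Fact` instance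
records that 1 ≤ r also as an inequality in ℝ≥0∞, so that L^r carries its norm topology. -/
theorem generalized_median_properties {n : ℕ}
    (Ω : Set (EuclideanSpace ℝ (Fin n))) (hΩm : MeasurableSet Ω)
    (hΩpos : 0 < volume Ω) (hΩfin : volume Ω < ⊤)
    (r : ℝ) (hr : 1 ≤ r) [Fact (1 ≤ ENNReal.ofReal r)]
    (m : Lp ℝ (ENNReal.ofReal r) (volume.restrict Ω) → ℝ)
    (hm : ∀ u : Lp ℝ (ENNReal.ofReal r) (volume.restrict Ω),
      ∫ x in Ω, |u x - m u| ^ (r - 1) * (u x - m u) = 0) :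
    Continuous m ∧
    (∀ (t : ℝ) (u : Lp ℝ (ENNReal.ofReal r) (volume.restrict Ω)), m (t • u) = t * m u) ∧
    ∃ C > (0 : ℝ), ∀ u : Lp ℝ (ENNReal.ofReal r) (volume.restrict Ω), |m u| ≤ C * ‖u‖ := by
  haveI : Fact (volume Ω < ⊤) := ⟨hΩfin⟩
  have hμpos : (volume.restrict Ω) Set.univ ≠ 0 := by
    rw [Measure.restrict_apply_univ]
    exact hΩpos.ne'
  -- uniqueness of the median
  have huniq : ∀ (u : Lp ℝ (ENNReal.ofReal r) (volume.restrict Ω)) (c : ℝ),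
      (∫ x, |u x - c| ^ (r - 1) * (u x - c) ∂(volume.restrict Ω)) = 0 → c = m u := by
    intro u c hc
    by_contra hne
    rcases lt_or_gt_of_ne hne with h | h
    · have := gmp_F_lt hr hμpos (Lp.memLp u) h
      rw [hc, hm u] at this
      exact lt_irrefl _ this
    · have := gmp_F_lt hr hμpos (Lp.memLp u) h
      rw [hc, hm u] at this
      exact lt_irrefl _ this
  -- homogeneity
  have hhom : ∀ (t : ℝ) (u : Lp ℝ (ENNReal.ofReal r) (volume.restrict Ω)), m (t • u) = t * m u := by
    intro t u
    refine (huniq (t • u) (t * m u) ?_).symm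
    have hae : (fun x => |(t • u) x - t * m u| ^ (r - 1) * ((t • u) x - t * m u)) =ᵐ[volume.restrict Ω]
        fun x => (|t| ^ (r - 1) * t) * (|u x - m u| ^ (r - 1) * (u x - m u)) := by
      filter_upwards [Lp.coeFn_smul t u] with x hx
      rw [hx, Pi.smul_apply, smul_eq_mul,
        show t * u x - t * m u = t * (u x - m u) by ring, gmp_g_mul]
    rw [integral_congr_ae hae, integral_const_mul, hm u, mul_zero]
  -- zero
  have hm0 : m 0 = 0 := by
    refine (huniq 0 0 ?_).symm
    have hae : (fun x => |(0 : Lp ℝ (ENNReal.ofReal r) (volume.restrict Ω)) x - 0| ^ (r - 1)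
        * ((0 : Lp ℝ (ENNReal.ofReal r) (volume.restrict Ω)) x - 0)) =ᵐ[volume.restrict Ω] fun _ => (0:ℝ) := by
      filter_upwards [Lp.coeFn_zero ℝ (ENNReal.ofReal r) (volume.restrict Ω)] with x hx
      rw [hx]
      simp
    rw [integral_congr_ae hae, integral_zero]
  -- continuity
  have hcont : Continuous m := by
    rw [Metric.continuous_iff]
    intro u ε hε
    have hA : 0 < ∫ x, |u x - (m u - ε)| ^ (r - 1) * (u x - (m u - ε)) ∂(volume.restrict Ω) := by
      have := gmp_F_lt hr hμpos (Lp.memLp u) (show m u - ε < m u by linarith)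
      rw [hm u] at this
      exact this
    have hB : (∫ x, |u x - (m u + ε)| ^ (r - 1) * (u x - (m u + ε)) ∂(volume.restrict Ω)) < 0 := by
      have := gmp_F_lt hr hμpos (Lp.memLp u) (show m u < m u + ε by linarith)
      rw [hm u] at this
      exact this
    obtain ⟨δ₁, hδ₁, h₁⟩ := gmp_cont_at hr u (m u - ε) _ hA
    obtain ⟨δ₂, hδ₂, h₂⟩ := gmp_cont_at hr u (m u + ε) _ (neg_pos.2 hB)
    refine ⟨min δ₁ δ₂, lt_min hδ₁ hδ₂, fun v hv => ?_⟩
    rw [dist_eq_norm] at hv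
    have hv1 := h₁ v (lt_of_lt_of_le hv (min_le_left _ _))
    have hv2 := h₂ v (lt_of_lt_of_le hv (min_le_right _ _))
    have hFv1 : 0 < ∫ x, |v x - (m u - ε)| ^ (r - 1) * (v x - (m u - ε)) ∂(volume.restrict Ω) := by
      have := (abs_lt.1 hv1).1
      linarith
    have hFv2 : (∫ x, |v x - (m u + ε)| ^ (r - 1) * (v x - (m u + ε)) ∂(volume.restrict Ω)) < 0 := by
      have := (abs_lt.1 hv2).2
      linarith
    have hmv1 : m u - ε < m v := by
      by_contra hcon
      push_neg at hcon
      rcases eq_or_lt_of_le hcon with heq | hlt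
      · rw [← heq, hm v] at hFv1
        exact lt_irrefl _ hFv1
      · have := gmp_F_lt hr hμpos (Lp.memLp v) hlt
        rw [hm v] at this
        linarith
    have hmv2 : m v < m u + ε := by
      by_contra hcon
      push_neg at hcon
      rcases eq_or_lt_of_le hcon with heq | hlt
      · rw [heq, hm v] at hFv2
        exact lt_irrefl _ hFv2
      · have := gmp_F_lt hr hμpos (Lp.memLp v) hlt
        rw [hm v] at this
        linarith
    rw [Real.dist_eq, abs_sub_lt_iff]
    constructor <;> linarith
  refine ⟨hcont, hhom, ?_⟩
  -- boundedness
  have hcat := Metric.continuousAt_iff.1 (hcont.continuousAt (x := 0)) 1 one_pos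
  obtain ⟨δ, hδ, hball⟩ := hcat
  refine ⟨2 / δ + 1, by positivity, fun u => ?_⟩
  rcases eq_or_ne u 0 with rfl | hu
  · rw [hm0]
    simp
  · have hnu : 0 < ‖u‖ := norm_pos_iff.2 hu
    set t := δ / (2 * ‖u‖) with htdef
    have ht : 0 < t := by positivity
    have hdist : dist (t • u) 0 < δ := by
      rw [dist_zero_right, norm_smul, Real.norm_eq_abs, abs_of_pos ht]
      have he : t * ‖u‖ = δ / 2 := by
        rw [htdef]
        field_simp
      rw [he]
      linarith
    have h1 := hball hdist
    rw [Real.dist_eq, hm0, sub_zero, hhom t u, abs_mul, abs_of_pos ht] at h1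
    have h2 : |m u| < 2 * ‖u‖ / δ := by
      rw [htdef, div_mul_eq_mul_div, div_lt_one (by positivity)] at h1
      rw [lt_div_iff₀ hδ]
      nlinarith
    calc |m u| ≤ 2 * ‖u‖ / δ := h2.le
      _ = (2 / δ) * ‖u‖ := by ring
      _ ≤ (2 / δ + 1) * ‖u‖ := by nlinarith
end
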